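/- arXiv:2405.19881 — 6 statements merged into one kernel-verified Lean document; each statement's English description precedes it below -/
import Mathlib

section
/- Let d ≥ 1 and consider a perturbed lattice with ℤ^d-invariant perturbations (p_x)_{x∈ℤ^d} and independent uniform shift U. If E[|p_0|^d] < ∞, then for every r > 0 the second moment of the number of perturbed lattice points in B_r is finite: E[N_r²] < ∞. In particular the number variance of the perturbed lattice in every finite ball is finite. -/
open MeasureTheory ProbabilityTheory Filter Set Metric
open scoped ENNReal NNReal
variable {d : ℕ}

private def zr (x : Fin d → ℤ) : EuclideanSpace ℝ (Fin d) := WithLp.toLp 2 (fun i => (x i : ℝ))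

private def Icube (d : ℕ) : Set (EuclideanSpace ℝ (Fin d)) :=
  WithLp.toLp 2 '' (Set.univ.pi fun _ : Fin d => Set.Ico (0:ℝ) 1)

private lemma Icube_eq :
    Icube d = WithLp.ofLp ⁻¹' (Set.univ.pi fun _ : Fin d => Set.Ico (0:ℝ) 1) := by
  ext w; constructor
  · rintro ⟨a, ha, rfl⟩; exact ha
  · intro hw; exact ⟨WithLp.ofLp w, hw, rfl⟩

private lemma Icube_meas : MeasurableSet (Icube d) := by
  rw [Icube_eq]; exact (WithLp.measurable_ofLp 2 _) (MeasurableSet.univ_pi fun _ => measurableSet_Ico)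

private lemma disj_images (T : EuclideanSpace ℝ (Fin d) ≃ₗ[ℝ] EuclideanSpace ℝ (Fin d)) :
    Pairwise (Function.onFun Disjoint
      (fun x : Fin d → ℤ => (fun u => u + T (zr x)) '' (⇑T '' Icube d))) := by
  intro x y hxy
  rw [Function.onFun, Set.disjoint_left]
  rintro w ⟨-, ⟨a, haI, rfl⟩, rfl⟩ ⟨-, ⟨b, hbI, rfl⟩, heq⟩
  have h1 : T (b + zr y) = T (a + zr x) := by
    rw [map_add, map_add]; exact heq
  have h2 : b + zr y = a + zr x := T.injective h1
  apply hxy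
  funext i
  have h3 : b i + (y i : ℝ) = a i + (x i : ℝ) := by
    have := congrFun (congrArg (fun v : EuclideanSpace ℝ (Fin d) => (v : Fin d → ℝ)) h2) i
    simpa [zr] using this
  have ha : a i ∈ Set.Ico (0:ℝ) 1 := (by rw [Icube_eq] at haI; exact Set.mem_preimage.mp haI i (Set.mem_univ i))
  have hb : b i ∈ Set.Ico (0:ℝ) 1 := (by rw [Icube_eq] at hbI; exact Set.mem_preimage.mp hbI i (Set.mem_univ i))
  have : |((y i - x i : ℤ) : ℝ)| < 1 := by
    push_cast
    rw [abs_lt]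
    constructor <;> [linarith [ha.1, ha.2, hb.1, hb.2]; linarith [ha.1, ha.2, hb.1, hb.2]]
  have : |y i - x i| < 1 := by exact_mod_cast (by rwa [← Int.cast_abs] at this : ((|y i - x i| : ℤ) : ℝ) < 1)
  rw [abs_lt] at this; omega

private lemma F0_meas (T : EuclideanSpace ℝ (Fin d) ≃ₗ[ℝ] EuclideanSpace ℝ (Fin d)) :
    MeasurableSet (⇑T '' Icube d) := by
  have : ⇑T '' Icube d = ⇑T.symm ⁻¹' Icube d := by
    ext w
    constructor
    · rintro ⟨a, ha, rfl⟩; simpa using ha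
    · intro hw; exact ⟨T.symm w, hw, by simp⟩
  rw [this]
  have hc : Continuous (⇑T.symm) := LinearMap.continuous_of_finiteDimensional (T.symm : EuclideanSpace ℝ (Fin d) →ₗ[ℝ] EuclideanSpace ℝ (Fin d))
  exact hc.measurable Icube_meas

private lemma tiling (T : EuclideanSpace ℝ (Fin d) ≃ₗ[ℝ] EuclideanSpace ℝ (Fin d))
    (S : Set (EuclideanSpace ℝ (Fin d))) (hS : MeasurableSet S) :
    ∑' x : Fin d → ℤ,
      volume ((fun u => u + T (zr x)) ⁻¹' S ∩ (⇑T '' Icube d)) ≤ volume S := by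
  have key : ∀ x : Fin d → ℤ,
      volume ((fun u => u + T (zr x)) ⁻¹' S ∩ (⇑T '' Icube d))
        = volume (S ∩ ((fun u => u + T (zr x)) '' (⇑T '' Icube d))) := by
    intro x
    have h1 : (fun u => u + T (zr x)) ⁻¹' S ∩ (⇑T '' Icube d)
        = (fun u => u + T (zr x)) ⁻¹' (S ∩ ((fun u => u + T (zr x)) '' (⇑T '' Icube d))) := by
      rw [Set.preimage_inter, Set.preimage_image_eq _ (add_left_injective _)]
    rw [h1, measure_preimage_add_right]
  simp_rw [key]
  have hmeas : ∀ x : Fin d → ℤ,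
      MeasurableSet (S ∩ ((fun u => u + T (zr x)) '' (⇑T '' Icube d))) := by
    intro x
    refine hS.inter ?_
    rw [Set.image_add_right]
    exact (measurable_add_const _) (F0_meas T)
  rw [← measure_iUnion ?_ hmeas]
  · exact measure_mono (Set.iUnion_subset fun x => Set.inter_subset_left)
  · intro x y hxy
    exact Set.disjoint_left.mpr fun w hw hw' =>
      Set.disjoint_left.mp (disj_images T hxy) hw.2 hw'.2

private lemma coord_le_norm (w : EuclideanSpace ℝ (Fin d)) (i : Fin d) : |w i| ≤ ‖w‖ := by
  rw [EuclideanSpace.norm_eq]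
  have h1 : |w i| = √(‖w i‖ ^ 2) := by
    rw [Real.sqrt_sq_eq_abs, Real.norm_eq_abs, abs_abs]
  rw [h1]
  exact Real.sqrt_le_sqrt (Finset.single_le_sum (f := fun j => ‖w j‖ ^ 2) (fun j _ => sq_nonneg _) (Finset.mem_univ i))

private lemma add_pow_le' (X Y : ℝ≥0∞) (n : ℕ) : (X + Y) ^ n ≤ 2 ^ n * (X ^ n + Y ^ n) := by
  calc (X + Y) ^ n ≤ (2 * max X Y) ^ n := by
        refine pow_le_pow_left₀ zero_le ?_ n
        rw [two_mul]
        exact add_le_add (le_max_left _ _) (le_max_right _ _)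
    _ = 2 ^ n * max X Y ^ n := by rw [mul_pow]
    _ ≤ 2 ^ n * (X ^ n + Y ^ n) := by
        gcongr
        rcases max_cases X Y with ⟨h, -⟩ | ⟨h, -⟩ <;> rw [h]
        · exact le_add_of_nonneg_right zero_le
        · exact le_add_of_nonneg_left zero_le

private lemma counting (T : EuclideanSpace ℝ (Fin d) ≃ₗ[ℝ] EuclideanSpace ℝ (Fin d))
    (r : ℝ) (hr : 0 < r) (c : ℝ≥0)
    (hc : ∀ z : Fin d → ℤ, ‖zr z‖ ≤ (c : ℝ) * ‖T (zr z)‖) (v : EuclideanSpace ℝ (Fin d)) :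
    (∑' z : Fin d → ℤ, if (‖T (zr z)‖ - 2*r)/2 ≤ ‖v‖ then (1:ℝ≥0∞) else 0)
      ≤ 2^d * (((4*c : ℝ≥0) : ℝ≥0∞)^d * ((‖v‖₊ : ℝ≥0∞))^d
          + (((4*c*r.toNNReal + 3 : ℝ≥0) : ℝ≥0∞))^d) := by
  set R : ℝ := (c : ℝ) * (2*‖v‖ + 2*r) with hR
  have hR0 : 0 ≤ R := by positivity
  set m : ℕ := ⌈R⌉₊ with hm
  set F : Finset (Fin d → ℤ) := Fintype.piFinset fun _ : Fin d => Finset.Icc (-(m:ℤ)) (m:ℤ) with hF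
  have hsub : ∀ z : Fin d → ℤ, (‖T (zr z)‖ - 2*r)/2 ≤ ‖v‖ → z ∈ F := by
    intro z hz
    have h1 : ‖T (zr z)‖ ≤ 2*‖v‖ + 2*r := by linarith
    have h2 : ‖zr z‖ ≤ R := by
      calc ‖zr z‖ ≤ (c:ℝ) * ‖T (zr z)‖ := hc z
        _ ≤ R := by rw [hR]; nlinarith [c.coe_nonneg]
    rw [hF, Fintype.mem_piFinset]
    intro i
    have h3 : |(z i : ℝ)| ≤ R := by
      have := coord_le_norm (zr z) i
      simpa [zr] using this.trans h2
    have h4 : ((|z i| : ℤ) : ℝ) ≤ (m : ℝ) := by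
      rw [Int.cast_abs]
      exact h3.trans (Nat.le_ceil R)
    have h5 : |z i| ≤ (m : ℤ) := by exact_mod_cast h4
    rw [abs_le] at h5
    rw [Finset.mem_Icc]
    omega
  have hcast : ((2*m+1 : ℕ) : ℝ≥0) ≤ 4*c*‖v‖₊ + (4*c*r.toNNReal + 3) := by
    rw [← NNReal.coe_le_coe]
    push_cast
    rw [Real.coe_toNNReal r hr.le]
    have h6 : (m : ℝ) < R + 1 := Nat.ceil_lt_add_one hR0
    have h7 : 0 ≤ ‖v‖ := norm_nonneg v
    have h8 : (0:ℝ) ≤ c := c.coe_nonneg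
    nlinarith
  calc (∑' z : Fin d → ℤ, if (‖T (zr z)‖ - 2*r)/2 ≤ ‖v‖ then (1:ℝ≥0∞) else 0)
      ≤ ∑' z : Fin d → ℤ, Set.indicator (↑F : Set (Fin d → ℤ)) (fun _ => (1:ℝ≥0∞)) z := by
        refine Summable.tsum_le_tsum (fun z => ?_) ENNReal.summable ENNReal.summable
        by_cases hz : (‖T (zr z)‖ - 2*r)/2 ≤ ‖v‖
        · rw [if_pos hz, Set.indicator_of_mem (by exact_mod_cast hsub z hz)]
        · rw [if_neg hz]; exact zero_le
    _ = ∑ z ∈ F, (1:ℝ≥0∞) := (sum_eq_tsum_indicator _ _).symm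
    _ = (F.card : ℝ≥0∞) := by simp
    _ = (((2*m+1)^d : ℕ) : ℝ≥0∞) := by
        rw [hF, Fintype.card_piFinset]
        norm_cast
        rw [Finset.prod_const, Int.card_Icc]
        congr 1
        · omega
        · simp
    _ ≤ (((4*c*‖v‖₊ + (4*c*r.toNNReal + 3) : ℝ≥0)) : ℝ≥0∞)^d := by
        rw [Nat.cast_pow]
        refine pow_le_pow_left₀ zero_le ?_ d
        exact_mod_cast ENNReal.coe_le_coe.mpr hcast
    _ = (((4*c : ℝ≥0) : ℝ≥0∞) * ((‖v‖₊ : ℝ≥0∞)) + (((4*c*r.toNNReal + 3 : ℝ≥0) : ℝ≥0∞)))^d := by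
        push_cast
        ring_nf
    _ ≤ 2^d * (((4*c : ℝ≥0) : ℝ≥0∞)^d * ((‖v‖₊ : ℝ≥0∞))^d + (((4*c*r.toNNReal + 3 : ℝ≥0) : ℝ≥0∞))^d) := by
        rw [← mul_pow]
        exact add_pow_le' _ _ d

private lemma zr_add (x z : Fin d → ℤ) : zr (x + z) = zr x + zr z := by
  ext i
  simp [zr, PiLp.add_apply]

private lemma Hsum_le (T : EuclideanSpace ℝ (Fin d) ≃ₗ[ℝ] EuclideanSpace ℝ (Fin d))
    {r : ℝ} (hr : 0 < r) (z : Fin d → ℤ) (a b : EuclideanSpace ℝ (Fin d)) :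
    (∑' x : Fin d → ℤ,
      ∫⁻ u, (Metric.closedBall (0 : EuclideanSpace ℝ (Fin d)) r).indicator
              (fun _ => (1:ℝ≥0∞)) (T (zr x) + a + u)
          * (Metric.closedBall (0 : EuclideanSpace ℝ (Fin d)) r).indicator
              (fun _ => (1:ℝ≥0∞)) (T (zr (x+z)) + b + u)
        ∂(volume.restrict (⇑T '' Icube d)))
    ≤ volume (Metric.closedBall (0 : EuclideanSpace ℝ (Fin d)) r) *
        ((if (‖T (zr z)‖ - 2*r)/2 ≤ ‖a‖ then (1:ℝ≥0∞) else 0)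
          + (if (‖T (zr z)‖ - 2*r)/2 ≤ ‖b‖ then (1:ℝ≥0∞) else 0)) := by
  set B : Set (EuclideanSpace ℝ (Fin d)) := Metric.closedBall 0 r with hB
  set S : Set (EuclideanSpace ℝ (Fin d)) :=
    ((fun v => a + v) ⁻¹' B) ∩ ((fun v => T (zr z) + b + v) ⁻¹' B) with hSdef
  have hBmeas : MeasurableSet B := measurableSet_closedBall
  have hSmeas : MeasurableSet S := by
    refine MeasurableSet.inter ?_ ?_
    · exact (measurable_const_add a) hBmeas
    · exact (measurable_const_add _) hBmeas
  have hterm : ∀ x : Fin d → ℤ,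
      (∫⁻ u, B.indicator (fun _ => (1:ℝ≥0∞)) (T (zr x) + a + u)
          * B.indicator (fun _ => (1:ℝ≥0∞)) (T (zr (x+z)) + b + u)
        ∂(volume.restrict (⇑T '' Icube d)))
      = volume ((fun u => u + T (zr x)) ⁻¹' S ∩ (⇑T '' Icube d)) := by
    intro x
    have hfun : (fun u => B.indicator (fun _ => (1:ℝ≥0∞)) (T (zr x) + a + u)
          * B.indicator (fun _ => (1:ℝ≥0∞)) (T (zr (x+z)) + b + u))
        = Set.indicator ((fun u => u + T (zr x)) ⁻¹' S) (fun _ => (1:ℝ≥0∞)) := by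
      funext u
      have e1 : T (zr x) + a + u = a + (u + T (zr x)) := by abel
      have e2 : T (zr (x+z)) + b + u = T (zr z) + b + (u + T (zr x)) := by
        rw [zr_add, map_add]; abel
      rw [e1, e2]
      simp only [Set.indicator_apply, Set.mem_preimage, hSdef, Set.mem_inter_iff]
      by_cases h1 : a + (u + T (zr x)) ∈ B <;>
        by_cases h2 : T (zr z) + b + (u + T (zr x)) ∈ B <;>
        simp [h1, h2]
    rw [hfun, lintegral_indicator ((measurable_add_const _) hSmeas), setLIntegral_one,
      Measure.restrict_apply ((measurable_add_const _) hSmeas)]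
  simp_rw [hterm]
  refine le_trans (tiling T S hSmeas) ?_
  by_cases hS : S = ∅
  · simp [hS]
  · obtain ⟨v₀, hv₀⟩ := Set.nonempty_iff_ne_empty.mpr hS
    have e1 : ‖a + v₀‖ ≤ r := by
      have := hv₀.1
      rwa [Set.mem_preimage, hB, mem_closedBall_zero_iff] at this
    have e2 : ‖T (zr z) + b + v₀‖ ≤ r := by
      have := hv₀.2
      rwa [Set.mem_preimage, hB, mem_closedBall_zero_iff] at this
    have e3 : ‖T (zr z)‖ ≤ 2*r + ‖a‖ + ‖b‖ := by
      have h4 : ‖(T (zr z) + b + v₀) - (a + v₀)‖ ≤ 2*r := by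
        calc ‖(T (zr z) + b + v₀) - (a + v₀)‖ ≤ ‖T (zr z) + b + v₀‖ + ‖a + v₀‖ :=
              norm_sub_le _ _
          _ ≤ 2*r := by linarith
      have h5 : T (zr z) = ((T (zr z) + b + v₀) - (a + v₀)) + (a - b) := by abel
      calc ‖T (zr z)‖ = ‖((T (zr z) + b + v₀) - (a + v₀)) + (a - b)‖ := by rw [← h5]
        _ ≤ ‖(T (zr z) + b + v₀) - (a + v₀)‖ + ‖a - b‖ := norm_add_le _ _
        _ ≤ 2*r + (‖a‖ + ‖b‖) := by
            have := norm_sub_le a b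
            linarith
        _ = 2*r + ‖a‖ + ‖b‖ := by ring
    have hind : (1:ℝ≥0∞) ≤ (if (‖T (zr z)‖ - 2*r)/2 ≤ ‖a‖ then (1:ℝ≥0∞) else 0)
          + (if (‖T (zr z)‖ - 2*r)/2 ≤ ‖b‖ then (1:ℝ≥0∞) else 0) := by
      rcases le_total ‖a‖ ‖b‖ with h | h
      · have : (‖T (zr z)‖ - 2*r)/2 ≤ ‖b‖ := by linarith
        rw [if_pos this]
        exact le_add_self
      · have : (‖T (zr z)‖ - 2*r)/2 ≤ ‖a‖ := by linarith
        rw [if_pos this]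
        exact le_add_of_le_of_nonneg le_rfl zero_le
    calc volume S ≤ volume ((fun v => a + v) ⁻¹' B) := measure_mono Set.inter_subset_left
      _ = volume B := measure_preimage_add _ _ _
      _ = volume B * 1 := (mul_one _).symm
      _ ≤ _ := mul_le_mul_right hind _

private noncomputable def indB (d : ℕ) (r : ℝ) : EuclideanSpace ℝ (Fin d) → ℝ≥0∞ :=
  (Metric.closedBall 0 r).indicator fun _ => (1:ℝ≥0∞)

private lemma indB_meas (r : ℝ) : Measurable (indB d r) :=
  measurable_const.indicator measurableSet_closedBall

private noncomputable def Hker (T : EuclideanSpace ℝ (Fin d) ≃ₗ[ℝ] EuclideanSpace ℝ (Fin d)) (r : ℝ)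
    (z x : Fin d → ℤ)
    (ab : EuclideanSpace ℝ (Fin d) × EuclideanSpace ℝ (Fin d)) : ℝ≥0∞ :=
  ∫⁻ u, indB d r (T (zr x) + ab.1 + u) * indB d r (T (zr (x+z)) + ab.2 + u)
    ∂(volume.restrict (⇑T '' Icube d))

private lemma Hker_meas (T : EuclideanSpace ℝ (Fin d) ≃ₗ[ℝ] EuclideanSpace ℝ (Fin d)) (r : ℝ)
    (z x : Fin d → ℤ) : Measurable (Hker T r z x) := by
  apply Measurable.lintegral_prod_right'
    (f := fun y : (EuclideanSpace ℝ (Fin d) × EuclideanSpace ℝ (Fin d)) × EuclideanSpace ℝ (Fin d)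
      => indB d r (T (zr x) + y.1.1 + y.2) * indB d r (T (zr (x+z)) + y.1.2 + y.2))
  exact (((indB_meas r).comp (((measurable_fst.comp measurable_fst).const_add _).add measurable_snd)).mul
    ((indB_meas r).comp (((measurable_snd.comp measurable_fst).const_add _).add measurable_snd)))

private noncomputable def chi (T : EuclideanSpace ℝ (Fin d) ≃ₗ[ℝ] EuclideanSpace ℝ (Fin d)) (r : ℝ)
    (z : Fin d → ℤ) (v : EuclideanSpace ℝ (Fin d)) : ℝ≥0∞ :=
  if (‖T (zr z)‖ - 2*r)/2 ≤ ‖v‖ then 1 else 0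

private lemma chi_meas (T : EuclideanSpace ℝ (Fin d) ≃ₗ[ℝ] EuclideanSpace ℝ (Fin d)) (r : ℝ)
    (z : Fin d → ℤ) : Measurable (chi T r z) := by
  unfold chi
  refine Measurable.ite ?_ measurable_const measurable_const
  exact measurableSet_le measurable_const measurable_norm

private lemma Hsum_le2 (T : EuclideanSpace ℝ (Fin d) ≃ₗ[ℝ] EuclideanSpace ℝ (Fin d))
    {r : ℝ} (hr : 0 < r) (z : Fin d → ℤ) (a b : EuclideanSpace ℝ (Fin d)) :
    (∑' x : Fin d → ℤ, Hker T r z x (a, b))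
      ≤ volume (Metric.closedBall (0 : EuclideanSpace ℝ (Fin d)) r)
        * (chi T r z a + chi T r z b) :=
  Hsum_le T hr z a b

private lemma counting2 (T : EuclideanSpace ℝ (Fin d) ≃ₗ[ℝ] EuclideanSpace ℝ (Fin d))
    (r : ℝ) (hr : 0 < r) (c : ℝ≥0)
    (hc : ∀ z : Fin d → ℤ, ‖zr z‖ ≤ (c : ℝ) * ‖T (zr z)‖) (v : EuclideanSpace ℝ (Fin d)) :
    (∑' z : Fin d → ℤ, chi T r z v)
      ≤ 2^d * (((4*c : ℝ≥0) : ℝ≥0∞)^d * ((‖v‖₊ : ℝ≥0∞))^d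
          + (((4*c*r.toNNReal + 3 : ℝ≥0) : ℝ≥0∞))^d) :=
  counting T r hr c hc v

set_option maxHeartbeats 1000000 in
/-- If the perturbations have finite d-th moment `E[|p_0|^d] < ∞`, then the
perturbed lattice has finite second moment of the number of points in every ball `B_r`,
`r > 0`; in particular the number variance in every finite ball is finite. -/
theorem second_moment_of_number_of_points_finite
    (d : ℕ) (hd : 1 ≤ d)
    (T : EuclideanSpace ℝ (Fin d) ≃ₗ[ℝ] EuclideanSpace ℝ (Fin d))
    (hT : |LinearMap.det (T : EuclideanSpace ℝ (Fin d) →ₗ[ℝ] EuclideanSpace ℝ (Fin d))| = 1)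
    {Ω : Type} [MeasureSpace Ω] [IsProbabilityMeasure (ℙ : Measure Ω)]
    (p : (Fin d → ℤ) → Ω → EuclideanSpace ℝ (Fin d))
    (hpm : ∀ x, Measurable (p x))
    (hinv : ∀ z : Fin d → ℤ,
      Measure.map (fun ω => fun x => p (x + z) ω) (ℙ : Measure Ω)
        = Measure.map (fun ω => fun x => p x ω) (ℙ : Measure Ω))
    (U : Ω → EuclideanSpace ℝ (Fin d)) (hUm : Measurable U)
    (hU : Measure.map U (ℙ : Measure Ω)
        = volume.restrict
            (⇑T '' ((WithLp.toLp 2 '' (Set.univ.pi fun _ : Fin d => Set.Ico (0:ℝ) 1)) :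
              Set (EuclideanSpace ℝ (Fin d)))))
    (hUindep : IndepFun U (fun ω => fun x => p x ω) (ℙ : Measure Ω))
    (hmom : (∫⁻ ω, (‖p 0 ω‖₊ : ℝ≥0∞) ^ d ∂ℙ) < ⊤) :
    ∀ r : ℝ, 0 < r →
      (∫⁻ ω, (∑' x : Fin d → ℤ,
        (closedBall (0 : EuclideanSpace ℝ (Fin d)) r).indicator (fun _ => (1 : ℝ≥0∞))
          (T ((WithLp.toLp 2 (fun i => (x i : ℝ))) : EuclideanSpace ℝ (Fin d)) + p x ω + U ω)) ^ 2 ∂ℙ) < ⊤ := by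
  intro r hr
  have hPm : Measurable (fun ω => fun x => p x ω) := measurable_pi_lambda _ hpm
  have hUlaw : Measure.map U ℙ = volume.restrict (⇑T '' Icube d) := hU
  haveI : IsProbabilityMeasure (Measure.map (fun ω => fun x => p x ω) ℙ) :=
    Measure.isProbabilityMeasure_map hPm.aemeasurable
  haveI hprobU : IsProbabilityMeasure (volume.restrict (⇑T '' Icube d)) := by
    rw [← hUlaw]; exact Measure.isProbabilityMeasure_map hUm.aemeasurable
  -- shift invariance
  have hshiftm : ∀ w : Fin d → ℤ,
      Measurable (fun q : (Fin d → ℤ) → EuclideanSpace ℝ (Fin d) => fun y => q (y + w)) :=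
    fun w => measurable_pi_lambda _ fun y => measurable_pi_apply (y + w)
  have hshift : ∀ w : Fin d → ℤ,
      Measure.map (fun q : (Fin d → ℤ) → EuclideanSpace ℝ (Fin d) => fun y => q (y + w))
          (Measure.map (fun ω => fun x => p x ω) ℙ)
        = Measure.map (fun ω => fun x => p x ω) ℙ := by
    intro w
    rw [Measure.map_map (hshiftm w) hPm]
    exact hinv w
  have hHqm : ∀ z x x' y' : Fin d → ℤ,
      Measurable (fun q : (Fin d → ℤ) → EuclideanSpace ℝ (Fin d) => Hker T r z x (q x', q y')) :=
    fun z x x' y' => (Hker_meas T r z x).comp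
      ((measurable_pi_apply x').prodMk (measurable_pi_apply y'))
  have hgm : Measurable (fun y : EuclideanSpace ℝ (Fin d) × ((Fin d → ℤ) → EuclideanSpace ℝ (Fin d))
      => (∑' x : Fin d → ℤ, indB d r (T (zr x) + y.2 x + y.1)) ^ 2) := by
    apply Measurable.pow_const
    exact Measurable.ennreal_tsum fun x =>
      (indB_meas r).comp
        ((((measurable_pi_apply x).comp measurable_snd).const_add _).add measurable_fst)
  -- Step 1 : independence and Tonelli
  have hjoint : Measure.map (fun ω => (U ω, fun x => p x ω)) ℙ
      = (Measure.map U ℙ).prod (Measure.map (fun ω => fun x => p x ω) ℙ) :=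
    (indepFun_iff_map_prod_eq_prod_map_map hUm.aemeasurable hPm.aemeasurable).mp hUindep
  have step1 : (∫⁻ ω, (∑' x : Fin d → ℤ,
        (closedBall (0 : EuclideanSpace ℝ (Fin d)) r).indicator (fun _ => (1 : ℝ≥0∞))
          (T ((WithLp.toLp 2 (fun i => (x i : ℝ))) : EuclideanSpace ℝ (Fin d)) + p x ω + U ω)) ^ 2 ∂ℙ)
      = ∫⁻ q, ∫⁻ u, (∑' x : Fin d → ℤ, indB d r (T (zr x) + q x + u)) ^ 2
          ∂(volume.restrict (⇑T '' Icube d))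
          ∂(Measure.map (fun ω => fun x => p x ω) ℙ) := by
    have e0 : (∫⁻ ω, (∑' x : Fin d → ℤ,
        (closedBall (0 : EuclideanSpace ℝ (Fin d)) r).indicator (fun _ => (1 : ℝ≥0∞))
          (T ((WithLp.toLp 2 (fun i => (x i : ℝ))) : EuclideanSpace ℝ (Fin d)) + p x ω + U ω)) ^ 2 ∂ℙ)
        = ∫⁻ ω, (fun y : EuclideanSpace ℝ (Fin d) × ((Fin d → ℤ) → EuclideanSpace ℝ (Fin d))
            => (∑' x : Fin d → ℤ, indB d r (T (zr x) + y.2 x + y.1)) ^ 2)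
            ((fun ω => (U ω, fun x => p x ω)) ω) ∂ℙ := rfl
    rw [e0, ← lintegral_map hgm (hUm.prodMk hPm), hjoint, hUlaw,
      lintegral_prod _ hgm.aemeasurable]
    exact lintegral_lintegral_swap hgm.aemeasurable
  -- Step 2 : expand the square
  have step2 : ∀ q : (Fin d → ℤ) → EuclideanSpace ℝ (Fin d),
      (∫⁻ u, (∑' x : Fin d → ℤ, indB d r (T (zr x) + q x + u)) ^ 2
          ∂(volume.restrict (⇑T '' Icube d)))
        = ∑' (z : Fin d → ℤ) (x : Fin d → ℤ), Hker T r z x (q x, q (x+z)) := by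
    intro q
    have h1 : ∀ u : EuclideanSpace ℝ (Fin d),
        (∑' x : Fin d → ℤ, indB d r (T (zr x) + q x + u)) ^ 2
          = ∑' (z : Fin d → ℤ) (x : Fin d → ℤ),
              indB d r (T (zr x) + q x + u) * indB d r (T (zr (x+z)) + q (x+z) + u) := by
      intro u
      rw [pow_two, ← ENNReal.tsum_mul_right, ← ENNReal.tsum_comm]
      refine tsum_congr fun x => ?_
      rw [← ENNReal.tsum_mul_left]
      exact ((Equiv.addLeft x).tsum_eq
        (fun y => indB d r (T (zr x) + q x + u) * indB d r (T (zr y) + q y + u))).symm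
    rw [lintegral_congr h1]
    calc (∫⁻ u, ∑' (z : Fin d → ℤ) (x : Fin d → ℤ),
            indB d r (T (zr x) + q x + u) * indB d r (T (zr (x+z)) + q (x+z) + u)
          ∂(volume.restrict (⇑T '' Icube d)))
        = ∑' (z : Fin d → ℤ), ∫⁻ u, ∑' (x : Fin d → ℤ),
            indB d r (T (zr x) + q x + u) * indB d r (T (zr (x+z)) + q (x+z) + u)
          ∂(volume.restrict (⇑T '' Icube d)) :=
          lintegral_tsum fun z => (Measurable.ennreal_tsum fun x =>
            (((indB_meas r).comp (measurable_const_add _)).mul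
              ((indB_meas r).comp (measurable_const_add _)))).aemeasurable
      _ = ∑' (z : Fin d → ℤ) (x : Fin d → ℤ), ∫⁻ u,
            indB d r (T (zr x) + q x + u) * indB d r (T (zr (x+z)) + q (x+z) + u)
          ∂(volume.restrict (⇑T '' Icube d)) :=
          tsum_congr fun z => lintegral_tsum fun x =>
            (((indB_meas r).comp (measurable_const_add _)).mul
              ((indB_meas r).comp (measurable_const_add _))).aemeasurable
      _ = ∑' (z : Fin d → ℤ) (x : Fin d → ℤ), Hker T r z x (q x, q (x+z)) := rfl
  -- Step 3 : Tonelli over q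
  have step3 : (∫⁻ q, ∑' (z : Fin d → ℤ) (x : Fin d → ℤ), Hker T r z x (q x, q (x+z))
          ∂(Measure.map (fun ω => fun x => p x ω) ℙ))
      = ∑' (z : Fin d → ℤ) (x : Fin d → ℤ),
          ∫⁻ q, Hker T r z x (q x, q (x+z)) ∂(Measure.map (fun ω => fun x => p x ω) ℙ) := by
    rw [lintegral_tsum fun z => (Measurable.ennreal_tsum fun x => hHqm z x x (x+z)).aemeasurable]
    exact tsum_congr fun z => lintegral_tsum fun x => (hHqm z x x (x+z)).aemeasurable
  -- Step 4 : stationarity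
  have step4 : ∀ z x : Fin d → ℤ,
      (∫⁻ q, Hker T r z x (q x, q (x+z)) ∂(Measure.map (fun ω => fun x => p x ω) ℙ))
        = ∫⁻ q, Hker T r z x (q 0, q z) ∂(Measure.map (fun ω => fun x => p x ω) ℙ) := by
    intro z x
    calc (∫⁻ q, Hker T r z x (q x, q (x+z)) ∂(Measure.map (fun ω => fun x => p x ω) ℙ))
        = ∫⁻ q, (fun q' => Hker T r z x (q' 0, q' z)) ((fun q' (y : Fin d → ℤ) => q' (y + x)) q)
            ∂(Measure.map (fun ω => fun x => p x ω) ℙ) := by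
          refine lintegral_congr fun q => ?_
          simp only
          rw [zero_add, add_comm z x]
      _ = ∫⁻ q', Hker T r z x (q' 0, q' z)
            ∂(Measure.map (fun q : (Fin d → ℤ) → EuclideanSpace ℝ (Fin d) => fun y => q (y + x))
              (Measure.map (fun ω => fun x => p x ω) ℙ)) :=
          (lintegral_map (hHqm z x 0 z) (hshiftm x)).symm
      _ = _ := by rw [hshift x]
  -- Step 5 : tiling bound per z
  have step5 : ∀ z : Fin d → ℤ,
      (∑' x : Fin d → ℤ,
          ∫⁻ q, Hker T r z x (q 0, q z) ∂(Measure.map (fun ω => fun x => p x ω) ℙ))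
        ≤ volume (closedBall (0 : EuclideanSpace ℝ (Fin d)) r)
            * (2 * ∫⁻ ω, chi T r z (p 0 ω) ∂ℙ) := by
    intro z
    have hchi0 : Measurable fun q : (Fin d → ℤ) → EuclideanSpace ℝ (Fin d) => chi T r z (q 0) :=
      (chi_meas T r z).comp (measurable_pi_apply 0)
    have hchiz : Measurable fun q : (Fin d → ℤ) → EuclideanSpace ℝ (Fin d) => chi T r z (q z) :=
      (chi_meas T r z).comp (measurable_pi_apply z)
    rw [← lintegral_tsum fun x => (hHqm z x 0 z).aemeasurable]
    calc (∫⁻ q, ∑' x : Fin d → ℤ, Hker T r z x (q 0, q z)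
            ∂(Measure.map (fun ω => fun x => p x ω) ℙ))
        ≤ ∫⁻ q, volume (closedBall (0 : EuclideanSpace ℝ (Fin d)) r)
              * (chi T r z (q 0) + chi T r z (q z))
            ∂(Measure.map (fun ω => fun x => p x ω) ℙ) :=
          lintegral_mono fun q => Hsum_le2 T hr z (q 0) (q z)
      _ = volume (closedBall (0 : EuclideanSpace ℝ (Fin d)) r)
            * ((∫⁻ q, chi T r z (q 0) ∂(Measure.map (fun ω => fun x => p x ω) ℙ))
              + (∫⁻ q, chi T r z (q z) ∂(Measure.map (fun ω => fun x => p x ω) ℙ))) := by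
          rw [← lintegral_add_left hchi0 _]
          exact lintegral_const_mul _ (hchi0.add hchiz)
      _ = volume (closedBall (0 : EuclideanSpace ℝ (Fin d)) r)
            * (2 * ∫⁻ q, chi T r z (q 0) ∂(Measure.map (fun ω => fun x => p x ω) ℙ)) := by
          have e4 : (∫⁻ q, chi T r z (q z) ∂(Measure.map (fun ω => fun x => p x ω) ℙ))
              = ∫⁻ q, chi T r z (q 0) ∂(Measure.map (fun ω => fun x => p x ω) ℙ) := by
            calc (∫⁻ q, chi T r z (q z) ∂(Measure.map (fun ω => fun x => p x ω) ℙ))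
                = ∫⁻ q, (fun q' => chi T r z (q' 0)) ((fun q' (y : Fin d → ℤ) => q' (y + z)) q)
                    ∂(Measure.map (fun ω => fun x => p x ω) ℙ) := by
                  refine lintegral_congr fun q => ?_
                  simp only
                  rw [zero_add]
              _ = ∫⁻ q', chi T r z (q' 0)
                    ∂(Measure.map
                      (fun q : (Fin d → ℤ) → EuclideanSpace ℝ (Fin d) => fun y => q (y + z))
                      (Measure.map (fun ω => fun x => p x ω) ℙ)) :=
                  (lintegral_map hchi0 (hshiftm z)).symm
              _ = _ := by rw [hshift z]
          rw [e4, two_mul]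
      _ = volume (closedBall (0 : EuclideanSpace ℝ (Fin d)) r)
            * (2 * ∫⁻ ω, chi T r z (p 0 ω) ∂ℙ) := by
          rw [lintegral_map hchi0 hPm]
  -- Step 6 : moment bound
  have hc : ∀ z : Fin d → ℤ,
      ‖zr z‖ ≤ ((‖(LinearMap.toContinuousLinearMap ((T.symm : EuclideanSpace ℝ (Fin d) ≃ₗ[ℝ] EuclideanSpace ℝ (Fin d)) : EuclideanSpace ℝ (Fin d) →ₗ[ℝ] EuclideanSpace ℝ (Fin d)))‖₊ : ℝ≥0) : ℝ)
        * ‖T (zr z)‖ := by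
    intro z
    have e1 : zr z = (LinearMap.toContinuousLinearMap ((T.symm : EuclideanSpace ℝ (Fin d) ≃ₗ[ℝ] EuclideanSpace ℝ (Fin d)) : EuclideanSpace ℝ (Fin d) →ₗ[ℝ] EuclideanSpace ℝ (Fin d))) (T (zr z)) := by
      simp [LinearMap.coe_toContinuousLinearMap']
    calc ‖zr z‖ = ‖(LinearMap.toContinuousLinearMap ((T.symm : EuclideanSpace ℝ (Fin d) ≃ₗ[ℝ] EuclideanSpace ℝ (Fin d)) : EuclideanSpace ℝ (Fin d) →ₗ[ℝ] EuclideanSpace ℝ (Fin d))) (T (zr z))‖ := by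
          rw [← e1]
      _ ≤ ‖(LinearMap.toContinuousLinearMap ((T.symm : EuclideanSpace ℝ (Fin d) ≃ₗ[ℝ] EuclideanSpace ℝ (Fin d)) : EuclideanSpace ℝ (Fin d) →ₗ[ℝ] EuclideanSpace ℝ (Fin d)))‖ * ‖T (zr z)‖ :=
          ContinuousLinearMap.le_opNorm _ _
      _ = _ := by rw [coe_nnnorm]
  have step6 : (∑' z : Fin d → ℤ, ∫⁻ ω, chi T r z (p 0 ω) ∂ℙ)
      ≤ 2^d * (((4*(‖(LinearMap.toContinuousLinearMap ((T.symm : EuclideanSpace ℝ (Fin d) ≃ₗ[ℝ] EuclideanSpace ℝ (Fin d)) : EuclideanSpace ℝ (Fin d) →ₗ[ℝ] EuclideanSpace ℝ (Fin d)))‖₊) : ℝ≥0) : ℝ≥0∞)^d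
            * (∫⁻ ω, (‖p 0 ω‖₊ : ℝ≥0∞) ^ d ∂ℙ)
          + (((4*(‖(LinearMap.toContinuousLinearMap ((T.symm : EuclideanSpace ℝ (Fin d) ≃ₗ[ℝ] EuclideanSpace ℝ (Fin d)) : EuclideanSpace ℝ (Fin d) →ₗ[ℝ] EuclideanSpace ℝ (Fin d)))‖₊)*r.toNNReal + 3 : ℝ≥0))
              : ℝ≥0∞)^d) := by
    have hchip : ∀ z : Fin d → ℤ, Measurable fun ω => chi T r z (p 0 ω) :=
      fun z => (chi_meas T r z).comp (hpm 0)
    rw [← lintegral_tsum fun z => (hchip z).aemeasurable]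
    calc (∫⁻ ω, ∑' z : Fin d → ℤ, chi T r z (p 0 ω) ∂ℙ)
        ≤ ∫⁻ ω, 2^d *
            (((4*(‖(LinearMap.toContinuousLinearMap ((T.symm : EuclideanSpace ℝ (Fin d) ≃ₗ[ℝ] EuclideanSpace ℝ (Fin d)) : EuclideanSpace ℝ (Fin d) →ₗ[ℝ] EuclideanSpace ℝ (Fin d)))‖₊) : ℝ≥0) : ℝ≥0∞)^d
              * ((‖p 0 ω‖₊ : ℝ≥0∞))^d
            + (((4*(‖(LinearMap.toContinuousLinearMap ((T.symm : EuclideanSpace ℝ (Fin d) ≃ₗ[ℝ] EuclideanSpace ℝ (Fin d)) : EuclideanSpace ℝ (Fin d) →ₗ[ℝ] EuclideanSpace ℝ (Fin d)))‖₊)*r.toNNReal + 3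
                : ℝ≥0)) : ℝ≥0∞)^d) ∂ℙ :=
          lintegral_mono fun ω => counting2 T r hr _ hc (p 0 ω)
      _ = _ := by
          rw [lintegral_const_mul _
              ((((((hpm 0).nnnorm.coe_nnreal_ennreal).pow_const d).const_mul _).add_const _)),
            lintegral_add_right _ measurable_const,
            lintegral_const_mul _ (((hpm 0).nnnorm.coe_nnreal_ennreal).pow_const d),
            lintegral_const, measure_univ, mul_one]
  -- Final assembly
  rw [step1, lintegral_congr step2, step3]
  have final_le : (∑' (z : Fin d → ℤ) (x : Fin d → ℤ),
        ∫⁻ q, Hker T r z x (q x, q (x+z)) ∂(Measure.map (fun ω => fun x => p x ω) ℙ))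
      ≤ volume (closedBall (0 : EuclideanSpace ℝ (Fin d)) r)
          * (2 * (∑' z : Fin d → ℤ, ∫⁻ ω, chi T r z (p 0 ω) ∂ℙ)) := by
    calc (∑' (z : Fin d → ℤ) (x : Fin d → ℤ),
          ∫⁻ q, Hker T r z x (q x, q (x+z)) ∂(Measure.map (fun ω => fun x => p x ω) ℙ))
        = ∑' (z : Fin d → ℤ) (x : Fin d → ℤ),
            ∫⁻ q, Hker T r z x (q 0, q z) ∂(Measure.map (fun ω => fun x => p x ω) ℙ) :=
          tsum_congr fun z => tsum_congr fun x => step4 z x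
      _ ≤ ∑' z : Fin d → ℤ, volume (closedBall (0 : EuclideanSpace ℝ (Fin d)) r)
            * (2 * ∫⁻ ω, chi T r z (p 0 ω) ∂ℙ) :=
          Summable.tsum_le_tsum (fun z => step5 z) ENNReal.summable ENNReal.summable
      _ = _ := by rw [ENNReal.tsum_mul_left, ENNReal.tsum_mul_left]
  refine lt_of_le_of_lt final_le ?_
  refine ENNReal.mul_lt_top measure_closedBall_lt_top ?_
  refine ENNReal.mul_lt_top (by norm_num) ?_
  refine lt_of_le_of_lt step6 ?_
  refine ENNReal.mul_lt_top (ENNReal.pow_lt_top (by norm_num)) ?_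
  refine ENNReal.add_lt_top.mpr ⟨?_, ?_⟩
  · exact ENNReal.mul_lt_top (ENNReal.pow_lt_top ENNReal.coe_lt_top) hmom
  · exact ENNReal.pow_lt_top ENNReal.coe_lt_top
end

section
/- Consider a perturbed lattice in ℝ^d with ℤ^d-invariant perturbations (p_x)_{x∈ℤ^d} and independent uniform shift U on the fundamental domain D = T([0,1)^d). Then for every Borel set B ⊆ ℝ^d the following identity holds in [0,∞]: E[ ∑_{x,y ∈ ℤ^d, x ≠ y} 1{T x + p_x + U ∈ D} · 1{(T y + p_y) − (T x + p_x) ∈ B} ] = E[ ∑_{y ∈ ℤ^d, y ≠ 0} 1{T y + p_y − p_0 ∈ B} ]. (This identifies the reduced second factorial moment measure of the perturbed lattice.) -/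
open MeasureTheory ProbabilityTheory Filter Set Metric
open scoped ENNReal


namespace RSFMM
variable {d : ℕ}

abbrev Box (d : ℕ) : Set (EuclideanSpace ℝ (Fin d)) := WithLp.ofLp ⁻¹' (Set.univ.pi fun _ : Fin d => Set.Ico (0:ℝ) 1)

lemma measurableSet_Box : MeasurableSet (Box d) :=
  (MeasurableSet.univ_pi fun _ => measurableSet_Ico).preimage (WithLp.measurable_ofLp _ _)

lemma volume_Box : volume (Box d) = 1 := by
  rw [(PiLp.volume_preserving_ofLp (Fin d)).measure_preimage
    (MeasurableSet.univ_pi fun _ => measurableSet_Ico).nullMeasurableSet, volume_pi_pi]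
  simp

variable (T : EuclideanSpace ℝ (Fin d) ≃ₗ[ℝ] EuclideanSpace ℝ (Fin d))

lemma cont_symm : Continuous ⇑T.symm := LinearMap.continuous_of_finiteDimensional _

lemma measurableSet_D : MeasurableSet (⇑T '' Box d) := by
  rw [LinearEquiv.image_eq_preimage_symm]
  exact measurableSet_Box.preimage (cont_symm T).measurable

lemma volume_D
    (hT : |LinearMap.det (T : EuclideanSpace ℝ (Fin d) →ₗ[ℝ] EuclideanSpace ℝ (Fin d))| = 1) :
    volume (⇑T '' Box d) = 1 := by
  rw [show (⇑T : EuclideanSpace ℝ (Fin d) → _) = ⇑(T : EuclideanSpace ℝ (Fin d) →ₗ[ℝ] EuclideanSpace ℝ (Fin d)) from rfl,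
    Measure.addHaar_image_linearMap, hT, volume_Box]
  simp

/-- cast of integer vector as point of Euclidean space -/
def ι (x : Fin d → ℤ) : EuclideanSpace ℝ (Fin d) := WithLp.toLp 2 (fun i => (x i : ℝ))

lemma mem_D_iff (u : EuclideanSpace ℝ (Fin d)) : u ∈ ⇑T '' Box d ↔ ∀ i, T.symm u i ∈ Set.Ico (0:ℝ) 1 := by
  rw [LinearEquiv.image_eq_preimage_symm]
  rw [Set.mem_preimage, Set.mem_preimage, Set.mem_univ_pi]

/-- unique integer translate landing in the box -/
lemma existsUnique_translate (w : EuclideanSpace ℝ (Fin d)) :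
    ∃! x : Fin d → ℤ, ∀ i, (x i : ℝ) + w i ∈ Set.Ico (0:ℝ) 1 := by
  refine ⟨fun i => -⌊w i⌋, fun i => ?_, fun y hy => ?_⟩
  · push_cast
    constructor
    · linarith [Int.floor_le (w i)]
    · linarith [Int.lt_floor_add_one (w i)]
  · funext i
    have h := hy i
    have h0 : ⌊(y i : ℝ) + w i⌋ = 0 := Int.floor_eq_zero_iff.2 (by simpa using h)
    have : (⌊w i + (y i : ℝ)⌋ : ℤ) = ⌊w i⌋ + y i := Int.floor_add_intCast _ _
    rw [add_comm] at h0
    omega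

end RSFMM

namespace RSFMM
variable {d : ℕ} (T : EuclideanSpace ℝ (Fin d) ≃ₗ[ℝ] EuclideanSpace ℝ (Fin d))

lemma mem_S_iff (a : EuclideanSpace ℝ (Fin d)) (x : Fin d → ℤ) (u : EuclideanSpace ℝ (Fin d)) :
    u ∈ (fun u => T (ι x) + a + u) ⁻¹' (⇑T '' Box d)
      ↔ ∀ i, (x i : ℝ) + T.symm (a + u) i ∈ Set.Ico (0:ℝ) 1 := by
  rw [Set.mem_preimage, mem_D_iff]
  have : T.symm (T (ι x) + a + u) = ι x + T.symm (a + u) := by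
    rw [add_assoc, map_add, LinearEquiv.symm_apply_apply]
  rw [this]
  simp [ι]

lemma tiling
    (hT : |LinearMap.det (T : EuclideanSpace ℝ (Fin d) →ₗ[ℝ] EuclideanSpace ℝ (Fin d))| = 1)
    (a : EuclideanSpace ℝ (Fin d)) :
    ∑' x : Fin d → ℤ,
      volume ((⇑T '' Box d) ∩ (fun u => T (ι x) + a + u) ⁻¹' (⇑T '' Box d)) = 1 := by
  have hScont : ∀ x : Fin d → ℤ, MeasurableSet ((fun u => T (ι x) + a + u) ⁻¹' (⇑T '' Box d)) :=
    fun x => (measurableSet_D T).preimage (measurable_const.add measurable_id)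
  have hdisj : Pairwise (Function.onFun Disjoint fun x : Fin d → ℤ =>
      (⇑T '' Box d) ∩ (fun u => T (ι x) + a + u) ⁻¹' (⇑T '' Box d)) := by
    intro x y hxy
    refine Set.disjoint_left.2 fun u hu hv => hxy ?_
    have h1 := (mem_S_iff T a x u).1 hu.2
    have h2 := (mem_S_iff T a y u).1 hv.2
    obtain ⟨z, _, hz⟩ := existsUnique_translate (T.symm (a + u))
    rw [hz x h1, hz y h2]
  have hcover : (⋃ x : Fin d → ℤ, (fun u => T (ι x) + a + u) ⁻¹' (⇑T '' Box d)) = Set.univ := by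
    ext u
    simp only [Set.mem_iUnion, Set.mem_univ, iff_true]
    obtain ⟨x, hx, -⟩ := existsUnique_translate (T.symm (a + u))
    exact ⟨x, (mem_S_iff T a x u).2 hx⟩
  rw [← measure_iUnion hdisj (fun x => (measurableSet_D T).inter (hScont x)),
    ← Set.inter_iUnion, hcover, Set.inter_univ, volume_D T hT]

end RSFMM

namespace RSFMM
variable {d : ℕ}

/-- overlap volume function -/
noncomputable def V (D : Set (EuclideanSpace ℝ (Fin d))) (c : EuclideanSpace ℝ (Fin d)) : ℝ≥0∞ :=
  volume (D ∩ (fun u => c + u) ⁻¹' D)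

lemma measurable_V {D : Set (EuclideanSpace ℝ (Fin d))} (hD : MeasurableSet D) :
    Measurable (V D) := by
  have hs : MeasurableSet {q : EuclideanSpace ℝ (Fin d) × EuclideanSpace ℝ (Fin d) |
      q.2 ∈ D ∧ q.1 + q.2 ∈ D} :=
    (hD.preimage measurable_snd).inter (hD.preimage (measurable_fst.add measurable_snd))
  have h := measurable_measure_prodMk_left (ν := (volume : Measure (EuclideanSpace ℝ (Fin d)))) hs
  have he : ∀ c : EuclideanSpace ℝ (Fin d), D ∩ (fun u => c + u) ⁻¹' D
      = Prod.mk c ⁻¹' {q : EuclideanSpace ℝ (Fin d) × EuclideanSpace ℝ (Fin d) |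
          q.2 ∈ D ∧ q.1 + q.2 ∈ D} := by
    intro c; ext u; simp [Set.mem_preimage, and_comm]
  unfold V
  simp_rw [he]
  exact h

lemma inner_int {D : Set (EuclideanSpace ℝ (Fin d))} (hD : MeasurableSet D)
    (c : EuclideanSpace ℝ (Fin d)) :
    ∫⁻ u, D.indicator (fun _ => (1:ℝ≥0∞)) (c + u) ∂(volume.restrict D) = V D c := by
  have h : (fun u => D.indicator (fun _ => (1:ℝ≥0∞)) (c + u))
      = ((fun u => c + u) ⁻¹' D).indicator 1 := by
    ext u
    by_cases hu : c + u ∈ D <;> simp [Set.indicator, hu, Set.mem_preimage]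
  have hpre : MeasurableSet ((fun u => c + u) ⁻¹' D) :=
    hD.preimage (measurable_const.add measurable_id)
  rw [h, lintegral_indicator_one hpre, Measure.restrict_apply hpre, Set.inter_comm]
  rfl

end RSFMM

namespace RSFMM
variable {d : ℕ}

lemma iota_add (x z : Fin d → ℤ) : ι (x + z) = (ι x : EuclideanSpace ℝ (Fin d)) + ι z := by
  ext i
  simp [ι]

lemma key_term
    (T : EuclideanSpace ℝ (Fin d) ≃ₗ[ℝ] EuclideanSpace ℝ (Fin d))
    {Ω : Type} [MeasureSpace Ω] [IsProbabilityMeasure (ℙ : Measure Ω)]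
    (p : (Fin d → ℤ) → Ω → EuclideanSpace ℝ (Fin d))
    (hpm : ∀ x, Measurable (p x))
    (hinv : ∀ z : Fin d → ℤ,
      Measure.map (fun ω => fun x => p (x + z) ω) (ℙ : Measure Ω)
        = Measure.map (fun ω => fun x => p x ω) (ℙ : Measure Ω))
    (U : Ω → EuclideanSpace ℝ (Fin d)) (hUm : Measurable U)
    (hU : Measure.map U (ℙ : Measure Ω) = volume.restrict (⇑T '' Box d))
    (hUindep : IndepFun U (fun ω => fun x => p x ω) (ℙ : Measure Ω))
    (B : Set (EuclideanSpace ℝ (Fin d))) (hB : MeasurableSet B)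
    (x z : Fin d → ℤ) :
    ∫⁻ ω, (⇑T '' Box d).indicator (fun _ => (1:ℝ≥0∞)) (T (ι x) + p x ω + U ω) *
          B.indicator (fun _ => (1:ℝ≥0∞)) ((T (ι (x + z)) + p (x + z) ω) - (T (ι x) + p x ω)) ∂ℙ
    = ∫⁻ ω, V (⇑T '' Box d) (T (ι x) + p 0 ω) *
          B.indicator (fun _ => (1:ℝ≥0∞)) (T (ι z) + p z ω - p 0 ω) ∂ℙ := by
  set D := ⇑T '' Box d with hDdef
  have hD : MeasurableSet D := measurableSet_D T
  set f : Ω → ((Fin d → ℤ) → EuclideanSpace ℝ (Fin d)) := fun ω y => p y ω with hfdef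
  have hf : Measurable f := measurable_pi_lambda _ hpm
  haveI : IsProbabilityMeasure (Measure.map f ℙ) := Measure.isProbabilityMeasure_map hf.aemeasurable
  haveI : IsProbabilityMeasure (Measure.map U ℙ) := Measure.isProbabilityMeasure_map hUm.aemeasurable
  -- the joint integrand
  set H : EuclideanSpace ℝ (Fin d) × ((Fin d → ℤ) → EuclideanSpace ℝ (Fin d)) → ℝ≥0∞ :=
    fun q => D.indicator (fun _ => (1:ℝ≥0∞)) (T (ι x) + q.2 x + q.1) *
      B.indicator (fun _ => (1:ℝ≥0∞)) ((T (ι (x + z)) + q.2 (x + z)) - (T (ι x) + q.2 x)) with hHdef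
  have hx2 : Measurable fun q : EuclideanSpace ℝ (Fin d) × ((Fin d → ℤ) → EuclideanSpace ℝ (Fin d)) =>
      q.2 x := (measurable_pi_apply x).comp measurable_snd
  have hxz2 : Measurable fun q : EuclideanSpace ℝ (Fin d) × ((Fin d → ℤ) → EuclideanSpace ℝ (Fin d)) =>
      q.2 (x + z) := (measurable_pi_apply (x + z)).comp measurable_snd
  have hH : Measurable H := by
    apply Measurable.mul
    · exact (measurable_const.indicator hD).comp
        ((measurable_const.add hx2).add measurable_fst)
    · exact (measurable_const.indicator hB).comp
        ((measurable_const.add hxz2).sub (measurable_const.add hx2))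
  have step1 : ∫⁻ ω, H (U ω, f ω) ∂ℙ
      = ∫⁻ φ, ∫⁻ u, H (u, φ) ∂(volume.restrict D) ∂(Measure.map f ℙ) := by
    rw [← lintegral_map hH (hUm.prodMk hf),
      (indepFun_iff_map_prod_eq_prod_map_map hUm.aemeasurable hf.aemeasurable).mp hUindep,
      hU, lintegral_prod_symm _ hH.aemeasurable]
  have step2 : ∀ φ : (Fin d → ℤ) → EuclideanSpace ℝ (Fin d),
      ∫⁻ u, H (u, φ) ∂(volume.restrict D)
        = V D (T (ι x) + φ x) *
          B.indicator (fun _ => (1:ℝ≥0∞)) ((T (ι (x + z)) + φ (x + z)) - (T (ι x) + φ x)) := by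
    intro φ
    rw [hHdef]
    simp only
    have hne : ∀ (s : Set (EuclideanSpace ℝ (Fin d))) (v), s.indicator (fun _ => (1:ℝ≥0∞)) v ≠ ⊤ :=
      fun s v => by by_cases h : v ∈ s <;> simp [h]
    rw [lintegral_mul_const' _ _ (hne _ _), inner_int hD]
  set K : ((Fin d → ℤ) → EuclideanSpace ℝ (Fin d)) → ℝ≥0∞ :=
    fun φ => V D (T (ι x) + φ 0) *
      B.indicator (fun _ => (1:ℝ≥0∞)) ((T (ι (x + z)) + φ z) - (T (ι x) + φ 0)) with hKdef
  have hK : Measurable K := by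
    apply Measurable.mul
    · exact (measurable_V hD).comp (measurable_const.add (measurable_pi_apply 0))
    · exact (measurable_const.indicator hB).comp
        ((measurable_const.add (measurable_pi_apply z)).sub
          (measurable_const.add (measurable_pi_apply 0)))
  set A : ((Fin d → ℤ) → EuclideanSpace ℝ (Fin d)) → ℝ≥0∞ :=
    fun φ => V D (T (ι x) + φ x) *
      B.indicator (fun _ => (1:ℝ≥0∞)) ((T (ι (x + z)) + φ (x + z)) - (T (ι x) + φ x)) with hAdef
  have hA : Measurable A := by
    apply Measurable.mul
    · exact (measurable_V hD).comp (measurable_const.add (measurable_pi_apply x))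
    · exact (measurable_const.indicator hB).comp
        ((measurable_const.add (measurable_pi_apply (x + z))).sub
          (measurable_const.add (measurable_pi_apply x)))
  have hσ : Measurable fun ω => (fun y => p (y + x) ω) :=
    measurable_pi_lambda _ (fun y => hpm _)
  have hcomp : ∀ ω, A (f ω) = K (fun y => p (y + x) ω) := by
    intro ω
    simp only [hAdef, hKdef, hfdef, zero_add, add_comm z x]
  have harg : ∀ a b : EuclideanSpace ℝ (Fin d),
      (T (ι (x + z)) + a) - (T (ι x) + b) = T (ι z) + a - b := by
    intro a b
    rw [iota_add, map_add]
    abel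
  calc ∫⁻ ω, D.indicator (fun _ => (1:ℝ≥0∞)) (T (ι x) + p x ω + U ω) *
          B.indicator (fun _ => (1:ℝ≥0∞)) ((T (ι (x + z)) + p (x + z) ω) - (T (ι x) + p x ω)) ∂ℙ
      = ∫⁻ ω, H (U ω, f ω) ∂ℙ := rfl
    _ = ∫⁻ φ, ∫⁻ u, H (u, φ) ∂(volume.restrict D) ∂(Measure.map f ℙ) := step1
    _ = ∫⁻ φ, A φ ∂(Measure.map f ℙ) := lintegral_congr step2
    _ = ∫⁻ ω, A (f ω) ∂ℙ := lintegral_map hA hf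
    _ = ∫⁻ ω, K ((fun ω' => (fun y => p (y + x) ω')) ω) ∂ℙ := lintegral_congr hcomp
    _ = ∫⁻ φ, K φ ∂(Measure.map (fun ω => fun y => p (y + x) ω) ℙ) := (lintegral_map hK hσ).symm
    _ = ∫⁻ φ, K φ ∂(Measure.map f ℙ) := by rw [hinv x]
    _ = ∫⁻ ω, K (f ω) ∂ℙ := lintegral_map hK hf
    _ = ∫⁻ ω, V D (T (ι x) + p 0 ω) *
          B.indicator (fun _ => (1:ℝ≥0∞)) (T (ι z) + p z ω - p 0 ω) ∂ℙ := by
        refine lintegral_congr fun ω => ?_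
        simp only [hKdef, hfdef, harg]

end RSFMM

namespace RSFMM

lemma sum_key {d : ℕ}
    (T : EuclideanSpace ℝ (Fin d) ≃ₗ[ℝ] EuclideanSpace ℝ (Fin d))
    (hT : |LinearMap.det (T : EuclideanSpace ℝ (Fin d) →ₗ[ℝ] EuclideanSpace ℝ (Fin d))| = 1)
    {Ω : Type} [MeasureSpace Ω]
    (g0 : Ω → EuclideanSpace ℝ (Fin d)) (hg0 : Measurable g0)
    (β : Ω → ℝ≥0∞) (hβ : Measurable β) :
    ∑' x : Fin d → ℤ, ∫⁻ ω, V (⇑T '' Box d) (T (ι x) + g0 ω) * β ω ∂ℙ = ∫⁻ ω, β ω ∂ℙ := by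
  have hmx : ∀ x : Fin d → ℤ, Measurable fun ω => V (⇑T '' Box d) (T (ι x) + g0 ω) * β ω :=
    fun x => ((measurable_V (measurableSet_D T)).comp (measurable_const.add hg0)).mul hβ
  rw [← lintegral_tsum (fun x => (hmx x).aemeasurable)]
  refine lintegral_congr fun ω => ?_
  rw [ENNReal.tsum_mul_right]
  have h1 : ∑' x : Fin d → ℤ, V (⇑T '' Box d) (T (ι x) + g0 ω) = 1 := tiling T hT (g0 ω)
  rw [h1, one_mul]

end RSFMM

/-- Identification of the reduced second factorial moment measure of a
perturbed lattice: for every Borel set `B`,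
`E[ ∑_{x ≠ y} 1{Tx + p_x + U ∈ D} 1{(Ty + p_y) − (Tx + p_x) ∈ B} ]
  = E[ ∑_{y ≠ 0} 1{Ty + p_y − p_0 ∈ B} ]` in `[0,∞]`. -/
theorem reduced_second_factorial_moment_measure_of_perturbed_lattice
    (d : ℕ) (hd : 1 ≤ d)
    (T : EuclideanSpace ℝ (Fin d) ≃ₗ[ℝ] EuclideanSpace ℝ (Fin d))
    (hT : |LinearMap.det (T : EuclideanSpace ℝ (Fin d) →ₗ[ℝ] EuclideanSpace ℝ (Fin d))| = 1)
    {Ω : Type} [MeasureSpace Ω] [IsProbabilityMeasure (ℙ : Measure Ω)]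
    (p : (Fin d → ℤ) → Ω → EuclideanSpace ℝ (Fin d))
    (hpm : ∀ x, Measurable (p x))
    (hinv : ∀ z : Fin d → ℤ,
      Measure.map (fun ω => fun x => p (x + z) ω) (ℙ : Measure Ω)
        = Measure.map (fun ω => fun x => p x ω) (ℙ : Measure Ω))
    (U : Ω → EuclideanSpace ℝ (Fin d)) (hUm : Measurable U)
    (hU : Measure.map U (ℙ : Measure Ω)
        = volume.restrict
            (⇑T '' (WithLp.ofLp ⁻¹' (Set.univ.pi fun _ : Fin d => Set.Ico (0:ℝ) 1) :
              Set (EuclideanSpace ℝ (Fin d)))))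
    (hUindep : IndepFun U (fun ω => fun x => p x ω) (ℙ : Measure Ω))
    (B : Set (EuclideanSpace ℝ (Fin d))) (hB : MeasurableSet B) :
    (∫⁻ ω, ∑' q : (Fin d → ℤ) × (Fin d → ℤ),
        (if q.1 ≠ q.2 then
          ((⇑T '' (WithLp.ofLp ⁻¹' (Set.univ.pi fun _ : Fin d => Set.Ico (0:ℝ) 1) :
              Set (EuclideanSpace ℝ (Fin d)))).indicator (fun _ => (1 : ℝ≥0∞))
            (T (WithLp.toLp 2 (fun i => (q.1 i : ℝ)) : EuclideanSpace ℝ (Fin d)) + p q.1 ω + U ω)) *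
          (B.indicator (fun _ => (1 : ℝ≥0∞))
            ((T (WithLp.toLp 2 (fun i => (q.2 i : ℝ)) : EuclideanSpace ℝ (Fin d)) + p q.2 ω)
              - (T (WithLp.toLp 2 (fun i => (q.1 i : ℝ)) : EuclideanSpace ℝ (Fin d)) + p q.1 ω)))
         else 0) ∂ℙ)
    = ∫⁻ ω, ∑' y : Fin d → ℤ,
        (if y ≠ 0 then
          B.indicator (fun _ => (1 : ℝ≥0∞))
            (T (WithLp.toLp 2 (fun i => (y i : ℝ)) : EuclideanSpace ℝ (Fin d)) + p y ω - p 0 ω)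
         else 0) ∂ℙ := by
  have hD : MeasurableSet (⇑T '' RSFMM.Box d) := RSFMM.measurableSet_D T
  let D : Set (EuclideanSpace ℝ (Fin d)) := ⇑T '' RSFMM.Box d
  let F : (Fin d → ℤ) × (Fin d → ℤ) → Ω → ℝ≥0∞ := fun q ω =>
    if q.1 ≠ q.2 then
      (D.indicator (fun _ => (1 : ℝ≥0∞)) (T (RSFMM.ι q.1) + p q.1 ω + U ω)) *
      (B.indicator (fun _ => (1 : ℝ≥0∞))
        ((T (RSFMM.ι q.2) + p q.2 ω) - (T (RSFMM.ι q.1) + p q.1 ω)))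
    else 0
  let G : (Fin d → ℤ) → Ω → ℝ≥0∞ := fun y ω =>
    if y ≠ 0 then
      B.indicator (fun _ => (1 : ℝ≥0∞)) (T (RSFMM.ι y) + p y ω - p 0 ω)
    else 0
  show (∫⁻ ω, ∑' q : (Fin d → ℤ) × (Fin d → ℤ), F q ω ∂ℙ) = ∫⁻ ω, ∑' y : Fin d → ℤ, G y ω ∂ℙ
  have hFm : ∀ q : (Fin d → ℤ) × (Fin d → ℤ), Measurable (F q) := by
    intro q
    show Measurable fun ω => if q.1 ≠ q.2 then _ * _ else 0
    split_ifs with h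
    · exact ((measurable_const.indicator hD).comp
        ((measurable_const.add (hpm q.1)).add hUm)).mul
        ((measurable_const.indicator hB).comp
          ((measurable_const.add (hpm q.2)).sub (measurable_const.add (hpm q.1))))
    · exact measurable_const
  have hGm : ∀ y : Fin d → ℤ, Measurable (G y) := by
    intro y
    show Measurable fun ω => if y ≠ 0 then _ else 0
    split_ifs with h
    · exact (measurable_const.indicator hB).comp
        ((measurable_const.add (hpm y)).sub (hpm 0))
    · exact measurable_const
  rw [lintegral_tsum (fun q => (hFm q).aemeasurable),
    lintegral_tsum (fun y => (hGm y).aemeasurable)]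
  let e : ((Fin d → ℤ) × (Fin d → ℤ)) ≃ ((Fin d → ℤ) × (Fin d → ℤ)) :=
    { toFun := fun q => (q.1, q.1 + q.2)
      invFun := fun q => (q.1, q.2 - q.1)
      left_inv := fun q => by simp
      right_inv := fun q => by simp }
  rw [← Equiv.tsum_eq e (fun q => ∫⁻ ω, F q ω ∂ℙ)]
  calc ∑' q : (Fin d → ℤ) × (Fin d → ℤ), ∫⁻ ω, F (e q) ω ∂ℙ
      = ∑' (x : Fin d → ℤ) (z : Fin d → ℤ), ∫⁻ ω, F (x, x + z) ω ∂ℙ := ENNReal.tsum_prod (f := fun x z => ∫⁻ ω, F (x, x + z) ω ∂ℙ)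
    _ = ∑' (z : Fin d → ℤ) (x : Fin d → ℤ), ∫⁻ ω, F (x, x + z) ω ∂ℙ := ENNReal.tsum_comm (f := fun x z => ∫⁻ ω, F (x, x + z) ω ∂ℙ)
    _ = ∑' z : Fin d → ℤ, ∫⁻ ω, G z ω ∂ℙ := by
        refine tsum_congr fun z => ?_
        by_cases hz : z = 0
        · subst hz
          have h0 : ∀ x : Fin d → ℤ, (∫⁻ ω, F (x, x + 0) ω ∂ℙ) = 0 := by
            intro x
            have hFx : F (x, x + 0) = fun _ => 0 := funext fun ω => if_neg (by simp)
            rw [hFx, lintegral_zero]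
          have hG0 : (∫⁻ ω, G 0 ω ∂ℙ) = 0 := by
            have hGx : G 0 = fun _ => 0 := funext fun ω => if_neg (by simp)
            rw [hGx, lintegral_zero]
          rw [hG0]
          exact (tsum_congr h0).trans tsum_zero
        · have hne : ∀ x : Fin d → ℤ, x ≠ x + z := by
            intro x h
            exact hz (left_eq_add.mp h)
          calc ∑' x : Fin d → ℤ, ∫⁻ ω, F (x, x + z) ω ∂ℙ
              = ∑' x : Fin d → ℤ, ∫⁻ ω, RSFMM.V D (T (RSFMM.ι x) + p 0 ω) *
                  B.indicator (fun _ => (1 : ℝ≥0∞)) (T (RSFMM.ι z) + p z ω - p 0 ω) ∂ℙ := by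
                refine tsum_congr fun x => ?_
                have hFx : F (x, x + z) = fun ω =>
                    (D.indicator (fun _ => (1 : ℝ≥0∞)) (T (RSFMM.ι x) + p x ω + U ω)) *
                    (B.indicator (fun _ => (1 : ℝ≥0∞))
                      ((T (RSFMM.ι (x + z)) + p (x + z) ω) - (T (RSFMM.ι x) + p x ω))) :=
                  funext fun ω => if_pos (hne x)
                rw [hFx]
                exact RSFMM.key_term T p hpm hinv U hUm hU hUindep B hB x z
            _ = ∫⁻ ω, B.indicator (fun _ => (1 : ℝ≥0∞)) (T (RSFMM.ι z) + p z ω - p 0 ω) ∂ℙ :=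
                RSFMM.sum_key T hT (p 0) (hpm 0) _
                  ((measurable_const.indicator hB).comp
                    ((measurable_const.add (hpm z)).sub (hpm 0)))
            _ = ∫⁻ ω, G z ω ∂ℙ := lintegral_congr fun ω => (if_pos hz).symm
end

section
/- Let d ≥ 1 and let T : ℝ^d → ℝ^d be an invertible linear map with |det T| = 1. There is a constant C > 0, depending only on d and T, with the following property: for every m ≥ 1, every continuous function f : ℝ^d → ℝ with support contained in the ball B_m, every M ≥ 10 m, and every ℤ^d-invariant family of perturbations (p_x)_{x∈ℤ^d}, one has E[ ∑_{x ∈ ℤ^d, |T x| ≥ M} |f(T x + p_x − p_0)| ] ≤ C · (sup |f|) · E[ |p_0|^d · 1{|p_0| ≥ M/4} ] (an inequality in [0,∞]). -/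
open MeasureTheory ProbabilityTheory Filter Set Metric
open scoped ENNReal

set_option maxHeartbeats 1000000 in
/-- Remainder estimate: there is a constant `C > 0` depending only on `d` and
the lattice `T(ℤ^d)` such that for every `m ≥ 1`, every continuous `f` supported in `B_m`,
every `M ≥ 10 m` and every ℤ^d-invariant family of perturbations,
`E[ ∑_{|Tx| ≥ M} |f(Tx + p_x − p_0)| ] ≤ C ⋅ sup|f| ⋅ E[|p_0|^d 1{|p_0| ≥ M/4}]`. -/
theorem remainder_estimate_for_reduced_moment_measure
    (d : ℕ) (hd : 1 ≤ d)
    (T : EuclideanSpace ℝ (Fin d) ≃ₗ[ℝ] EuclideanSpace ℝ (Fin d))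
    (hT : |LinearMap.det (T : EuclideanSpace ℝ (Fin d) →ₗ[ℝ] EuclideanSpace ℝ (Fin d))| = 1) :
    ∃ C : ℝ, 0 < C ∧
      ∀ (m : ℝ), 1 ≤ m →
      ∀ f : EuclideanSpace ℝ (Fin d) → ℝ, Continuous f →
        (∀ t, t ∉ closedBall (0 : EuclideanSpace ℝ (Fin d)) m → f t = 0) →
      ∀ (M : ℝ), 10 * m ≤ M →
      ∀ (Ω : Type) (_ : MeasureSpace Ω), IsProbabilityMeasure (ℙ : Measure Ω) →
      ∀ p : (Fin d → ℤ) → Ω → EuclideanSpace ℝ (Fin d), (∀ x, Measurable (p x)) →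
        (∀ z : Fin d → ℤ,
          Measure.map (fun ω => fun x => p (x + z) ω) (ℙ : Measure Ω)
            = Measure.map (fun ω => fun x => p x ω) (ℙ : Measure Ω)) →
        (∫⁻ ω, ∑' x : Fin d → ℤ,
            (if M ≤ ‖T (WithLp.toLp 2 (fun i => (x i : ℝ)) : EuclideanSpace ℝ (Fin d))‖ then
              (‖f (T (WithLp.toLp 2 (fun i => (x i : ℝ)) : EuclideanSpace ℝ (Fin d)) + p x ω - p 0 ω)‖₊ : ℝ≥0∞)
             else 0) ∂ℙ)
          ≤ ENNReal.ofReal C * (⨆ t, (‖f t‖₊ : ℝ≥0∞)) *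
              ∫⁻ ω, (if M / 4 ≤ ‖p 0 ω‖ then (‖p 0 ω‖₊ : ℝ≥0∞) ^ d else 0) ∂ℙ := by
  classical
  set E := EuclideanSpace ℝ (Fin d) with hE
  set c : ℝ := ‖LinearMap.toContinuousLinearMap (T.symm : E →ₗ[ℝ] E)‖ with hcdef
  have hc0 : 0 ≤ c := norm_nonneg _
  have hK1 : (0:ℝ) < 6 * c + 1 := by linarith
  refine ⟨2 * (6 * c + 1) ^ d, mul_pos two_pos (pow_pos hK1 d), ?_⟩
  intro m hm f hf hsupp M hM Ω _ hprob p hp hstat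
  -- basic numerology
  have hm0 : (0:ℝ) < m := by linarith
  have hM0 : (0:ℝ) < M := by linarith
  -- abbreviations
  set e : (Fin d → ℤ) → E := fun x => (WithLp.toLp 2 (fun i => (x i : ℝ)) : E) with hedef
  set a : (Fin d → ℤ) → ℝ := fun x => ‖T (e x)‖ with hadef
  set S : ℝ≥0∞ := ⨆ t, (‖f t‖₊ : ℝ≥0∞) with hSdef
  set r : (Fin d → ℤ) → ℝ := fun x => (a x - m) / 2 with hrdef
  set F : ℝ → E → ℝ≥0∞ := fun ρ v => if ρ ≤ ‖v‖ then 1 else 0 with hFdef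
  set G : (Fin d → ℤ) → Ω → ℝ≥0∞ := fun x ω =>
    if M ≤ a x then (‖f (T (e x) + p x ω - p 0 ω)‖₊ : ℝ≥0∞) else 0 with hGdef
  set H : (Fin d → ℤ) → Ω → ℝ≥0∞ := fun x ω =>
    (if M ≤ a x then (1:ℝ≥0∞) else 0) * F (r x) (p 0 ω) with hHdef
  have hFmeas : ∀ ρ, Measurable (F ρ) := by
    intro ρ
    exact Measurable.ite (isClosed_le continuous_const continuous_norm).measurableSet
      measurable_const measurable_const
  have hGmeas : ∀ x, Measurable (G x) := by
    intro x
    by_cases h : M ≤ a x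
    · simp only [hGdef, if_pos h]
      have hmv : Measurable (fun ω => T (e x) + p x ω - p 0 ω) :=
        (measurable_const.add (hp x)).sub (hp 0)
      exact Measurable.coe_nnreal_ennreal (Measurable.nnnorm (hf.measurable.comp hmv))
    · simp only [hGdef, if_neg h]; exact measurable_const
  have hHmeas : ∀ x, Measurable (H x) := fun x => ((hFmeas (r x)).comp (hp 0)).const_mul _
  -- equality of laws
  have hm0' : Measurable (fun ω => fun x => p x ω) := measurable_pi_lambda _ hp
  have hlaw : ∀ z : Fin d → ℤ, Measure.map (p z) ℙ = Measure.map (p 0) ℙ := by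
    intro z
    have hmz : Measurable (fun ω => fun x => p (x + z) ω) :=
      measurable_pi_lambda _ (fun x => hp (x + z))
    have h1 : p z = (fun q : (Fin d → ℤ) → E => q 0) ∘ (fun ω => fun x => p (x + z) ω) := by
      funext ω; simp
    have h2 : p 0 = (fun q : (Fin d → ℤ) → E => q 0) ∘ (fun ω => fun x => p x ω) := rfl
    rw [h1, h2, ← Measure.map_map (measurable_pi_apply 0) hmz, hstat z,
      Measure.map_map (measurable_pi_apply 0) hm0']
  have hint : ∀ (z : Fin d → ℤ) (ρ : ℝ),
      ∫⁻ ω, F ρ (p z ω) ∂ℙ = ∫⁻ ω, F ρ (p 0 ω) ∂ℙ := by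
    intro z ρ
    rw [← lintegral_map (hFmeas ρ) (hp z), hlaw z, lintegral_map (hFmeas ρ) (hp 0)]
  -- norm facts
  have hEx : ∀ v : E, ‖v‖ ≤ c * ‖T v‖ := by
    intro v
    have h1 : LinearMap.toContinuousLinearMap (T.symm : E →ₗ[ℝ] E) (T v) = v := by
      simp
    calc ‖v‖ = ‖LinearMap.toContinuousLinearMap (T.symm : E →ₗ[ℝ] E) (T v)‖ := by rw [h1]
      _ ≤ c * ‖T v‖ := (LinearMap.toContinuousLinearMap (T.symm : E →ₗ[ℝ] E)).le_opNorm _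
  have hcoord : ∀ (x : Fin d → ℤ) (i : Fin d), |(x i : ℝ)| ≤ ‖e x‖ := by
    intro x i
    have h1 : ‖e x‖ = Real.sqrt (∑ j, ‖(e x) j‖ ^ 2) := EuclideanSpace.norm_eq (e x)
    have h2 : ‖(e x) i‖ ^ 2 ≤ ∑ j, ‖(e x) j‖ ^ 2 :=
      Finset.single_le_sum (f := fun j => ‖(e x) j‖ ^ 2)
        (fun j _ => sq_nonneg _) (Finset.mem_univ i)
    have h3 : |(x i : ℝ)| = Real.sqrt (‖(e x) i‖ ^ 2) := by
      rw [Real.sqrt_sq_eq_abs]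
      simp [hedef]
    rw [h1, h3]
    exact Real.sqrt_le_sqrt h2
  -- Step: per-x bound
  have key : ∀ x, ∫⁻ ω, G x ω ∂ℙ ≤ 2 * S * ∫⁻ ω, H x ω ∂ℙ := by
    intro x
    by_cases hax : M ≤ a x
    · have hpoint : ∀ ω, G x ω ≤ S * F (r x) (p x ω) + S * F (r x) (p 0 ω) := by
        intro ω
        simp only [hGdef, if_pos hax]
        by_cases h1 : r x ≤ ‖p x ω‖
        · calc (‖f (T (e x) + p x ω - p 0 ω)‖₊ : ℝ≥0∞) ≤ S :=
                le_iSup (fun t => (‖f t‖₊ : ℝ≥0∞)) _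
            _ ≤ S * F (r x) (p x ω) + S * F (r x) (p 0 ω) := by
                simp only [hFdef, if_pos h1, mul_one]; exact le_self_add
        · by_cases h2 : r x ≤ ‖p 0 ω‖
          · calc (‖f (T (e x) + p x ω - p 0 ω)‖₊ : ℝ≥0∞) ≤ S :=
                  le_iSup (fun t => (‖f t‖₊ : ℝ≥0∞)) _
              _ ≤ S * F (r x) (p x ω) + S * F (r x) (p 0 ω) := by
                  simp only [hFdef, if_pos h2, mul_one]; exact le_add_self
          · have hfz : f (T (e x) + p x ω - p 0 ω) = 0 := by
              apply hsupp
              intro hmem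
              rw [mem_closedBall, dist_zero_right] at hmem
              push_neg at h1 h2
              have hd1 : ‖p x ω - p 0 ω‖ ≤ ‖p x ω‖ + ‖p 0 ω‖ := norm_sub_le _ _
              have hd2 : a x ≤ ‖T (e x) + p x ω - p 0 ω‖ + ‖p x ω - p 0 ω‖ := by
                have : T (e x) = (T (e x) + p x ω - p 0 ω) - (p x ω - p 0 ω) := by abel
                calc a x = ‖(T (e x) + p x ω - p 0 ω) - (p x ω - p 0 ω)‖ := by
                      rw [hadef]; exact congrArg norm this
                  _ ≤ _ := norm_sub_le _ _
              have hr : r x = (a x - m) / 2 := rfl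
              have : (10:ℝ) * m ≤ a x := le_trans hM hax
              nlinarith
            simp [hfz]
      calc ∫⁻ ω, G x ω ∂ℙ ≤ ∫⁻ ω, (S * F (r x) (p x ω) + S * F (r x) (p 0 ω)) ∂ℙ :=
            lintegral_mono hpoint
        _ = S * ∫⁻ ω, F (r x) (p x ω) ∂ℙ + S * ∫⁻ ω, F (r x) (p 0 ω) ∂ℙ := by
            have h1 : Measurable (fun ω => F (r x) (p x ω)) := (hFmeas (r x)).comp (hp x)
            have h2 : Measurable (fun ω => F (r x) (p 0 ω)) := (hFmeas (r x)).comp (hp 0)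
            rw [lintegral_add_left (h1.const_mul S),
              lintegral_const_mul S h1, lintegral_const_mul S h2]
        _ = 2 * S * ∫⁻ ω, F (r x) (p 0 ω) ∂ℙ := by
            rw [hint x (r x)]; ring
        _ = 2 * S * ∫⁻ ω, H x ω ∂ℙ := by
            simp only [hHdef, if_pos hax, one_mul]
    · have : ∀ ω, G x ω = 0 := by intro ω; simp [hGdef, if_neg hax]
      simp [this]
  -- Step: counting bound
  have count : ∀ ω, (∑' x : Fin d → ℤ, H x ω) ≤
      ENNReal.ofReal ((6 * c + 1) ^ d) *
        (if M / 4 ≤ ‖p 0 ω‖ then (‖p 0 ω‖₊ : ℝ≥0∞) ^ d else 0) := by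
    intro ω
    set R := ‖p 0 ω‖ with hRdef
    have hR0 : 0 ≤ R := norm_nonneg _
    by_cases hR : M / 4 ≤ R
    · rw [if_pos hR]
      have hR1 : (1:ℝ) ≤ R := by linarith
      set N : ℤ := ⌊3 * c * R⌋ with hNdef
      have hN0 : 0 ≤ N := Int.floor_nonneg.2 (by positivity)
      set s : Finset (Fin d → ℤ) := Fintype.piFinset (fun _ => Finset.Icc (-N) N) with hsdef
      have hterm : ∀ x, H x ω ≤ (if x ∈ s then 1 else 0) := by
        intro x
        by_cases hax : M ≤ a x
        · by_cases hrx : r x ≤ R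
          · have hxs : x ∈ s := by
              rw [hsdef, Fintype.mem_piFinset]
              intro i
              have h1 : a x ≤ 2 * R + m := by
                have : r x = (a x - m) / 2 := rfl
                linarith [hrx.trans_eq rfl]
              have hmR : m ≤ R := by linarith
              have h2 : a x ≤ 3 * R := by linarith
              have h3 : ‖e x‖ ≤ c * (3 * R) :=
                le_trans (hEx (e x)) (by
                  have := mul_le_mul_of_nonneg_left h2 hc0
                  simpa [hadef] using this)
              have h4 : |(x i : ℝ)| ≤ 3 * c * R := by
                have := (hcoord x i).trans h3
                linarith [this]
              rw [Finset.mem_Icc]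
              constructor
              · rw [neg_le]
                exact Int.le_floor.2 (by push_cast; linarith [abs_le.1 h4])
              · exact Int.le_floor.2 (by push_cast; linarith [abs_le.1 h4])
            simp only [hHdef, hFdef, if_pos hax, if_pos hrx, if_pos (show r x ≤ ‖p 0 ω‖ from hrx), if_pos hxs, one_mul, le_refl]
          · simp [hHdef, hFdef, if_neg hrx, if_neg (show ¬ r x ≤ ‖p 0 ω‖ from hrx)]
        · simp [hHdef, if_neg hax]
      calc (∑' x : Fin d → ℤ, H x ω) ≤ ∑' x : Fin d → ℤ, (if x ∈ s then (1:ℝ≥0∞) else 0) :=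
            ENNReal.tsum_le_tsum hterm
        _ = ∑ x ∈ s, (1:ℝ≥0∞) :=
            (tsum_eq_sum (fun x hx => if_neg hx)).trans
              (Finset.sum_congr rfl (fun x hx => if_pos hx))
        _ = (s.card : ℝ≥0∞) := by simp
        _ ≤ ENNReal.ofReal ((6 * c + 1) ^ d) * (‖p 0 ω‖₊ : ℝ≥0∞) ^ d := by
            have hcard : s.card = (2 * N + 1).toNat ^ d := by
              rw [hsdef, Fintype.card_piFinset]
              simp [Int.card_Icc]
              congr 1
              omega
            have hreal : ((s.card : ℕ) : ℝ) ≤ ((6 * c + 1) * R) ^ d := by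
              rw [hcard]
              push_cast
              have hNle : (N : ℝ) ≤ 3 * c * R := Int.floor_le _
              have h0 : (0:ℤ) ≤ 2 * N + 1 := by linarith
              have h1 : ((2 * N + 1).toNat : ℝ) = 2 * (N:ℝ) + 1 := by
                have h2 := Int.toNat_of_nonneg h0
                have h3 : (((2 * N + 1).toNat : ℤ) : ℝ) = ((2 * N + 1 : ℤ) : ℝ) := by
                  exact_mod_cast congrArg (fun z : ℤ => (z : ℝ)) h2
                push_cast at h3
                linarith
              rw [h1]
              apply pow_le_pow_left₀ (by positivity)
              nlinarith
            calc (s.card : ℝ≥0∞) = ENNReal.ofReal (s.card : ℝ) := by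
                  rw [ENNReal.ofReal_natCast]
              _ ≤ ENNReal.ofReal (((6 * c + 1) * R) ^ d) := ENNReal.ofReal_le_ofReal hreal
              _ = ENNReal.ofReal ((6 * c + 1) ^ d) * (‖p 0 ω‖₊ : ℝ≥0∞) ^ d := by
                  rw [mul_pow, ENNReal.ofReal_mul (by positivity), ENNReal.ofReal_pow hR0,
                    hRdef, ofReal_norm, enorm_eq_nnnorm]
    · rw [if_neg hR, mul_zero]
      have : ∀ x, H x ω = 0 := by
        intro x
        by_cases hax : M ≤ a x
        · by_cases hrx : r x ≤ R
          · exfalso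
            apply hR
            have : r x = (a x - m) / 2 := rfl
            have h10 : (10:ℝ) * m ≤ a x := le_trans hM hax
            have hMa : M ≤ a x := hax
            nlinarith
          · simp [hHdef, hFdef, if_neg hrx, if_neg (show ¬ r x ≤ ‖p 0 ω‖ from hrx)]
        · simp [hHdef, if_neg hax]
      simp [this]
  -- measurability of the RHS integrand
  have hJ : Measurable (fun ω => (if M / 4 ≤ ‖p 0 ω‖ then (‖p 0 ω‖₊ : ℝ≥0∞) ^ d else 0)) := by
    have hJ0 : Measurable (fun v : E => (if M / 4 ≤ ‖v‖ then (‖v‖₊ : ℝ≥0∞) ^ d else 0)) := by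
      exact Measurable.ite (isClosed_le continuous_const continuous_norm).measurableSet
        ((measurable_coe_nnreal_ennreal.comp measurable_nnnorm).pow_const d) measurable_const
    exact hJ0.comp (hp 0)
  -- assembly
  calc (∫⁻ ω, ∑' x : Fin d → ℤ,
            (if M ≤ ‖T (WithLp.toLp 2 (fun i => (x i : ℝ)) : EuclideanSpace ℝ (Fin d))‖ then
              (‖f (T (WithLp.toLp 2 (fun i => (x i : ℝ)) : EuclideanSpace ℝ (Fin d)) + p x ω - p 0 ω)‖₊ : ℝ≥0∞)
             else 0) ∂ℙ)
      = ∑' x : Fin d → ℤ, ∫⁻ ω, G x ω ∂ℙ := by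
        rw [lintegral_tsum (fun x => (hGmeas x).aemeasurable)]
    _ ≤ ∑' x : Fin d → ℤ, 2 * S * ∫⁻ ω, H x ω ∂ℙ := ENNReal.tsum_le_tsum key
    _ = 2 * S * ∑' x : Fin d → ℤ, ∫⁻ ω, H x ω ∂ℙ := ENNReal.tsum_mul_left
    _ = 2 * S * ∫⁻ ω, ∑' x : Fin d → ℤ, H x ω ∂ℙ := by
        rw [lintegral_tsum (fun x => (hHmeas x).aemeasurable)]
    _ ≤ 2 * S * (ENNReal.ofReal ((6 * c + 1) ^ d) *
          ∫⁻ ω, (if M / 4 ≤ ‖p 0 ω‖ then (‖p 0 ω‖₊ : ℝ≥0∞) ^ d else 0) ∂ℙ) := by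
        apply mul_le_mul_right
        calc ∫⁻ ω, ∑' x : Fin d → ℤ, H x ω ∂ℙ
            ≤ ∫⁻ ω, ENNReal.ofReal ((6 * c + 1) ^ d) *
                (if M / 4 ≤ ‖p 0 ω‖ then (‖p 0 ω‖₊ : ℝ≥0∞) ^ d else 0) ∂ℙ :=
              lintegral_mono count
          _ = ENNReal.ofReal ((6 * c + 1) ^ d) *
                ∫⁻ ω, (if M / 4 ≤ ‖p 0 ω‖ then (‖p 0 ω‖₊ : ℝ≥0∞) ^ d else 0) ∂ℙ :=
              lintegral_const_mul _ hJ
    _ = ENNReal.ofReal (2 * (6 * c + 1) ^ d) * S *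
          ∫⁻ ω, (if M / 4 ≤ ‖p 0 ω‖ then (‖p 0 ω‖₊ : ℝ≥0∞) ^ d else 0) ∂ℙ := by
        rw [ENNReal.ofReal_mul (by norm_num), ENNReal.ofReal_ofNat]
        ring
end

section
/- Let ρ be a finite Borel measure on ℝ². Then the series ∑_{n=0}^∞ ( 2^{−n} · ∫_{{ω : 2^{−n} ≤ |ω| ≤ 1}} |ω|^{−1} dρ(ω) + 4^{n} · ∫_{{ω : |ω| ≤ 2^{−n}}} |ω|² dρ(ω) ) converges (is finite). -/
open MeasureTheory Filter Set
open scoped ENNReal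

private lemma hpow2 (n : ℕ) : (2:ℝ) ^ (-(n:ℤ)) = (2⁻¹:ℝ) ^ n := by
  rw [zpow_neg, zpow_natCast, inv_pow]

private lemma geom_sum_le_ennreal (x : ℝ≥0∞) (hx : 2 ≤ x) :
    ∀ M : ℕ, ∑ n ∈ Finset.range M, x ^ n ≤ x ^ M := by
  intro M
  induction M with
  | zero => simp
  | succ M ih =>
      rw [Finset.sum_range_succ, pow_succ]
      calc ∑ n ∈ Finset.range M, x ^ n + x ^ M ≤ x ^ M + x ^ M := by
            exact add_le_add_left ih _
        _ = x ^ M * 2 := by ring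
        _ ≤ x ^ M * x := mul_le_mul_right hx _

private lemma auxA (r : ℝ) :
    (∑' n : ℕ, (if (2:ℝ) ^ (-(n:ℤ)) ≤ r ∧ r ≤ 1 then
        (2:ℝ≥0∞)⁻¹ ^ n * ENNReal.ofReal r⁻¹ else 0)) ≤ 2 := by
  rcases le_or_gt r 0 with hr | hr
  · have h : ∀ n : ℕ, ¬((2:ℝ) ^ (-(n:ℤ)) ≤ r ∧ r ≤ 1) := by
      intro n h
      have h2 : (0:ℝ) < 2 ^ (-(n:ℤ)) := by positivity
      linarith [h.1]
    rw [tsum_congr fun n => if_neg (h n)]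
    simp
  · have hex : ∃ n : ℕ, (2:ℝ) ^ (-(n:ℤ)) ≤ r := by
      obtain ⟨n, hn⟩ := exists_pow_lt_of_lt_one hr (by norm_num : (2⁻¹:ℝ) < 1)
      exact ⟨n, by rw [hpow2]; exact hn.le⟩
    obtain ⟨N, hN, hNmin⟩ : ∃ N : ℕ, (2:ℝ) ^ (-(N:ℤ)) ≤ r ∧
        ∀ n : ℕ, (2:ℝ) ^ (-(n:ℤ)) ≤ r → N ≤ n :=
      ⟨Nat.find hex, Nat.find_spec hex, fun n hn => Nat.find_min' hex hn⟩
    set C : ℝ≥0∞ := ENNReal.ofReal r⁻¹ with hC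
    set g : ℕ → ℝ≥0∞ := fun n => if N ≤ n then (2:ℝ≥0∞)⁻¹ ^ n * C else 0 with hg
    have hle : (∑' n : ℕ, (if (2:ℝ) ^ (-(n:ℤ)) ≤ r ∧ r ≤ 1 then
        (2:ℝ≥0∞)⁻¹ ^ n * ENNReal.ofReal r⁻¹ else 0)) ≤ ∑' n, g n := by
      refine ENNReal.tsum_le_tsum fun n => ?_
      simp only [hg]
      split_ifs with h1 h2
      · exact le_rfl
      · exact absurd (hNmin _ h1.1) h2
      · exact zero_le
      · exact le_rfl
    refine hle.trans ?_
    have hzero : ∑ n ∈ Finset.range N, g n = 0 := by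
      refine Finset.sum_eq_zero fun n hn => ?_
      simp only [hg, if_neg (Nat.not_le.mpr (Finset.mem_range.mp hn))]
    have hsum : ∑' n, g n = ∑' n, g (n + N) := by
      rw [← Summable.sum_add_tsum_nat_add' (f := g) (k := N) ENNReal.summable, hzero, zero_add]
    rw [hsum]
    have hgN : ∀ n : ℕ, g (n + N) = (2:ℝ≥0∞)⁻¹ ^ n * ((2:ℝ≥0∞)⁻¹ ^ N * C) := by
      intro n
      simp only [hg, if_pos (Nat.le_add_left N n), pow_add, mul_assoc]
    rw [tsum_congr hgN, ENNReal.tsum_mul_right, ENNReal.tsum_geometric,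
      ENNReal.one_sub_inv_two, inv_inv]
    have hNC : (2:ℝ≥0∞)⁻¹ ^ N * C ≤ 1 := by
      have h1 : (2:ℝ≥0∞)⁻¹ ^ N = ENNReal.ofReal ((2⁻¹:ℝ) ^ N) := by
        rw [ENNReal.ofReal_pow (by norm_num)]
        congr 1
        rw [ENNReal.ofReal_inv_of_pos (by norm_num), ENNReal.ofReal_ofNat]
      rw [h1, hC, ← ENNReal.ofReal_mul (by positivity)]
      calc ENNReal.ofReal ((2⁻¹:ℝ) ^ N * r⁻¹) ≤ ENNReal.ofReal (r * r⁻¹) := by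
            apply ENNReal.ofReal_le_ofReal
            have : (2⁻¹:ℝ) ^ N ≤ r := by rw [← hpow2]; exact hN
            exact mul_le_mul_of_nonneg_right this (by positivity)
        _ = 1 := by rw [mul_inv_cancel₀ (ne_of_gt hr), ENNReal.ofReal_one]
    calc (2:ℝ≥0∞) * ((2:ℝ≥0∞)⁻¹ ^ N * C) ≤ 2 * 1 := mul_le_mul_right hNC 2
      _ = 2 := mul_one 2

private lemma auxB (r : ℝ) (hr0 : 0 ≤ r) :
    (∑' n : ℕ, (if r ≤ (2:ℝ) ^ (-(n:ℤ)) then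
        (4:ℝ≥0∞) ^ n * ENNReal.ofReal (r ^ 2) else 0)) ≤ 4 := by
  rcases eq_or_lt_of_le hr0 with h0 | hr
  · simp [← h0]
  · have hex : ∃ n : ℕ, ¬(r ≤ (2:ℝ) ^ (-(n:ℤ))) := by
      obtain ⟨n, hn⟩ := exists_pow_lt_of_lt_one hr (by norm_num : (2⁻¹:ℝ) < 1)
      exact ⟨n, by rw [hpow2]; exact not_le.mpr hn⟩
    obtain ⟨M, hMspec, hMmin⟩ : ∃ M : ℕ, ¬(r ≤ (2:ℝ) ^ (-(M:ℤ))) ∧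
        ∀ n < M, r ≤ (2:ℝ) ^ (-(n:ℤ)) :=
      ⟨Nat.find hex, Nat.find_spec hex, fun n hn => not_not.mp (Nat.find_min hex hn)⟩
    have hsupp : ∀ n ∉ Finset.range M, (if r ≤ (2:ℝ) ^ (-(n:ℤ)) then
        (4:ℝ≥0∞) ^ n * ENNReal.ofReal (r ^ 2) else 0) = 0 := by
      intro n hn
      have hMn : M ≤ n := Nat.not_lt.mp (fun h => hn (Finset.mem_range.mpr h))
      have hmono : (2:ℝ) ^ (-(n:ℤ)) ≤ (2:ℝ) ^ (-(M:ℤ)) := by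
        rw [hpow2, hpow2]
        exact pow_le_pow_of_le_one (by norm_num) (by norm_num) hMn
      rw [if_neg (fun h => hMspec (h.trans hmono))]
    rw [tsum_eq_sum hsupp]
    rcases Nat.eq_zero_or_pos M with hM0 | hMpos
    · rw [hM0]; simp
    obtain ⟨k, rfl⟩ : ∃ k, M = k + 1 := ⟨M - 1, (Nat.succ_pred_eq_of_pos hMpos).symm⟩
    have hk : r ≤ (2:ℝ) ^ (-(k:ℤ)) := hMmin k (Nat.lt_succ_self k)
    calc ∑ n ∈ Finset.range (k + 1), (if r ≤ (2:ℝ) ^ (-(n:ℤ)) then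
            (4:ℝ≥0∞) ^ n * ENNReal.ofReal (r ^ 2) else 0)
        ≤ ∑ n ∈ Finset.range (k + 1), (4:ℝ≥0∞) ^ n * ENNReal.ofReal (r ^ 2) := by
          refine Finset.sum_le_sum fun n _ => ?_
          split_ifs
          · exact le_rfl
          · exact zero_le
      _ = (∑ n ∈ Finset.range (k + 1), (4:ℝ≥0∞) ^ n) * ENNReal.ofReal (r ^ 2) := by
          rw [Finset.sum_mul]
      _ ≤ (4:ℝ≥0∞) ^ (k + 1) * ENNReal.ofReal (r ^ 2) := by
          exact mul_le_mul_left (geom_sum_le_ennreal 4 (by norm_num) (k + 1)) _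
      _ ≤ 4 := by
          have hr2 : (4:ℝ) ^ k * r ^ 2 ≤ 1 := by
            have h1 : r ^ 2 ≤ ((2⁻¹:ℝ) ^ k) ^ 2 := by
              have := hk
              rw [hpow2] at this
              exact pow_le_pow_left₀ hr0 this 2
            have h2 : ((2⁻¹:ℝ) ^ k) ^ 2 = (4⁻¹:ℝ) ^ k := by
              rw [← pow_mul, mul_comm, pow_mul]
              norm_num
            calc (4:ℝ) ^ k * r ^ 2 ≤ (4:ℝ) ^ k * (4⁻¹:ℝ) ^ k := by
                  refine mul_le_mul_of_nonneg_left ?_ (by positivity)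
                  rw [← h2]; exact h1
              _ = 1 := by rw [← mul_pow]; norm_num
          have h4 : (4:ℝ≥0∞) ^ k = ENNReal.ofReal ((4:ℝ) ^ k) := by
            rw [ENNReal.ofReal_pow (by norm_num)]
            norm_num
          calc (4:ℝ≥0∞) ^ (k + 1) * ENNReal.ofReal (r ^ 2)
              = 4 * ((4:ℝ≥0∞) ^ k * ENNReal.ofReal (r ^ 2)) := by ring
            _ = 4 * ENNReal.ofReal ((4:ℝ) ^ k * r ^ 2) := by
                rw [h4, ← ENNReal.ofReal_mul (by positivity)]
            _ ≤ 4 * 1 := by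
                refine mul_le_mul_right ?_ 4
                rw [← ENNReal.ofReal_one]
                exact ENNReal.ofReal_le_ofReal hr2
            _ = 4 := mul_one 4

/-- For any finite Borel measure `ρ` on ℝ², the series
`∑ₙ ( 2^{−n} ∫_{2^{−n} ≤ |ω| ≤ 1} |ω|⁻¹ dρ + 4ⁿ ∫_{|ω| ≤ 2^{−n}} |ω|² dρ )` is finite. -/
theorem dyadic_series_of_finite_measure_converges
    (ρ : Measure (EuclideanSpace ℝ (Fin 2))) [IsFiniteMeasure ρ] :
    (∑' n : ℕ,
      ((2 : ℝ≥0∞)⁻¹ ^ n *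
          ∫⁻ ω in {ω : EuclideanSpace ℝ (Fin 2) | (2:ℝ) ^ (-(n:ℤ)) ≤ ‖ω‖ ∧ ‖ω‖ ≤ 1},
            ENNReal.ofReal (‖ω‖⁻¹) ∂ρ
        + (4 : ℝ≥0∞) ^ n *
          ∫⁻ ω in {ω : EuclideanSpace ℝ (Fin 2) | ‖ω‖ ≤ (2:ℝ) ^ (-(n:ℤ))},
            ENNReal.ofReal (‖ω‖ ^ 2) ∂ρ)) < ⊤ := by
  have hgA : Measurable fun ω : EuclideanSpace ℝ (Fin 2) => ENNReal.ofReal ‖ω‖⁻¹ :=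
    measurable_norm.inv.ennreal_ofReal
  have hgB : Measurable fun ω : EuclideanSpace ℝ (Fin 2) => ENNReal.ofReal (‖ω‖ ^ 2) :=
    (measurable_norm.pow_const 2).ennreal_ofReal
  have hSA : ∀ n : ℕ, MeasurableSet
      {ω : EuclideanSpace ℝ (Fin 2) | (2:ℝ) ^ (-(n:ℤ)) ≤ ‖ω‖ ∧ ‖ω‖ ≤ 1} := fun n =>
    measurable_norm measurableSet_Icc
  have hSB : ∀ n : ℕ, MeasurableSet
      {ω : EuclideanSpace ℝ (Fin 2) | ‖ω‖ ≤ (2:ℝ) ^ (-(n:ℤ))} := fun n =>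
    measurable_norm measurableSet_Iic
  rw [ENNReal.tsum_add]
  refine ENNReal.add_lt_top.mpr ⟨?_, ?_⟩
  · calc ∑' n : ℕ, (2:ℝ≥0∞)⁻¹ ^ n *
          ∫⁻ ω in {ω : EuclideanSpace ℝ (Fin 2) | (2:ℝ) ^ (-(n:ℤ)) ≤ ‖ω‖ ∧ ‖ω‖ ≤ 1},
            ENNReal.ofReal (‖ω‖⁻¹) ∂ρ
        = ∑' n : ℕ, ∫⁻ ω, ({ω : EuclideanSpace ℝ (Fin 2) |
              (2:ℝ) ^ (-(n:ℤ)) ≤ ‖ω‖ ∧ ‖ω‖ ≤ 1}).indicator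
            (fun ω => (2:ℝ≥0∞)⁻¹ ^ n * ENNReal.ofReal ‖ω‖⁻¹) ω ∂ρ := by
          refine tsum_congr fun n => ?_
          rw [lintegral_indicator (hSA n), lintegral_const_mul _ hgA]
      _ = ∫⁻ ω, ∑' n : ℕ, ({ω : EuclideanSpace ℝ (Fin 2) |
              (2:ℝ) ^ (-(n:ℤ)) ≤ ‖ω‖ ∧ ‖ω‖ ≤ 1}).indicator
            (fun ω => (2:ℝ≥0∞)⁻¹ ^ n * ENNReal.ofReal ‖ω‖⁻¹) ω ∂ρ := by
          exact (lintegral_tsum fun n =>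
            ((measurable_const.mul hgA).indicator (hSA n)).aemeasurable).symm
      _ ≤ ∫⁻ _, (2:ℝ≥0∞) ∂ρ := by
          refine lintegral_mono fun ω => ?_
          simpa only [Set.indicator_apply, Set.mem_setOf_eq] using auxA ‖ω‖
      _ < ⊤ := by
          rw [lintegral_const]
          exact ENNReal.mul_lt_top (by norm_num) (measure_lt_top ρ _)
  · calc ∑' n : ℕ, (4:ℝ≥0∞) ^ n *
          ∫⁻ ω in {ω : EuclideanSpace ℝ (Fin 2) | ‖ω‖ ≤ (2:ℝ) ^ (-(n:ℤ))},
            ENNReal.ofReal (‖ω‖ ^ 2) ∂ρ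
        = ∑' n : ℕ, ∫⁻ ω, ({ω : EuclideanSpace ℝ (Fin 2) |
              ‖ω‖ ≤ (2:ℝ) ^ (-(n:ℤ))}).indicator
            (fun ω => (4:ℝ≥0∞) ^ n * ENNReal.ofReal (‖ω‖ ^ 2)) ω ∂ρ := by
          refine tsum_congr fun n => ?_
          rw [lintegral_indicator (hSB n), lintegral_const_mul _ hgB]
      _ = ∫⁻ ω, ∑' n : ℕ, ({ω : EuclideanSpace ℝ (Fin 2) |
              ‖ω‖ ≤ (2:ℝ) ^ (-(n:ℤ))}).indicator
            (fun ω => (4:ℝ≥0∞) ^ n * ENNReal.ofReal (‖ω‖ ^ 2)) ω ∂ρ := by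
          exact (lintegral_tsum fun n =>
            ((measurable_const.mul hgB).indicator (hSB n)).aemeasurable).symm
      _ ≤ ∫⁻ _, (4:ℝ≥0∞) ∂ρ := by
          refine lintegral_mono fun ω => ?_
          simpa only [Set.indicator_apply, Set.mem_setOf_eq] using auxB ‖ω‖ (norm_nonneg ω)
      _ < ⊤ := by
          rw [lintegral_const]
          exact ENNReal.mul_lt_top (by norm_num) (measure_lt_top ρ _)
end

section
/- Let (p_x)_{x∈ℤ} be a ℤ-invariant family of real random variables with E[|p_0|] < ∞, and let U be uniformly distributed on [0,1) and independent of (p_x). Then the one-dimensional perturbed lattice is hyperuniform: Var[N_r] / (2r) → 0 as r → ∞, where N_r := ∑_{x∈ℤ} 1{ |x + p_x + U| ≤ r }. -/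
open MeasureTheory ProbabilityTheory Filter Set
open scoped ENNReal NNReal

noncomputable section PLaux
namespace PLaux

/-- distance from `|x|` to `r`. -/
def dlt (r : ℝ) (x : ℤ) : ℝ := |(|(x : ℝ)|) - r|

lemma dlt_nonneg (r : ℝ) (x : ℤ) : 0 ≤ dlt r x := abs_nonneg _

/-- the set of perturbation values for which the point `x` could cross the boundary. -/
def Sband (r : ℝ) (x : ℤ) : Set ℝ :=
  {t | dlt r x - 1 ≤ |t| ∧ (r + 1 < |(x : ℝ)| → |t| ≤ dlt r x + 2 * r + 1)}

lemma measurableSet_Sband (r : ℝ) (x : ℤ) : MeasurableSet (Sband r x) := by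
  have h1 : MeasurableSet {t : ℝ | dlt r x - 1 ≤ |t|} :=
    measurableSet_le measurable_const measurable_abs
  by_cases hc : r + 1 < |(x : ℝ)|
  · have : Sband r x = {t : ℝ | dlt r x - 1 ≤ |t|} ∩ {t : ℝ | |t| ≤ dlt r x + 2 * r + 1} := by
      ext t; simp [Sband, hc]
    rw [this]
    exact h1.inter (measurableSet_le measurable_abs measurable_const)
  · have : Sband r x = {t : ℝ | dlt r x - 1 ≤ |t|} := by
      ext t; simp [Sband, hc]
    rw [this]; exact h1

section crossing
variable (r : ℝ) (x : ℤ) (v u : ℝ)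

lemma triangle_facts (hu0 : 0 ≤ u) :
    |(x : ℝ)| ≤ |(x : ℝ) + u| + u ∧ |(x : ℝ) + u| ≤ |(x : ℝ)| + u ∧
    |(x : ℝ) + v + u| ≤ |(x : ℝ) + u| + |v| ∧ |(x : ℝ) + u| ≤ |(x : ℝ) + v + u| + |v| ∧
    |v| ≤ |(x : ℝ) + v + u| + |(x : ℝ)| + u := by
  refine ⟨?_, ?_, ?_, ?_, ?_⟩
  · have h := abs_add_le ((x : ℝ) + u) (-u)
    have e : (x : ℝ) + u + -u = (x : ℝ) := by ring
    rw [e, abs_neg, abs_of_nonneg hu0] at h; exact h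
  · have h := abs_add_le (x : ℝ) u
    rw [abs_of_nonneg hu0] at h; exact h
  · have h := abs_add_le ((x : ℝ) + u) v
    have e : (x : ℝ) + u + v = (x : ℝ) + v + u := by ring
    rw [e] at h; exact h
  · have h := abs_add_le ((x : ℝ) + v + u) (-v)
    have e : (x : ℝ) + v + u + -v = (x : ℝ) + u := by ring
    rw [e, abs_neg] at h; exact h
  · have h := abs_add_le ((x : ℝ) + v + u) (-((x : ℝ) + u))
    have e : (x : ℝ) + v + u + -((x : ℝ) + u) = v := by ring
    rw [e, abs_neg] at h
    have h' := abs_add_le (x : ℝ) u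
    rw [abs_of_nonneg hu0] at h'
    have h'' := abs_add_le (x:ℝ) u
    linarith [abs_add_le (x:ℝ) u]

lemma mem_Sband_out (hr : 2 ≤ r) (hu0 : 0 ≤ u) (hu1 : u < 1)
    (h1 : |(x : ℝ) + u| ≤ r) (h2 : ¬ |(x : ℝ) + v + u| ≤ r) :
    v ∈ Sband r x := by
  push_neg at h2
  obtain ⟨t1, t2, t3, t4, t5⟩ := triangle_facts x v u hu0
  constructor
  · show dlt r x - 1 ≤ |v|
    have habs : |(|(x : ℝ)|) - r| ≤ |v| + 1 := by
      rw [abs_le]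
      constructor
      · linarith
      · linarith [abs_nonneg v]
    unfold dlt; linarith
  · intro hcond
    exfalso; linarith

lemma mem_Sband_in (hr : 2 ≤ r) (hu0 : 0 ≤ u) (hu1 : u < 1)
    (h1 : ¬ |(x : ℝ) + u| ≤ r) (h2 : |(x : ℝ) + v + u| ≤ r) :
    v ∈ Sband r x := by
  push_neg at h1
  obtain ⟨t1, t2, t3, t4, t5⟩ := triangle_facts x v u hu0
  constructor
  · show dlt r x - 1 ≤ |v|
    have habs : |(|(x : ℝ)|) - r| ≤ |v| + 1 := by
      rw [abs_le]
      constructor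
      · linarith [abs_nonneg v]
      · linarith
    unfold dlt; linarith
  · intro hcond
    have hd : dlt r x = |(x : ℝ)| - r := by
      unfold dlt; rw [abs_of_nonneg (by linarith)]
    rw [hd]; linarith

end crossing

/-! ### counting helpers -/

lemma card_cast_le {a b : ℤ} {c : ℝ} (hc : 0 ≤ c) (h : (b : ℝ) + 1 - (a : ℝ) ≤ c) :
    ((Finset.Icc a b).card : ℝ≥0∞) ≤ ENNReal.ofReal c := by
  rw [Int.card_Icc, ← ENNReal.ofReal_natCast]
  apply ENNReal.ofReal_le_ofReal
  rcases le_or_gt (b + 1 - a) 0 with h0 | h0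
  · rw [Int.toNat_of_nonpos h0]; simpa using hc
  · have h1 : ((b + 1 - a).toNat : ℤ) = b + 1 - a := Int.toNat_of_nonneg h0.le
    have h2 : (((b + 1 - a).toNat : ℤ) : ℝ) = (b : ℝ) + 1 - (a : ℝ) := by
      rw [h1]; push_cast; ring
    have h3 : (((b + 1 - a).toNat : ℕ) : ℝ) = (((b + 1 - a).toNat : ℤ) : ℝ) := by
      push_cast; ring
    rw [h3, h2]; exact h

lemma tsum_le_two_card (g : ℤ → ℝ≥0∞) (s₁ s₂ : Finset ℤ) (B : ℝ≥0∞)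
    (h0 : ∀ y, y ∉ s₁ → y ∉ s₂ → g y = 0) (hB : ∀ y, g y ≤ B) :
    ∑' y, g y ≤ ((s₁.card : ℝ≥0∞) + (s₂.card : ℝ≥0∞)) * B := by
  have h : ∑' y, g y = ∑ y ∈ s₁ ∪ s₂, g y :=
    tsum_eq_sum (fun y hy => h0 y (fun h1 => hy (Finset.mem_union_left _ h1))
      (fun h2 => hy (Finset.mem_union_right _ h2)))
  rw [h]
  calc ∑ y ∈ s₁ ∪ s₂, g y ≤ ∑ _y ∈ s₁ ∪ s₂, B := Finset.sum_le_sum (fun y _ => hB y)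
    _ = ((s₁ ∪ s₂).card : ℝ≥0∞) * B := by rw [Finset.sum_const, nsmul_eq_mul]
    _ ≤ _ := by
        apply mul_le_mul_left
        exact_mod_cast Nat.cast_le.mpr (Finset.card_union_le s₁ s₂)

lemma count_dlt_le (r s : ℝ) (hr : 0 ≤ r) (hs : 0 ≤ s) :
    (∑' x : ℤ, if dlt r x ≤ s then (1 : ℝ≥0∞) else 0) ≤ ENNReal.ofReal (4 * s + 6) := by
  have key := tsum_le_two_card (fun x => if dlt r x ≤ s then (1 : ℝ≥0∞) else 0)
    (Finset.Icc ⌈r - s⌉ ⌊r + s⌋) (Finset.Icc (-⌊r + s⌋) (-⌈r - s⌉)) 1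
    (by
      intro y hy1 hy2
      show (if dlt r y ≤ s then (1 : ℝ≥0∞) else 0) = 0
      rw [if_neg]
      intro hd
      unfold dlt at hd
      have h1 : r - s ≤ |(y : ℝ)| := by have := (abs_le.mp hd).1; linarith
      have h2 : |(y : ℝ)| ≤ r + s := by have := (abs_le.mp hd).2; linarith
      rcases le_or_gt 0 y with hy | hy
      · apply hy1
        rw [Finset.mem_Icc]
        have hay : |(y : ℝ)| = (y : ℝ) := abs_of_nonneg (by exact_mod_cast hy)
        constructor
        · rw [Int.ceil_le]; rw [hay] at h1; exact h1
        · rw [Int.le_floor]; rw [hay] at h2; exact h2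
      · apply hy2
        rw [Finset.mem_Icc]
        have hay : |(y : ℝ)| = -(y : ℝ) := abs_of_neg (by exact_mod_cast hy)
        constructor
        · rw [neg_le, Int.le_floor]; push_cast; rw [hay] at h2; linarith
        · rw [le_neg, Int.ceil_le]; push_cast; rw [hay] at h1; linarith)
    (by intro y; show (if dlt r y ≤ s then (1 : ℝ≥0∞) else 0) ≤ 1; split <;> simp)
  apply le_trans key
  have hc1 : ((Finset.Icc ⌈r - s⌉ ⌊r + s⌋).card : ℝ≥0∞) ≤ ENNReal.ofReal (2 * s + 2) := by
    apply card_cast_le (by linarith)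
    have hf := Int.floor_le (r + s)
    have hce := Int.le_ceil (r - s)
    linarith
  have hc2 : ((Finset.Icc (-⌊r + s⌋) (-⌈r - s⌉)).card : ℝ≥0∞) ≤ ENNReal.ofReal (2 * s + 2) := by
    apply card_cast_le (by linarith)
    have hf := Int.floor_le (r + s)
    have hce := Int.le_ceil (r - s)
    push_cast
    linarith
  calc (((Finset.Icc ⌈r - s⌉ ⌊r + s⌋).card : ℝ≥0∞) + ((Finset.Icc (-⌊r + s⌋) (-⌈r - s⌉)).card : ℝ≥0∞)) * 1
      = ((Finset.Icc ⌈r - s⌉ ⌊r + s⌋).card : ℝ≥0∞) + ((Finset.Icc (-⌊r + s⌋) (-⌈r - s⌉)).card : ℝ≥0∞) := mul_one _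
    _ ≤ ENNReal.ofReal (2 * s + 2) + ENNReal.ofReal (2 * s + 2) := add_le_add hc1 hc2
    _ = ENNReal.ofReal (4 * s + 4) := by rw [← ENNReal.ofReal_add (by linarith) (by linarith)]; ring_nf
    _ ≤ ENNReal.ofReal (4 * s + 6) := ENNReal.ofReal_le_ofReal (by linarith)

lemma tsum_ite_real_count (P : ℤ → Prop) [DecidablePred P] (hA : {x | P x}.Finite) :
    ∑' x : ℤ, (if P x then (1 : ℝ) else 0) = {x | P x}.ncard := by
  rw [tsum_eq_sum (s := hA.toFinset) (fun b hb => if_neg (by simpa using hb))]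
  rw [Finset.sum_congr rfl (fun b hb => if_pos (by simpa using hb))]
  rw [Set.ncard_eq_toFinset_card _ hA]
  simp

lemma tsum_ite_ennreal_count (P : ℤ → Prop) [DecidablePred P] (hA : {x | P x}.Finite) :
    ∑' x : ℤ, (if P x then (1 : ℝ≥0∞) else 0) = ({x | P x}.ncard : ℝ≥0∞) := by
  rw [tsum_eq_sum (s := hA.toFinset) (fun b hb => if_neg (by simpa using hb))]
  rw [Finset.sum_congr rfl (fun b hb => if_pos (by simpa using hb))]
  rw [Set.ncard_eq_toFinset_card _ hA]
  simp

lemma card_le_tsum_ite (P : ℤ → Prop) [DecidablePred P] (hA : {x | P x}.Finite) :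
    ({x | P x}.ncard : ℝ≥0∞) ≤ ∑' x : ℤ, (if P x then (1 : ℝ≥0∞) else 0) := by
  rw [tsum_ite_ennreal_count P hA]

lemma tsum_ite_top_of_infinite (P : ℤ → Prop) [DecidablePred P] (hA : {x | P x}.Infinite) :
    ∑' x : ℤ, (if P x then (1 : ℝ≥0∞) else 0) = ⊤ := by
  have h : (fun x : ℤ => if P x then (1 : ℝ≥0∞) else 0)
      = fun x => Set.indicator {x | P x} (fun _ => (1 : ℝ≥0∞)) x := by
    funext x
    rw [Set.indicator_apply]
    by_cases h : P x <;> simp [h]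
  rw [h, ← tsum_subtype]
  haveI := hA.to_subtype
  exact ENNReal.tsum_const_eq_top_of_ne_zero one_ne_zero


open scoped Classical in
def Tval (r : ℝ) (pp : ℤ → ℝ) : ℝ≥0∞ :=
  ∑' x : ℤ, (if pp x ∈ Sband r x then (1 : ℝ≥0∞) else 0)

lemma key_pointwise (r : ℝ) (hr : 2 ≤ r) (pp : ℤ → ℝ) (u : ℝ) (hu0 : 0 ≤ u) (hu1 : u < 1) :
    ENNReal.ofReal |(∑' x : ℤ, if |(x : ℝ) + pp x + u| ≤ r then (1 : ℝ) else 0) - (2 * r + 1)|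
      ≤ 2 + Tval r pp := by
  classical
  by_cases hT : Tval r pp = ⊤
  · rw [hT]
    exact le_of_le_of_eq le_top (by simp)
  -- the exceptional set is finite
  have hDfin : {x : ℤ | pp x ∈ Sband r x}.Finite := by
    by_contra hinf
    exact hT (tsum_ite_top_of_infinite _ hinf)
  have hLfin : {x : ℤ | |(x : ℝ) + u| ≤ r}.Finite := by
    apply Set.Finite.subset (Set.finite_Icc (⌈-r - u⌉) (⌊r - u⌋))
    intro x hx
    have hx' : |(x : ℝ) + u| ≤ r := hx
    rw [Set.mem_Icc]
    obtain ⟨ha, hb⟩ := abs_le.mp hx'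
    constructor
    · rw [Int.ceil_le]; linarith
    · rw [Int.le_floor]; linarith
  have hQsub : {x : ℤ | |(x : ℝ) + pp x + u| ≤ r}
      ⊆ {x : ℤ | |(x : ℝ) + u| ≤ r} ∪ {x : ℤ | pp x ∈ Sband r x} := by
    intro x hx
    by_cases hxL : |(x : ℝ) + u| ≤ r
    · exact Or.inl hxL
    · exact Or.inr (mem_Sband_in r x (pp x) u hr hu0 hu1 hxL hx)
  have hLsub : {x : ℤ | |(x : ℝ) + u| ≤ r}
      ⊆ {x : ℤ | |(x : ℝ) + pp x + u| ≤ r} ∪ {x : ℤ | pp x ∈ Sband r x} := by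
    intro x hx
    by_cases hxQ : |(x : ℝ) + pp x + u| ≤ r
    · exact Or.inl hxQ
    · exact Or.inr (mem_Sband_out r x (pp x) u hr hu0 hu1 hx hxQ)
  have hQfin : {x : ℤ | |(x : ℝ) + pp x + u| ≤ r}.Finite :=
    (hLfin.union hDfin).subset hQsub
  -- counts
  have hNQ : (∑' x : ℤ, if |(x : ℝ) + pp x + u| ≤ r then (1 : ℝ) else 0)
      = ({x : ℤ | |(x : ℝ) + pp x + u| ≤ r}.ncard : ℝ) :=
    tsum_ite_real_count _ hQfin
  have h1 : {x : ℤ | |(x : ℝ) + pp x + u| ≤ r}.ncard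
      ≤ {x : ℤ | |(x : ℝ) + u| ≤ r}.ncard + {x : ℤ | pp x ∈ Sband r x}.ncard :=
    le_trans (Set.ncard_le_ncard hQsub (hLfin.union hDfin)) (Set.ncard_union_le _ _)
  have h2 : {x : ℤ | |(x : ℝ) + u| ≤ r}.ncard
      ≤ {x : ℤ | |(x : ℝ) + pp x + u| ≤ r}.ncard + {x : ℤ | pp x ∈ Sband r x}.ncard :=
    le_trans (Set.ncard_le_ncard hLsub (hQfin.union hDfin)) (Set.ncard_union_le _ _)
  -- lattice count close to 2r+1
  have hLcard : |({x : ℤ | |(x : ℝ) + u| ≤ r}.ncard : ℝ) - (2 * r + 1)| ≤ 2 := by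
    have hset : {x : ℤ | |(x : ℝ) + u| ≤ r}
        = ((Finset.Icc ⌈-r - u⌉ ⌊r - u⌋ : Finset ℤ) : Set ℤ) := by
      ext x
      simp only [Set.mem_setOf_eq, Finset.coe_Icc, Set.mem_Icc, abs_le, Int.ceil_le, Int.le_floor]
      constructor
      · rintro ⟨ha, hb⟩; exact ⟨by linarith, by linarith⟩
      · rintro ⟨ha, hb⟩; exact ⟨by linarith, by linarith⟩
    rw [hset, Set.ncard_coe_finset, Int.card_Icc]
    have hb1 : ((⌊r - u⌋ : ℤ) : ℝ) ≤ r - u := Int.floor_le _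
    have hb2 : r - u < (⌊r - u⌋ : ℤ) + 1 := Int.lt_floor_add_one _
    have ha1 : -r - u ≤ ((⌈-r - u⌉ : ℤ) : ℝ) := Int.le_ceil _
    have ha2 : ((⌈-r - u⌉ : ℤ) : ℝ) < -r - u + 1 := Int.ceil_lt_add_one _
    have hpos : (0 : ℤ) ≤ ⌊r - u⌋ + 1 - ⌈-r - u⌉ := by
      have : ((⌊r - u⌋ + 1 - ⌈-r - u⌉ : ℤ) : ℝ) > 0 := by push_cast; linarith
      exact_mod_cast this.le
    have hcast : (((⌊r - u⌋ + 1 - ⌈-r - u⌉).toNat : ℕ) : ℝ)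
        = ((⌊r - u⌋ : ℝ) + 1 - (⌈-r - u⌉ : ℝ)) := by
      have h := Int.toNat_of_nonneg hpos
      have h' : (((⌊r - u⌋ + 1 - ⌈-r - u⌉).toNat : ℤ) : ℝ) = ((⌊r - u⌋ + 1 - ⌈-r - u⌉ : ℤ) : ℝ) := by
        exact_mod_cast congrArg (Int.cast : ℤ → ℝ) h
      push_cast at h' ⊢
      linarith
    rw [hcast, abs_le]
    constructor
    · linarith
    · linarith
  have hDT : (({x : ℤ | pp x ∈ Sband r x}.ncard : ℝ≥0∞)) ≤ Tval r pp :=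
    card_le_tsum_ite _ hDfin
  -- combine
  have habs : |(∑' x : ℤ, if |(x : ℝ) + pp x + u| ≤ r then (1 : ℝ) else 0) - (2 * r + 1)|
      ≤ ({x : ℤ | pp x ∈ Sband r x}.ncard : ℝ) + 2 := by
    rw [hNQ]
    have hq : |({x : ℤ | |(x : ℝ) + pp x + u| ≤ r}.ncard : ℝ)
        - ({x : ℤ | |(x : ℝ) + u| ≤ r}.ncard : ℝ)| ≤ ({x : ℤ | pp x ∈ Sband r x}.ncard : ℝ) := by
      have hc1 : ({x : ℤ | |(x : ℝ) + pp x + u| ≤ r}.ncard : ℝ)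
          ≤ ({x : ℤ | |(x : ℝ) + u| ≤ r}.ncard : ℝ) + ({x : ℤ | pp x ∈ Sband r x}.ncard : ℝ) := by
        exact_mod_cast h1
      have hc2 : ({x : ℤ | |(x : ℝ) + u| ≤ r}.ncard : ℝ)
          ≤ ({x : ℤ | |(x : ℝ) + pp x + u| ≤ r}.ncard : ℝ) + ({x : ℤ | pp x ∈ Sband r x}.ncard : ℝ) := by
        exact_mod_cast h2
      rw [abs_le]
      constructor
      · linarith
      · linarith
    calc |(_ : ℝ) - (2 * r + 1)| ≤ _ := abs_sub_le _ (({x : ℤ | |(x : ℝ) + u| ≤ r}.ncard : ℝ)) _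
      _ ≤ _ + 2 := add_le_add hq hLcard
  calc ENNReal.ofReal |(∑' x : ℤ, if |(x : ℝ) + pp x + u| ≤ r then (1 : ℝ) else 0) - (2 * r + 1)|
      ≤ ENNReal.ofReal (({x : ℤ | pp x ∈ Sband r x}.ncard : ℝ) + 2) := ENNReal.ofReal_le_ofReal habs
    _ = ({x : ℤ | pp x ∈ Sband r x}.ncard : ℝ≥0∞) + 2 := by
        rw [ENNReal.ofReal_add (by positivity) (by norm_num), ENNReal.ofReal_natCast]
        norm_num
    _ ≤ Tval r pp + 2 := add_le_add_left hDT _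
    _ = 2 + Tval r pp := add_comm _ _


lemma mem_pair_of_dlt_le {r s : ℝ} {y : ℤ} (h : dlt r y ≤ s) :
    y ∈ Finset.Icc ⌈r - s⌉ ⌊r + s⌋ ∨ y ∈ Finset.Icc (-⌊r + s⌋) (-⌈r - s⌉) := by
  unfold dlt at h
  have h1 : r - s ≤ |(y : ℝ)| := by have := (abs_le.mp h).1; linarith
  have h2 : |(y : ℝ)| ≤ r + s := by have := (abs_le.mp h).2; linarith
  rcases le_or_gt 0 y with hy | hy
  · left
    rw [Finset.mem_Icc]
    have hay : |(y : ℝ)| = (y : ℝ) := abs_of_nonneg (by exact_mod_cast hy)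
    constructor
    · rw [Int.ceil_le]; rw [hay] at h1; exact h1
    · rw [Int.le_floor]; rw [hay] at h2; exact h2
  · right
    rw [Finset.mem_Icc]
    have hay : |(y : ℝ)| = -(y : ℝ) := abs_of_neg (by exact_mod_cast hy)
    constructor
    · rw [neg_le, Int.le_floor]; push_cast; rw [hay] at h2; linarith
    · rw [le_neg, Int.ceil_le]; push_cast; rw [hay] at h1; linarith

/-- The final majorant for the weighted boundary-crossing count. -/
def Phi (r s : ℝ) : ℝ≥0∞ :=
  ENNReal.ofReal (100 * (min s (2 * r) + 2) ^ 2)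
    + (if 2 * r ≤ s then ENNReal.ofReal (100 * r * (s + 2)) else 0)

open scoped Classical in
lemma count_pointwise (r : ℝ) (hr : 2 ≤ r) (t : ℝ) :
    (∑' y : ℤ, ENNReal.ofReal (4 * dlt r y + 6) * (if t ∈ Sband r y then (1 : ℝ≥0∞) else 0))
      ≤ Phi r |t| := by
  have ht0 : (0 : ℝ) ≤ |t| := abs_nonneg t
  have hdlt_le : ∀ y : ℤ, t ∈ Sband r y → dlt r y ≤ |t| + 1 := by
    intro y hy
    have := hy.1
    linarith
  rcases lt_or_ge |t| (2 * r) with hc | hc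
  · -- near case
    have key := tsum_le_two_card
      (fun y => ENNReal.ofReal (4 * dlt r y + 6) * (if t ∈ Sband r y then (1 : ℝ≥0∞) else 0))
      (Finset.Icc ⌈r - (|t| + 1)⌉ ⌊r + (|t| + 1)⌋)
      (Finset.Icc (-⌊r + (|t| + 1)⌋) (-⌈r - (|t| + 1)⌉))
      (ENNReal.ofReal (4 * |t| + 10))
      (by
        intro y h1 h2
        show ENNReal.ofReal (4 * dlt r y + 6) * (if t ∈ Sband r y then (1 : ℝ≥0∞) else 0) = 0
        by_cases hS : t ∈ Sband r y
        · exfalso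
          rcases mem_pair_of_dlt_le (s := |t| + 1) (hdlt_le y hS) with h | h
          · exact h1 h
          · exact h2 h
        · simp [hS])
      (by
        intro y
        show ENNReal.ofReal (4 * dlt r y + 6) * (if t ∈ Sband r y then (1 : ℝ≥0∞) else 0)
          ≤ ENNReal.ofReal (4 * |t| + 10)
        by_cases hS : t ∈ Sband r y
        · rw [if_pos hS, mul_one]
          exact ENNReal.ofReal_le_ofReal (by have := hdlt_le y hS; linarith)
        · simp [hS])
    apply le_trans key
    have hcard1 : ((Finset.Icc ⌈r - (|t| + 1)⌉ ⌊r + (|t| + 1)⌋).card : ℝ≥0∞)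
        ≤ ENNReal.ofReal (2 * |t| + 4) := by
      apply card_cast_le (by linarith)
      have := Int.floor_le (r + (|t| + 1))
      have := Int.le_ceil (r - (|t| + 1))
      linarith
    have hcard2 : ((Finset.Icc (-⌊r + (|t| + 1)⌋) (-⌈r - (|t| + 1)⌉)).card : ℝ≥0∞)
        ≤ ENNReal.ofReal (2 * |t| + 4) := by
      apply card_cast_le (by linarith)
      have := Int.floor_le (r + (|t| + 1))
      have := Int.le_ceil (r - (|t| + 1))
      push_cast
      linarith
    have hPhi : ENNReal.ofReal (100 * (|t| + 2) ^ 2) ≤ Phi r |t| := by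
      rw [Phi, min_eq_left hc.le]
      exact le_self_add
    refine le_trans ?_ hPhi
    calc _ ≤ (ENNReal.ofReal (2 * |t| + 4) + ENNReal.ofReal (2 * |t| + 4))
          * ENNReal.ofReal (4 * |t| + 10) := by
          exact mul_le_mul_left (add_le_add hcard1 hcard2) _
      _ = ENNReal.ofReal ((4 * |t| + 8) * (4 * |t| + 10)) := by
          rw [← ENNReal.ofReal_add (by linarith) (by linarith),
            ← ENNReal.ofReal_mul (by linarith)]
          ring_nf
      _ ≤ ENNReal.ofReal (100 * (|t| + 2) ^ 2) := by
          apply ENNReal.ofReal_le_ofReal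
          nlinarith
  · -- far case : split into inside / outside
    have hsplit : ∀ y : ℤ,
        ENNReal.ofReal (4 * dlt r y + 6) * (if t ∈ Sband r y then (1 : ℝ≥0∞) else 0)
        = (if |(y : ℝ)| ≤ r + 1 then
            ENNReal.ofReal (4 * dlt r y + 6) * (if t ∈ Sband r y then (1 : ℝ≥0∞) else 0) else 0)
          + (if r + 1 < |(y : ℝ)| then
            ENNReal.ofReal (4 * dlt r y + 6) * (if t ∈ Sband r y then (1 : ℝ≥0∞) else 0) else 0) := by
      intro y
      rcases le_or_gt |(y : ℝ)| (r + 1) with h | h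
      · rw [if_pos h, if_neg (not_lt.mpr h), add_zero]
      · rw [if_neg (not_le.mpr h), if_pos h, zero_add]
    rw [tsum_congr hsplit, ENNReal.tsum_add]
    have hPhi : Phi r |t| = ENNReal.ofReal (100 * (2 * r + 2) ^ 2)
        + ENNReal.ofReal (100 * r * (|t| + 2)) := by
      rw [Phi, min_eq_right hc, if_pos hc]
    rw [hPhi]
    apply add_le_add
    · -- inside part
      have key := tsum_le_two_card
        (fun y => if |(y : ℝ)| ≤ r + 1 then
            ENNReal.ofReal (4 * dlt r y + 6) * (if t ∈ Sband r y then (1 : ℝ≥0∞) else 0) else 0)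
        (Finset.Icc ⌈(0 : ℝ) - (r + 1)⌉ ⌊(0 : ℝ) + (r + 1)⌋)
        (Finset.Icc (-⌊(0 : ℝ) + (r + 1)⌋) (-⌈(0 : ℝ) - (r + 1)⌉))
        (ENNReal.ofReal (4 * r + 6))
        (by
          intro y h1 h2
          show (if |(y : ℝ)| ≤ r + 1 then _ else 0) = 0
          by_cases hin : |(y : ℝ)| ≤ r + 1
          · exfalso
            have hd : dlt 0 y ≤ r + 1 := by
              unfold dlt
              rw [sub_zero, abs_abs]
              exact hin
            rcases mem_pair_of_dlt_le hd with h | h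
            · exact h1 h
            · exact h2 h
          · rw [if_neg hin])
        (by
          intro y
          show (if |(y : ℝ)| ≤ r + 1 then
              ENNReal.ofReal (4 * dlt r y + 6) * (if t ∈ Sband r y then (1 : ℝ≥0∞) else 0) else 0)
            ≤ ENNReal.ofReal (4 * r + 6)
          by_cases hin : |(y : ℝ)| ≤ r + 1
          · rw [if_pos hin]
            have hd : dlt r y ≤ r := by
              unfold dlt
              rw [abs_le]
              constructor
              · have := abs_nonneg (y : ℝ); linarith
              · linarith
            calc ENNReal.ofReal (4 * dlt r y + 6) * (if t ∈ Sband r y then (1 : ℝ≥0∞) else 0)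
                ≤ ENNReal.ofReal (4 * dlt r y + 6) * 1 := by
                  apply mul_le_mul_right
                  split <;> simp
              _ ≤ ENNReal.ofReal (4 * r + 6) := by
                  rw [mul_one]
                  exact ENNReal.ofReal_le_ofReal (by linarith)
          · rw [if_neg hin]; exact zero_le)
      apply le_trans key
      have hcard1 : ((Finset.Icc ⌈(0 : ℝ) - (r + 1)⌉ ⌊(0 : ℝ) + (r + 1)⌋).card : ℝ≥0∞)
          ≤ ENNReal.ofReal (2 * r + 4) := by
        apply card_cast_le (by linarith)
        have := Int.floor_le ((0 : ℝ) + (r + 1))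
        have := Int.le_ceil ((0 : ℝ) - (r + 1))
        linarith
      have hcard2 : ((Finset.Icc (-⌊(0 : ℝ) + (r + 1)⌋) (-⌈(0 : ℝ) - (r + 1)⌉)).card : ℝ≥0∞)
          ≤ ENNReal.ofReal (2 * r + 4) := by
        apply card_cast_le (by linarith)
        have := Int.floor_le ((0 : ℝ) + (r + 1))
        have := Int.le_ceil ((0 : ℝ) - (r + 1))
        push_cast
        linarith
      calc _ ≤ (ENNReal.ofReal (2 * r + 4) + ENNReal.ofReal (2 * r + 4))
            * ENNReal.ofReal (4 * r + 6) :=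
            mul_le_mul_left (add_le_add hcard1 hcard2) _
        _ = ENNReal.ofReal ((4 * r + 8) * (4 * r + 6)) := by
            rw [← ENNReal.ofReal_add (by linarith) (by linarith),
              ← ENNReal.ofReal_mul (by linarith)]
            ring_nf
        _ ≤ ENNReal.ofReal (100 * (2 * r + 2) ^ 2) := by
            apply ENNReal.ofReal_le_ofReal
            nlinarith
    · -- outside part
      have key := tsum_le_two_card
        (fun y => if r + 1 < |(y : ℝ)| then
            ENNReal.ofReal (4 * dlt r y + 6) * (if t ∈ Sband r y then (1 : ℝ≥0∞) else 0) else 0)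
        (Finset.Icc ⌈|t| - (r + 1)⌉ ⌊|t| + (r + 1)⌋)
        (Finset.Icc (-⌊|t| + (r + 1)⌋) (-⌈|t| - (r + 1)⌉))
        (ENNReal.ofReal (4 * |t| + 10))
        (by
          intro y h1 h2
          show (if r + 1 < |(y : ℝ)| then _ else 0) = 0
          by_cases hout : r + 1 < |(y : ℝ)|
          · rw [if_pos hout]
            by_cases hS : t ∈ Sband r y
            · exfalso
              have hdy : dlt r y = |(y : ℝ)| - r := by
                unfold dlt
                exact abs_of_nonneg (by linarith)
              have hup : |(y : ℝ)| ≤ |t| + (r + 1) := by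
                have := hdlt_le y hS
                rw [hdy] at this
                linarith
              have hlo : |t| - (r + 1) ≤ |(y : ℝ)| := by
                have h2' := hS.2 hout
                rw [hdy] at h2'
                linarith
              have hd : dlt |t| y ≤ r + 1 := by
                unfold dlt
                rw [abs_le]
                constructor
                · linarith
                · linarith
              rcases mem_pair_of_dlt_le hd with h | h
              · exact h1 h
              · exact h2 h
            · simp [hS]
          · rw [if_neg hout])
        (by
          intro y
          show (if r + 1 < |(y : ℝ)| then
              ENNReal.ofReal (4 * dlt r y + 6) * (if t ∈ Sband r y then (1 : ℝ≥0∞) else 0) else 0)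
            ≤ ENNReal.ofReal (4 * |t| + 10)
          by_cases hout : r + 1 < |(y : ℝ)|
          · rw [if_pos hout]
            by_cases hS : t ∈ Sband r y
            · rw [if_pos hS, mul_one]
              exact ENNReal.ofReal_le_ofReal (by have := hdlt_le y hS; linarith)
            · simp [hS]
          · rw [if_neg hout]; exact zero_le)
      apply le_trans key
      have hcard1 : ((Finset.Icc ⌈|t| - (r + 1)⌉ ⌊|t| + (r + 1)⌋).card : ℝ≥0∞)
          ≤ ENNReal.ofReal (2 * r + 4) := by
        apply card_cast_le (by linarith)
        have := Int.floor_le (|t| + (r + 1))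
        have := Int.le_ceil (|t| - (r + 1))
        linarith
      have hcard2 : ((Finset.Icc (-⌊|t| + (r + 1)⌋) (-⌈|t| - (r + 1)⌉)).card : ℝ≥0∞)
          ≤ ENNReal.ofReal (2 * r + 4) := by
        apply card_cast_le (by linarith)
        have := Int.floor_le (|t| + (r + 1))
        have := Int.le_ceil (|t| - (r + 1))
        push_cast
        linarith
      calc _ ≤ (ENNReal.ofReal (2 * r + 4) + ENNReal.ofReal (2 * r + 4))
            * ENNReal.ofReal (4 * |t| + 10) :=
            mul_le_mul_left (add_le_add hcard1 hcard2) _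
        _ = ENNReal.ofReal ((4 * r + 8) * (4 * |t| + 10)) := by
            rw [← ENNReal.ofReal_add (by linarith) (by linarith),
              ← ENNReal.ofReal_mul (by linarith)]
            ring_nf
        _ ≤ ENNReal.ofReal (100 * r * (|t| + 2)) := by
            apply ENNReal.ofReal_le_ofReal
            nlinarith


section measure
variable {Ω : Type} [MeasurableSpace Ω]

open scoped Classical in
lemma int_Tsq_le (μ : Measure Ω) [IsProbabilityMeasure μ]
    (p : ℤ → Ω → ℝ) (hpm : ∀ x, Measurable (p x)) (r : ℝ) (hr : 0 ≤ r) :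
    ∫⁻ ω, (Tval r (fun x => p x ω)) ^ 2 ∂μ
      ≤ 2 * ∑' y : ℤ, ENNReal.ofReal (4 * dlt r y + 6) * μ {ω | p y ω ∈ Sband r y} := by
  set g : ℤ → Ω → ℝ≥0∞ := fun x ω => if p x ω ∈ Sband r x then 1 else 0 with hg
  have hgm : ∀ x, Measurable (g x) := fun x =>
    Measurable.ite (hpm x (measurableSet_Sband r x)) measurable_const measurable_const
  have hint : ∀ y, ∫⁻ ω, g y ω ∂μ = μ {ω | p y ω ∈ Sband r y} := by
    intro y
    have he : g y = Set.indicator {ω | p y ω ∈ Sband r y} (fun _ => (1 : ℝ≥0∞)) := by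
      funext ω
      rw [Set.indicator_apply]
      by_cases h : p y ω ∈ Sband r y <;> simp [hg, h]
    rw [he]
    exact lintegral_indicator_one (hpm y (measurableSet_Sband r y))
  have hTsq : ∀ ω, (Tval r (fun x => p x ω)) ^ 2 = ∑' x : ℤ, ∑' y : ℤ, g x ω * g y ω := by
    intro ω
    rw [pow_two]
    have h1 : Tval r (fun x => p x ω) = ∑' x : ℤ, g x ω := rfl
    rw [h1]
    rw [← ENNReal.tsum_mul_right]
    exact tsum_congr fun x => (ENNReal.tsum_mul_left).symm
  calc ∫⁻ ω, (Tval r (fun x => p x ω)) ^ 2 ∂μ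
      = ∫⁻ ω, ∑' x : ℤ, ∑' y : ℤ, g x ω * g y ω ∂μ := by
        exact lintegral_congr fun ω => hTsq ω
    _ = ∑' x : ℤ, ∑' y : ℤ, ∫⁻ ω, g x ω * g y ω ∂μ := by
        rw [lintegral_tsum (f := fun x ω => ∑' y : ℤ, g x ω * g y ω) (fun x =>
          (Measurable.ennreal_tsum (fun y => (hgm x).mul (hgm y))).aemeasurable)]
        exact tsum_congr fun x => lintegral_tsum (f := fun y ω => g x ω * g y ω) (fun y => ((hgm x).mul (hgm y)).aemeasurable)
    _ ≤ ∑' x : ℤ, ∑' y : ℤ,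
          ((if dlt r x ≤ dlt r y then μ {ω | p y ω ∈ Sband r y} else 0)
            + (if dlt r y ≤ dlt r x then μ {ω | p x ω ∈ Sband r x} else 0)) := by
        apply ENNReal.tsum_le_tsum
        intro x
        apply ENNReal.tsum_le_tsum
        intro y
        have hle1 : ∫⁻ ω, g x ω * g y ω ∂μ ≤ μ {ω | p y ω ∈ Sband r y} := by
          rw [← hint y]
          apply lintegral_mono
          intro ω
          calc g x ω * g y ω ≤ 1 * g y ω := by
                apply mul_le_mul_left
                simp only [hg]
                split <;> simp
            _ = g y ω := one_mul _
        have hle2 : ∫⁻ ω, g x ω * g y ω ∂μ ≤ μ {ω | p x ω ∈ Sband r x} := by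
          rw [← hint x]
          apply lintegral_mono
          intro ω
          calc g x ω * g y ω ≤ g x ω * 1 := by
                apply mul_le_mul_right
                simp only [hg]
                split <;> simp
            _ = g x ω := mul_one _
        rcases le_total (dlt r x) (dlt r y) with h | h
        · rw [if_pos h]
          exact le_trans hle1 le_self_add
        · rw [if_pos h]
          exact le_trans hle2 le_add_self
    _ = (∑' x : ℤ, ∑' y : ℤ, (if dlt r x ≤ dlt r y then μ {ω | p y ω ∈ Sband r y} else 0))
        + (∑' x : ℤ, ∑' y : ℤ, (if dlt r y ≤ dlt r x then μ {ω | p x ω ∈ Sband r x} else 0)) := by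
        rw [← ENNReal.tsum_add]
        exact tsum_congr fun x => ENNReal.tsum_add
    _ ≤ (∑' y : ℤ, ENNReal.ofReal (4 * dlt r y + 6) * μ {ω | p y ω ∈ Sband r y})
        + (∑' y : ℤ, ENNReal.ofReal (4 * dlt r y + 6) * μ {ω | p y ω ∈ Sband r y}) := by
        apply add_le_add
        · rw [ENNReal.tsum_comm]
          apply ENNReal.tsum_le_tsum
          intro y
          have he : ∑' x : ℤ, (if dlt r x ≤ dlt r y then μ {ω | p y ω ∈ Sband r y} else 0)
              = μ {ω | p y ω ∈ Sband r y} * ∑' x : ℤ, (if dlt r x ≤ dlt r y then (1 : ℝ≥0∞) else 0) := by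
            rw [← ENNReal.tsum_mul_left]
            exact tsum_congr fun x => by rw [mul_ite, mul_one, mul_zero]
          rw [he]
          rw [mul_comm]
          exact mul_le_mul_left (count_dlt_le r (dlt r y) hr (dlt_nonneg r y)) _
        · apply ENNReal.tsum_le_tsum
          intro x
          have he : ∑' y : ℤ, (if dlt r y ≤ dlt r x then μ {ω | p x ω ∈ Sband r x} else 0)
              = μ {ω | p x ω ∈ Sband r x} * ∑' y : ℤ, (if dlt r y ≤ dlt r x then (1 : ℝ≥0∞) else 0) := by
            rw [← ENNReal.tsum_mul_left]
            exact tsum_congr fun y => by rw [mul_ite, mul_one, mul_zero]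
          rw [he, mul_comm]
          exact mul_le_mul_left (count_dlt_le r (dlt r x) hr (dlt_nonneg r x)) _
    _ = 2 * ∑' y : ℤ, ENNReal.ofReal (4 * dlt r y + 6) * μ {ω | p y ω ∈ Sband r y} := by
        rw [two_mul]


open scoped Classical in
lemma sum_weighted_le (μ : Measure Ω) [IsProbabilityMeasure μ]
    (p : ℤ → Ω → ℝ) (hpm : ∀ x, Measurable (p x))
    (hmarg : ∀ x, Measure.map (p x) μ = Measure.map (p 0) μ) (r : ℝ) (hr : 2 ≤ r) :
    ∑' y : ℤ, ENNReal.ofReal (4 * dlt r y + 6) * μ {ω | p y ω ∈ Sband r y}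
      ≤ ∫⁻ ω, Phi r |p 0 ω| ∂μ := by
  have hm : ∀ y, μ {ω | p y ω ∈ Sband r y} = μ {ω | p 0 ω ∈ Sband r y} := by
    intro y
    have h1 : μ ((p y) ⁻¹' Sband r y) = (Measure.map (p y) μ) (Sband r y) :=
      (Measure.map_apply (hpm y) (measurableSet_Sband r y)).symm
    have h2 : (Measure.map (p 0) μ) (Sband r y) = μ ((p 0) ⁻¹' Sband r y) :=
      Measure.map_apply (hpm 0) (measurableSet_Sband r y)
    calc μ {ω | p y ω ∈ Sband r y} = μ ((p y) ⁻¹' Sband r y) := rfl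
      _ = (Measure.map (p y) μ) (Sband r y) := h1
      _ = (Measure.map (p 0) μ) (Sband r y) := by rw [hmarg y]
      _ = μ ((p 0) ⁻¹' Sband r y) := h2
      _ = μ {ω | p 0 ω ∈ Sband r y} := rfl
  have hmeas : ∀ y : ℤ, Measurable fun ω => (if p 0 ω ∈ Sband r y then (1 : ℝ≥0∞) else 0) :=
    fun y => Measurable.ite (hpm 0 (measurableSet_Sband r y)) measurable_const measurable_const
  have hint : ∀ y, μ {ω | p 0 ω ∈ Sband r y}
      = ∫⁻ ω, (if p 0 ω ∈ Sband r y then (1 : ℝ≥0∞) else 0) ∂μ := by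
    intro y
    have he : (fun ω => if p 0 ω ∈ Sband r y then (1 : ℝ≥0∞) else 0)
        = Set.indicator {ω | p 0 ω ∈ Sband r y} (fun _ => (1 : ℝ≥0∞)) := by
      funext ω
      rw [Set.indicator_apply]
      by_cases h : p 0 ω ∈ Sband r y <;> simp [h]
    rw [he]
    exact (lintegral_indicator_one (hpm 0 (measurableSet_Sband r y))).symm
  calc ∑' y : ℤ, ENNReal.ofReal (4 * dlt r y + 6) * μ {ω | p y ω ∈ Sband r y}
      = ∑' y : ℤ, ∫⁻ ω, ENNReal.ofReal (4 * dlt r y + 6)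
          * (if p 0 ω ∈ Sband r y then (1 : ℝ≥0∞) else 0) ∂μ := by
        refine tsum_congr fun y => ?_
        rw [hm y, hint y, lintegral_const_mul _ (hmeas y)]
    _ = ∫⁻ ω, ∑' y : ℤ, ENNReal.ofReal (4 * dlt r y + 6)
          * (if p 0 ω ∈ Sband r y then (1 : ℝ≥0∞) else 0) ∂μ := by
        rw [lintegral_tsum (f := fun y ω => ENNReal.ofReal (4 * dlt r y + 6)
            * (if p 0 ω ∈ Sband r y then (1 : ℝ≥0∞) else 0)) (fun y => ((measurable_const.mul (hmeas y))).aemeasurable)]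
    _ ≤ ∫⁻ ω, Phi r |p 0 ω| ∂μ := lintegral_mono fun ω => count_pointwise r hr (p 0 ω)

open scoped Classical in
/-- tail integral -/
def tailI (μ : Measure Ω) (f : Ω → ℝ) (L : ℝ) : ℝ≥0∞ :=
  ∫⁻ ω, (if L ≤ |f ω| then ENNReal.ofReal |f ω| else 0) ∂μ

open scoped Classical in
lemma int_Phi_le (μ : Measure Ω) [IsProbabilityMeasure μ] (f : Ω → ℝ) (hf : Measurable f)
    (L r : ℝ) (hL2 : 2 ≤ L) (hLr : L ≤ 2 * r) (hr : 2 ≤ r) :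
    ∫⁻ ω, Phi r |f ω| ∂μ
      ≤ ENNReal.ofReal (400 * L) * (∫⁻ ω, ENNReal.ofReal |f ω| ∂μ)
        + ENNReal.ofReal 800 + ENNReal.ofReal (600 * r) * tailI μ f L := by
  have habs : Measurable fun ω => |f ω| := hf.abs
  have hof : Measurable fun ω => ENNReal.ofReal |f ω| := habs.ennreal_ofReal
  have htail : Measurable fun ω => (if L ≤ |f ω| then ENNReal.ofReal |f ω| else 0) :=
    Measurable.ite (measurableSet_le measurable_const habs) hof measurable_const
  have hpt : ∀ ω, Phi r |f ω|
      ≤ ENNReal.ofReal (400 * L) * ENNReal.ofReal |f ω| + ENNReal.ofReal 800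
        + ENNReal.ofReal (600 * r) * (if L ≤ |f ω| then ENNReal.ofReal |f ω| else 0) := by
    intro ω
    set s := |f ω| with hs
    have hs0 : 0 ≤ s := abs_nonneg _
    have hP1 : ENNReal.ofReal (100 * (min s (2 * r) + 2) ^ 2)
        ≤ ENNReal.ofReal (400 * L) * ENNReal.ofReal s + ENNReal.ofReal 800
          + ENNReal.ofReal (400 * r) * (if L ≤ s then ENNReal.ofReal s else 0) := by
      rcases le_or_gt s L with h1 | h1
      · have hmin : min s (2 * r) ≤ s := min_le_left _ _
        have hmin0 : 0 ≤ min s (2 * r) := le_min hs0 (by linarith)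
        have hmm : min s (2 * r) * min s (2 * r) ≤ L * s :=
          mul_le_mul (le_trans hmin h1) hmin hmin0 (by linarith)
        have : (100 : ℝ) * (min s (2 * r) + 2) ^ 2 ≤ 400 * L * s + 800 := by
          nlinarith [hmm, hmin, h1, hs0, hL2, mul_nonneg hs0 (sub_nonneg.2 h1),
            mul_nonneg hs0 (sub_nonneg.2 hL2), mul_nonneg hs0 (by linarith : (0:ℝ) ≤ L)]
        calc ENNReal.ofReal (100 * (min s (2 * r) + 2) ^ 2)
            ≤ ENNReal.ofReal (400 * L * s + 800) := ENNReal.ofReal_le_ofReal this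
          _ = ENNReal.ofReal (400 * L) * ENNReal.ofReal s + ENNReal.ofReal 800 := by
              rw [ENNReal.ofReal_add (mul_nonneg (by linarith : (0:ℝ) ≤ 400 * L) hs0) (by norm_num),
                ← ENNReal.ofReal_mul (by linarith : (0:ℝ) ≤ 400 * L)]
          _ ≤ _ := le_self_add
      · have hmin2r : min s (2 * r) ≤ 2 * r := min_le_right _ _
        have hmins : min s (2 * r) ≤ s := min_le_left _ _
        have hmin0 : 0 ≤ min s (2 * r) := le_min hs0 (by linarith)
        have hmm : min s (2 * r) * min s (2 * r) ≤ (2 * r) * s :=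
          mul_le_mul hmin2r hmins hmin0 (by linarith)
        have : (100 : ℝ) * (min s (2 * r) + 2) ^ 2 ≤ 400 * r * s + 800 := by
          nlinarith [hmm, hmins, hmin2r, hs0, hr,
            mul_le_mul_of_nonneg_right (show (2:ℝ) ≤ r by linarith) hs0,
            mul_nonneg hs0 (by linarith : (0:ℝ) ≤ r)]
        calc ENNReal.ofReal (100 * (min s (2 * r) + 2) ^ 2)
            ≤ ENNReal.ofReal (400 * r * s + 800) := ENNReal.ofReal_le_ofReal this
          _ = ENNReal.ofReal 800 + ENNReal.ofReal (400 * r) * ENNReal.ofReal s := by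
              rw [ENNReal.ofReal_add (mul_nonneg (by linarith : (0:ℝ) ≤ 400 * r) hs0) (by norm_num),
                ← ENNReal.ofReal_mul (by linarith : (0:ℝ) ≤ 400 * r)]
              ring
          _ ≤ ENNReal.ofReal (400 * L) * ENNReal.ofReal s + ENNReal.ofReal 800
              + ENNReal.ofReal (400 * r) * (if L ≤ s then ENNReal.ofReal s else 0) := by
              rw [if_pos h1.le]
              calc ENNReal.ofReal 800 + ENNReal.ofReal (400 * r) * ENNReal.ofReal s
                  ≤ (ENNReal.ofReal (400 * L) * ENNReal.ofReal s + ENNReal.ofReal 800)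
                    + ENNReal.ofReal (400 * r) * ENNReal.ofReal s := by
                    apply add_le_add_left le_add_self
                _ = _ := rfl
    have hP2 : (if 2 * r ≤ s then ENNReal.ofReal (100 * r * (s + 2)) else 0)
        ≤ ENNReal.ofReal (200 * r) * (if L ≤ s then ENNReal.ofReal s else 0) := by
      by_cases h2 : 2 * r ≤ s
      · rw [if_pos h2, if_pos (by linarith)]
        rw [← ENNReal.ofReal_mul (by linarith : (0:ℝ) ≤ 200 * r)]
        apply ENNReal.ofReal_le_ofReal
        nlinarith [mul_le_mul_of_nonneg_left (show (4:ℝ) ≤ s by linarith)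
          (show (0:ℝ) ≤ 100 * r by linarith), hr, h2]
      · rw [if_neg h2]
        exact zero_le
    calc Phi r s ≤ (ENNReal.ofReal (400 * L) * ENNReal.ofReal s + ENNReal.ofReal 800
          + ENNReal.ofReal (400 * r) * (if L ≤ s then ENNReal.ofReal s else 0))
          + ENNReal.ofReal (200 * r) * (if L ≤ s then ENNReal.ofReal s else 0) :=
        add_le_add hP1 hP2
      _ = ENNReal.ofReal (400 * L) * ENNReal.ofReal s + ENNReal.ofReal 800
          + (ENNReal.ofReal (400 * r) + ENNReal.ofReal (200 * r))
            * (if L ≤ s then ENNReal.ofReal s else 0) := by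
          rw [add_mul]; ring
      _ = ENNReal.ofReal (400 * L) * ENNReal.ofReal s + ENNReal.ofReal 800
          + ENNReal.ofReal (600 * r) * (if L ≤ s then ENNReal.ofReal s else 0) := by
          rw [← ENNReal.ofReal_add (by linarith : (0:ℝ) ≤ 400 * r) (by linarith : (0:ℝ) ≤ 200 * r)]
          congr 1
          ring
  calc ∫⁻ ω, Phi r |f ω| ∂μ
      ≤ ∫⁻ ω, (ENNReal.ofReal (400 * L) * ENNReal.ofReal |f ω| + ENNReal.ofReal 800
          + ENNReal.ofReal (600 * r) * (if L ≤ |f ω| then ENNReal.ofReal |f ω| else 0)) ∂μ :=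
        lintegral_mono hpt
    _ = ENNReal.ofReal (400 * L) * (∫⁻ ω, ENNReal.ofReal |f ω| ∂μ)
        + ENNReal.ofReal 800 + ENNReal.ofReal (600 * r) * tailI μ f L := by
        rw [lintegral_add_right _ (g := fun ω => ENNReal.ofReal (600 * r) * (if L ≤ |f ω| then ENNReal.ofReal |f ω| else 0)) (measurable_const.mul htail),
          lintegral_add_right _ measurable_const,
          lintegral_const_mul _ hof, lintegral_const_mul _ htail, lintegral_const,
          measure_univ, mul_one]
        rfl

open scoped Classical in
lemma tail_small (μ : Measure Ω) [IsProbabilityMeasure μ] (f : Ω → ℝ) (hf : Measurable f)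
    (hI : ∫⁻ ω, ENNReal.ofReal |f ω| ∂μ ≠ ⊤) (δ : ℝ≥0∞) (hδ : δ ≠ 0) :
    ∃ L : ℝ, 2 ≤ L ∧ tailI μ f L ≤ δ := by
  set I := ∫⁻ ω, ENNReal.ofReal |f ω| ∂μ with hIdef
  set g : ℕ → Ω → ℝ≥0∞ := fun n ω => if |f ω| < n then ENNReal.ofReal |f ω| else 0 with hgdef
  have hgm : ∀ n, Measurable (g n) := fun n =>
    Measurable.ite (measurableSet_lt hf.abs measurable_const) hf.abs.ennreal_ofReal
      measurable_const
  have hmono : Monotone g := by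
    intro n m hnm ω
    simp only [hgdef]
    by_cases h : |f ω| < n
    · rw [if_pos h, if_pos (lt_of_lt_of_le h (by exact_mod_cast hnm))]
    · rw [if_neg h]
      exact zero_le
  have hsup : ∀ ω, ⨆ n, g n ω = ENNReal.ofReal |f ω| := by
    intro ω
    apply le_antisymm
    · apply iSup_le
      intro n
      simp only [hgdef]
      split
      · exact le_refl _
      · exact zero_le
    · obtain ⟨n, hn⟩ := exists_nat_gt |f ω|
      apply le_iSup_of_le n
      simp only [hgdef]
      rw [if_pos hn]
  have hlim : ⨆ n, ∫⁻ ω, g n ω ∂μ = I := by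
    rw [← lintegral_iSup hgm hmono]
    exact lintegral_congr fun ω => hsup ω
  have hdecomp : ∀ n : ℕ, tailI μ f (n : ℝ) + ∫⁻ ω, g n ω ∂μ = I := by
    intro n
    rw [tailI, ← lintegral_add_left (Measurable.ite
      (measurableSet_le measurable_const hf.abs) hf.abs.ennreal_ofReal measurable_const)]
    apply lintegral_congr
    intro ω
    by_cases h : (n : ℝ) ≤ |f ω|
    · rw [if_pos h]
      simp only [hgdef]
      rw [if_neg (not_lt.mpr h), add_zero]
    · rw [if_neg h]
      simp only [hgdef]
      rw [if_pos (not_le.mp h), zero_add]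
  rcases le_or_gt I δ with hIδ | hIδ
  · refine ⟨2, le_refl _, ?_⟩
    have h2 : tailI μ f ((2 : ℕ) : ℝ) ≤ I := by
      rw [← hdecomp 2]
      exact le_self_add
    exact_mod_cast le_trans h2 hIδ
  · have hlt : I - δ < I := ENNReal.sub_lt_self hI (by
      intro h0
      rw [h0] at hIδ
      exact (not_le.mpr hIδ) (zero_le)) hδ
    rw [← hlim] at hlt
    obtain ⟨n, hn⟩ := lt_iSup_iff.mp hlt
    refine ⟨max (n : ℝ) 2, le_max_right _ _, ?_⟩
    have hmle : tailI μ f (max (n : ℝ) 2) ≤ tailI μ f (n : ℝ) := by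
      apply lintegral_mono
      intro ω
      dsimp only
      split_ifs with h1 h2
      · exact le_refl _
      · exact absurd (le_trans (le_max_left _ _) h1) h2
      · exact zero_le
      · exact zero_le
    apply le_trans hmle
    have hgle : ∫⁻ ω, g n ω ∂μ ≤ I := by
      rw [← hdecomp n]
      exact le_add_self
    have hfin : ∫⁻ ω, g n ω ∂μ ≠ ⊤ := ne_top_of_le_ne_top hI hgle
    have hIle : I ≤ δ + ∫⁻ ω, g n ω ∂μ := by
      have hδtop : δ ≠ ⊤ := ne_top_of_lt hIδ
      rw [← hlim] at hIδ
      have h' := (ENNReal.sub_lt_iff_lt_right hδtop hIδ.le).mp hn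
      rw [hlim] at h'
      calc I ≤ ∫⁻ ω, g n ω ∂μ + δ := h'.le
        _ = δ + ∫⁻ ω, g n ω ∂μ := add_comm _ _
    have := hdecomp n
    have hkey : tailI μ f (n : ℝ) + ∫⁻ ω, g n ω ∂μ ≤ δ + ∫⁻ ω, g n ω ∂μ := by
      rw [this]
      exact hIle
    exact (ENNReal.add_le_add_iff_right hfin).mp hkey

end measure


lemma sq_add_le (a b : ℝ≥0∞) : (a + b) ^ 2 ≤ 2 * a ^ 2 + 2 * b ^ 2 := by
  rcases eq_or_ne a ⊤ with ha | ha
  · subst ha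
    have h1 : (2 : ℝ≥0∞) * ⊤ ^ 2 = ⊤ := by simp [ENNReal.top_pow]
    rw [h1]
    exact le_top.trans le_self_add
  rcases eq_or_ne b ⊤ with hb | hb
  · subst hb
    have h1 : (2 : ℝ≥0∞) * ⊤ ^ 2 = ⊤ := by simp [ENNReal.top_pow]
    rw [h1]
    exact le_top.trans le_add_self
  lift a to ℝ≥0 using ha
  lift b to ℝ≥0 using hb
  have key : ((a + b) ^ 2 : ℝ≥0) ≤ (2 * a ^ 2 + 2 * b ^ 2 : ℝ≥0) := by
    rw [← NNReal.coe_le_coe]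
    push_cast
    nlinarith [sq_nonneg ((a : ℝ) - (b : ℝ))]
  calc ((a : ℝ≥0∞) + (b : ℝ≥0∞)) ^ 2 = (((a + b) ^ 2 : ℝ≥0) : ℝ≥0∞) := by push_cast; ring
    _ ≤ ((2 * a ^ 2 + 2 * b ^ 2 : ℝ≥0) : ℝ≥0∞) := ENNReal.coe_le_coe.mpr key
    _ = 2 * (a : ℝ≥0∞) ^ 2 + 2 * (b : ℝ≥0∞) ^ 2 := by push_cast; ring

lemma ennreal_real_tsum_eq (r : ℝ) (pp : ℤ → ℝ) (u : ℝ) :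
    (∑' x : ℤ, if |(x : ℝ) + pp x + u| ≤ r then (1 : ℝ) else 0)
      = (∑' x : ℤ, if |(x : ℝ) + pp x + u| ≤ r then (1 : ℝ≥0∞) else 0).toReal := by
  by_cases hA : {x : ℤ | |(x : ℝ) + pp x + u| ≤ r}.Finite
  · rw [tsum_ite_real_count _ hA, tsum_ite_ennreal_count _ hA]
    simp
  · rw [tsum_ite_top_of_infinite _ hA]
    rw [tsum_eq_zero_of_not_summable]
    · simp
    · intro hs
      have h2 := hs.tendsto_cofinite_zero (Metric.ball_mem_nhds (0 : ℝ) one_half_pos)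
      rw [Filter.mem_map, Filter.mem_cofinite] at h2
      apply hA
      apply h2.subset
      intro x hx
      simp only [Set.mem_compl_iff, Set.mem_preimage, Metric.mem_ball] at *
      intro hball
      have : (if |(x : ℝ) + pp x + u| ≤ r then (1 : ℝ) else 0) = 1 := if_pos hx
      rw [this] at hball
      norm_num [Real.dist_eq] at hball


section evar
variable {Ω : Type} [MeasurableSpace Ω]

lemma evar_le (μ : Measure Ω) [IsProbabilityMeasure μ] (X : Ω → ℝ) (hX : Measurable X) (c : ℝ) :
    evariance X μ ≤ 4 * ∫⁻ ω, (ENNReal.ofReal |X ω - c|) ^ 2 ∂μ := by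
  set V2 := ∫⁻ ω, (ENNReal.ofReal |X ω - c|) ^ 2 ∂μ with hV2def
  by_cases hV : V2 = ⊤
  · rw [hV, ENNReal.mul_top (by norm_num)]
    exact le_top
  have hXc : Measurable fun ω => ENNReal.ofReal |X ω - c| :=
    ((hX.sub measurable_const).abs).ennreal_ofReal
  -- Cauchy-Schwarz
  have hCS : ∫⁻ ω, ENNReal.ofReal |X ω - c| ∂μ ≤ V2 ^ ((1 : ℝ) / 2) := by
    have hpq : Real.HolderConjugate 2 2 := .two_two
    have h := ENNReal.lintegral_mul_le_Lp_mul_Lq μ hpq hXc.aemeasurable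
      (aemeasurable_const (b := (1 : ℝ≥0∞)))
    simp only [Pi.mul_apply, mul_one, ENNReal.one_rpow, lintegral_const, measure_univ,
      one_mul] at h
    calc ∫⁻ ω, ENNReal.ofReal |X ω - c| ∂μ
        ≤ (∫⁻ ω, ENNReal.ofReal |X ω - c| ^ (2 : ℝ) ∂μ) ^ ((1 : ℝ) / 2) := h
      _ = V2 ^ ((1 : ℝ) / 2) := by
          rw [hV2def]
          congr 1
          apply lintegral_congr
          intro ω
          rw [← ENNReal.rpow_natCast (ENNReal.ofReal |X ω - c|) 2]
          norm_num
  have hCSfin : V2 ^ ((1 : ℝ) / 2) ≠ ⊤ :=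
    ENNReal.rpow_ne_top_of_nonneg (by norm_num) hV
  -- integrability of X
  have hXint : Integrable X μ := by
    refine ⟨hX.aestronglyMeasurable, ?_⟩
    rw [hasFiniteIntegral_iff_norm]
    calc ∫⁻ ω, ENNReal.ofReal ‖X ω‖ ∂μ
        ≤ ∫⁻ ω, (ENNReal.ofReal |X ω - c| + ENNReal.ofReal |c|) ∂μ := by
          apply lintegral_mono
          intro ω
          dsimp only
          rw [← ENNReal.ofReal_add (abs_nonneg _) (abs_nonneg _)]
          apply ENNReal.ofReal_le_ofReal
          rw [Real.norm_eq_abs]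
          calc |X ω| = |(X ω - c) + c| := by rw [sub_add_cancel]
            _ ≤ |X ω - c| + |c| := abs_add_le _ _
      _ = (∫⁻ ω, ENNReal.ofReal |X ω - c| ∂μ) + ENNReal.ofReal |c| := by
          rw [lintegral_add_right _ measurable_const, lintegral_const, measure_univ, mul_one]
      _ < ⊤ := by
          apply ENNReal.add_lt_top.mpr
          exact ⟨lt_of_le_of_lt hCS (lt_top_iff_ne_top.mpr hCSfin), ENNReal.ofReal_lt_top⟩
  set m := μ[X] with hm
  have hintsub : Integrable (fun ω => X ω - c) μ := hXint.sub (integrable_const c)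
  have hmc : ENNReal.ofReal |m - c| ≤ V2 ^ ((1 : ℝ) / 2) := by
    have h1 : m - c = ∫ ω, (X ω - c) ∂μ := by
      rw [hm, integral_sub hXint (integrable_const c), integral_const]
      simp [measure_univ]
    have h2 : |m - c| ≤ ∫ ω, |X ω - c| ∂μ := by
      rw [h1]
      have := norm_integral_le_integral_norm (μ := μ) (fun ω => X ω - c)
      simpa [Real.norm_eq_abs] using this
    have h3 : ENNReal.ofReal (∫ ω, |X ω - c| ∂μ) = ∫⁻ ω, ENNReal.ofReal |X ω - c| ∂μ :=
      ofReal_integral_eq_lintegral_ofReal hintsub.abs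
        (Filter.Eventually.of_forall fun ω => abs_nonneg _)
    calc ENNReal.ofReal |m - c| ≤ ENNReal.ofReal (∫ ω, |X ω - c| ∂μ) :=
        ENNReal.ofReal_le_ofReal h2
      _ = ∫⁻ ω, ENNReal.ofReal |X ω - c| ∂μ := h3
      _ ≤ V2 ^ ((1 : ℝ) / 2) := hCS
  have hsq : (V2 ^ ((1 : ℝ) / 2)) ^ 2 = V2 := by
    rw [← ENNReal.rpow_natCast (V2 ^ ((1 : ℝ) / 2)) 2, ← ENNReal.rpow_mul]
    norm_num
  calc evariance X μ = ∫⁻ ω, (ENNReal.ofReal |X ω - m|) ^ 2 ∂μ := by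
        rw [evariance]
        apply lintegral_congr
        intro ω
        rw [Real.enorm_eq_ofReal_abs]
    _ ≤ ∫⁻ ω, (2 * (ENNReal.ofReal |X ω - c|) ^ 2
          + 2 * (ENNReal.ofReal |m - c|) ^ 2) ∂μ := by
        apply lintegral_mono
        intro ω
        have htri : ENNReal.ofReal |X ω - m| ≤ ENNReal.ofReal |X ω - c| + ENNReal.ofReal |m - c| := by
          rw [← ENNReal.ofReal_add (abs_nonneg _) (abs_nonneg _)]
          apply ENNReal.ofReal_le_ofReal
          calc |X ω - m| ≤ |X ω - c| + |c - m| := abs_sub_le _ _ _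
            _ = |X ω - c| + |m - c| := by rw [abs_sub_comm c m]
        calc (ENNReal.ofReal |X ω - m|) ^ 2
            ≤ (ENNReal.ofReal |X ω - c| + ENNReal.ofReal |m - c|) ^ 2 := by gcongr
          _ ≤ _ := sq_add_le _ _
    _ = 2 * V2 + 2 * (ENNReal.ofReal |m - c|) ^ 2 := by
        rw [lintegral_add_right _ measurable_const,
          lintegral_const_mul _ (hXc.pow_const 2), lintegral_const, measure_univ, mul_one]
    _ ≤ 2 * V2 + 2 * V2 := by
        apply add_le_add_right
        apply mul_le_mul_right
        calc (ENNReal.ofReal |m - c|) ^ 2 ≤ (V2 ^ ((1 : ℝ) / 2)) ^ 2 := by gcongr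
          _ = V2 := hsq
    _ = 4 * V2 := by ring

end evar


section master
variable {Ω : Type} [MeasurableSpace Ω]

lemma master (μ : Measure Ω) [IsProbabilityMeasure μ]
    (p : ℤ → Ω → ℝ) (hpm : ∀ x, Measurable (p x))
    (hmarg : ∀ x, Measure.map (p x) μ = Measure.map (p 0) μ)
    (U : Ω → ℝ) (hUm : Measurable U) (hU01 : ∀ᵐ ω ∂μ, 0 ≤ U ω ∧ U ω < 1)
    (L r : ℝ) (hL2 : 2 ≤ L) (hLr : L ≤ 2 * r) (hr : 2 ≤ r) :
    evariance (fun ω => ∑' x : ℤ,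
        (if |(x : ℝ) + p x ω + U ω| ≤ r then (1 : ℝ) else 0)) μ
      ≤ ENNReal.ofReal (6400 * L) * (∫⁻ ω, ENNReal.ofReal |p 0 ω| ∂μ)
        + ENNReal.ofReal 13000 + ENNReal.ofReal (9600 * r) * tailI μ (p 0) L := by
  classical
  set X : Ω → ℝ := fun ω => ∑' x : ℤ,
    (if |(x : ℝ) + p x ω + U ω| ≤ r then (1 : ℝ) else 0) with hXdef
  have hXm : Measurable X := by
    have he : X = fun ω =>
        (∑' x : ℤ, if |(x : ℝ) + p x ω + U ω| ≤ r then (1 : ℝ≥0∞) else 0).toReal :=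
      funext fun ω => ennreal_real_tsum_eq r (fun x => p x ω) (U ω)
    rw [he]
    apply Measurable.ennreal_toReal
    apply Measurable.ennreal_tsum
    intro x
    exact Measurable.ite
      (measurableSet_le ((((hpm x).const_add ((x : ℤ) : ℝ)).add hUm).abs) measurable_const)
      measurable_const measurable_const
  have hTm : Measurable fun ω => Tval r (fun x => p x ω) := by
    apply Measurable.ennreal_tsum
    intro x
    exact Measurable.ite (hpm x (measurableSet_Sband r x)) measurable_const measurable_const
  have e1 := evar_le μ X hXm (2 * r + 1)
  have e2 : (∫⁻ ω, (ENNReal.ofReal |X ω - (2 * r + 1)|) ^ 2 ∂μ)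
      ≤ 8 + 2 * ∫⁻ ω, (Tval r (fun x => p x ω)) ^ 2 ∂μ := by
    have hpt : ∀ᵐ ω ∂μ, (ENNReal.ofReal |X ω - (2 * r + 1)|) ^ 2
        ≤ 8 + 2 * (Tval r (fun x => p x ω)) ^ 2 := by
      filter_upwards [hU01] with ω hω
      have hk := key_pointwise r hr (fun x => p x ω) (U ω) hω.1 hω.2
      calc (ENNReal.ofReal |X ω - (2 * r + 1)|) ^ 2
          ≤ (2 + Tval r (fun x => p x ω)) ^ 2 := by
            apply pow_le_pow_left' hk
        _ ≤ 2 * 2 ^ 2 + 2 * (Tval r (fun x => p x ω)) ^ 2 := sq_add_le _ _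
        _ = 8 + 2 * (Tval r (fun x => p x ω)) ^ 2 := by norm_num
    calc ∫⁻ ω, (ENNReal.ofReal |X ω - (2 * r + 1)|) ^ 2 ∂μ
        ≤ ∫⁻ ω, (8 + 2 * (Tval r (fun x => p x ω)) ^ 2) ∂μ := lintegral_mono_ae hpt
      _ = 8 + 2 * ∫⁻ ω, (Tval r (fun x => p x ω)) ^ 2 ∂μ := by
          rw [lintegral_add_left measurable_const, lintegral_const, measure_univ, mul_one,
            lintegral_const_mul _ (hTm.pow_const 2)]
  have e3 := int_Tsq_le μ p hpm r (by linarith)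
  have e4 := sum_weighted_le μ p hpm hmarg r hr
  have e5 := int_Phi_le μ (p 0) (hpm 0) L r hL2 hLr hr
  -- combine
  set I' := ∫⁻ ω, ENNReal.ofReal |p 0 ω| ∂μ with hI'
  set τ := tailI μ (p 0) L with hτ
  have hbig : evariance X μ
      ≤ 4 * (8 + 2 * (2 * (ENNReal.ofReal (400 * L) * I' + ENNReal.ofReal 800
          + ENNReal.ofReal (600 * r) * τ))) := by
    calc evariance X μ ≤ 4 * ∫⁻ ω, (ENNReal.ofReal |X ω - (2 * r + 1)|) ^ 2 ∂μ := e1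
      _ ≤ 4 * (8 + 2 * ∫⁻ ω, (Tval r (fun x => p x ω)) ^ 2 ∂μ) := by gcongr
      _ ≤ 4 * (8 + 2 * (2 * ∑' y : ℤ, ENNReal.ofReal (4 * dlt r y + 6)
            * μ {ω | p y ω ∈ Sband r y})) := by gcongr
      _ ≤ 4 * (8 + 2 * (2 * ∫⁻ ω, Phi r |p 0 ω| ∂μ)) := by gcongr
      _ ≤ _ := by gcongr
  apply le_trans hbig
  have h32 : (4 : ℝ≥0∞) * 8 = ENNReal.ofReal 32 := by
    rw [show ((32 : ℝ) : ℝ) = 32 from rfl]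
    norm_num [ENNReal.ofReal_ofNat]
  have h16 : ∀ a : ℝ, 0 ≤ a → (16 : ℝ≥0∞) * ENNReal.ofReal a = ENNReal.ofReal (16 * a) := by
    intro a ha
    rw [ENNReal.ofReal_mul (by norm_num : (0:ℝ) ≤ 16)]
    norm_num [ENNReal.ofReal_ofNat]
  calc 4 * (8 + 2 * (2 * (ENNReal.ofReal (400 * L) * I' + ENNReal.ofReal 800
        + ENNReal.ofReal (600 * r) * τ)))
      = 4 * 8 + (16 * ENNReal.ofReal (400 * L)) * I' + 16 * ENNReal.ofReal 800
        + (16 * ENNReal.ofReal (600 * r)) * τ := by ring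
    _ = ENNReal.ofReal 32 + ENNReal.ofReal (6400 * L) * I' + ENNReal.ofReal 12800
        + ENNReal.ofReal (9600 * r) * τ := by
        rw [h32, h16 (400 * L) (by linarith), h16 800 (by norm_num), h16 (600 * r) (by linarith),
          show (16 : ℝ) * (400 * L) = 6400 * L from by ring,
          show (16 : ℝ) * 800 = 12800 from by norm_num,
          show (16 : ℝ) * (600 * r) = 9600 * r from by ring]
    _ ≤ ENNReal.ofReal (6400 * L) * I' + ENNReal.ofReal 13000 + ENNReal.ofReal (9600 * r) * τ := by
        calc ENNReal.ofReal 32 + ENNReal.ofReal (6400 * L) * I' + ENNReal.ofReal 12800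
              + ENNReal.ofReal (9600 * r) * τ
            = ENNReal.ofReal (6400 * L) * I' + (ENNReal.ofReal 32 + ENNReal.ofReal 12800)
              + ENNReal.ofReal (9600 * r) * τ := by ring
          _ = ENNReal.ofReal (6400 * L) * I' + ENNReal.ofReal 12832
              + ENNReal.ofReal (9600 * r) * τ := by
              rw [← ENNReal.ofReal_add (by norm_num) (by norm_num)]
              norm_num
          _ ≤ _ :=
              add_le_add (add_le_add le_rfl (ENNReal.ofReal_le_ofReal (by norm_num))) le_rfl

end master

end PLaux

open PLaux in
/-- In dimension 1, if the ℤ-invariant perturbations have a finite first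
moment, then the perturbed lattice is hyperuniform: `Var[N_r]/(2r) → 0` as `r → ∞`. -/
theorem perturbed_lattice_dim_one_hyperuniform_of_finite_first_moment
    {Ω : Type} [MeasureSpace Ω] [IsProbabilityMeasure (ℙ : Measure Ω)]
    (p : ℤ → Ω → ℝ)
    (hpm : ∀ x, Measurable (p x))
    (hinv : ∀ z : ℤ,
      Measure.map (fun ω => fun x : ℤ => p (x + z) ω) (ℙ : Measure Ω)
        = Measure.map (fun ω => fun x : ℤ => p x ω) (ℙ : Measure Ω))
    (hmom : Integrable (p 0) (ℙ : Measure Ω))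
    (U : Ω → ℝ) (hUm : Measurable U)
    (hU : Measure.map U (ℙ : Measure Ω) = volume.restrict (Set.Ico (0:ℝ) 1))
    (hUindep : IndepFun U (fun ω => fun x : ℤ => p x ω) (ℙ : Measure Ω)) :
    Tendsto (fun r : ℝ =>
        evariance (fun ω => ∑' x : ℤ,
            (if |(x : ℝ) + p x ω + U ω| ≤ r then (1 : ℝ) else 0)) (ℙ : Measure Ω)
          / ENNReal.ofReal (2 * r))
      atTop (nhds 0) := by
  -- marginal laws agree
  have hmarg : ∀ x : ℤ, Measure.map (p x) (ℙ : Measure Ω) = Measure.map (p 0) (ℙ : Measure Ω) := by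
    intro x
    have h1 : Measurable fun ω => fun y : ℤ => p (y + x) ω :=
      measurable_pi_lambda _ (fun y => hpm (y + x))
    have h0 : Measurable fun ω => fun y : ℤ => p y ω :=
      measurable_pi_lambda _ (fun y => hpm y)
    have e1 : p x = (fun f : ℤ → ℝ => f 0) ∘ (fun ω => fun y : ℤ => p (y + x) ω) := by
      funext ω; simp
    calc Measure.map (p x) (ℙ : Measure Ω)
        = Measure.map ((fun f : ℤ → ℝ => f 0) ∘ (fun ω => fun y : ℤ => p (y + x) ω))
            (ℙ : Measure Ω) := by rw [← e1]
      _ = Measure.map (fun f : ℤ → ℝ => f 0)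
            (Measure.map (fun ω => fun y : ℤ => p (y + x) ω) (ℙ : Measure Ω)) :=
          (Measure.map_map (measurable_pi_apply 0) h1).symm
      _ = Measure.map (fun f : ℤ → ℝ => f 0)
            (Measure.map (fun ω => fun y : ℤ => p y ω) (ℙ : Measure Ω)) := by rw [hinv x]
      _ = Measure.map ((fun f : ℤ → ℝ => f 0) ∘ (fun ω => fun y : ℤ => p y ω))
            (ℙ : Measure Ω) := Measure.map_map (measurable_pi_apply 0) h0
      _ = Measure.map (p 0) (ℙ : Measure Ω) := rfl
  -- finite first moment
  have hI : (∫⁻ ω, ENNReal.ofReal |p 0 ω| ∂(ℙ : Measure Ω)) ≠ ⊤ := by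
    have h := hmom.2
    rw [hasFiniteIntegral_iff_norm] at h
    have he : (∫⁻ ω, ENNReal.ofReal ‖p 0 ω‖ ∂(ℙ : Measure Ω))
        = ∫⁻ ω, ENNReal.ofReal |p 0 ω| ∂(ℙ : Measure Ω) := by
      apply lintegral_congr; intro ω; rw [Real.norm_eq_abs]
    rw [he] at h
    exact h.ne
  -- U lands in [0,1) almost surely
  have hU01 : ∀ᵐ ω ∂(ℙ : Measure Ω), 0 ≤ U ω ∧ U ω < 1 := by
    have hpre : (ℙ : Measure Ω) (U ⁻¹' Set.Ico (0 : ℝ) 1) = 1 := by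
      rw [← Measure.map_apply hUm measurableSet_Ico, hU]
      rw [Measure.restrict_apply measurableSet_Ico]
      simp [Real.volume_Ico]
    rw [ae_iff]
    have hset : {ω | ¬(0 ≤ U ω ∧ U ω < 1)} = (U ⁻¹' Set.Ico (0 : ℝ) 1)ᶜ := by
      ext ω
      simp only [Set.mem_setOf_eq, Set.mem_compl_iff, Set.mem_preimage, Set.mem_Ico]
    rw [hset, measure_compl (hUm measurableSet_Ico) (measure_ne_top _ _), hpre, measure_univ]
    simp
  rw [ENNReal.tendsto_nhds_zero]
  intro ε hε
  set ε' := min ε 1 with hε'def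
  have hε'0 : ε' ≠ 0 := (lt_min hε (by norm_num)).ne'
  have hε'top : ε' ≠ ⊤ := ne_top_of_le_ne_top (by norm_num) (min_le_right ε 1)
  have hhalf_ne_top : ε' / 2 ≠ ⊤ := ne_top_of_le_ne_top hε'top ENNReal.half_le_self
  have hhalf_ne0 : ε' / 2 ≠ 0 := by
    simp only [ne_eq, ENNReal.div_eq_zero_iff]
    push_neg
    exact ⟨hε'0, by norm_num⟩
  set δ := (ε' / 2) / ENNReal.ofReal 4800 with hδdef
  have hδ0 : δ ≠ 0 := by
    rw [hδdef]
    intro h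
    rcases ENNReal.div_eq_zero_iff.mp h with h | h
    · exact hhalf_ne0 h
    · exact ENNReal.ofReal_ne_top h
  obtain ⟨L, hL2, hLτ⟩ := tail_small (ℙ : Measure Ω) (p 0) (hpm 0) hI δ hδ0
  set CL := ENNReal.ofReal (6400 * L) * (∫⁻ ω, ENNReal.ofReal |p 0 ω| ∂(ℙ : Measure Ω))
      + ENNReal.ofReal 13000 with hCLdef
  have hCLtop : CL ≠ ⊤ := by
    rw [hCLdef]
    exact (ENNReal.add_ne_top).mpr ⟨ENNReal.mul_ne_top ENNReal.ofReal_ne_top hI,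
      ENNReal.ofReal_ne_top⟩
  have hε2 : (0 : ℝ) < (ε' / 2).toReal := ENNReal.toReal_pos hhalf_ne0 hhalf_ne_top
  set R := max (max L 2) (CL.toReal / (ε' / 2).toReal + 1) with hRdef
  filter_upwards [eventually_ge_atTop R] with r hrR
  have hr2 : (2 : ℝ) ≤ r := le_trans (le_trans (le_max_right L 2) (le_max_left _ _)) hrR
  have hrL : L ≤ r := le_trans (le_trans (le_max_left L 2) (le_max_left _ _)) hrR
  have hLr : L ≤ 2 * r := by linarith
  have hmain := master (ℙ : Measure Ω) p hpm hmarg U hUm hU01 L r hL2 hLr hr2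
  have hden0 : ENNReal.ofReal (2 * r) ≠ 0 := by
    simp only [ne_eq, ENNReal.ofReal_eq_zero, not_le]
    linarith
  have hdentop : ENNReal.ofReal (2 * r) ≠ ⊤ := ENNReal.ofReal_ne_top
  have hterm1 : CL / ENNReal.ofReal (2 * r) ≤ ε' / 2 := by
    rw [ENNReal.div_le_iff_le_mul (Or.inl hden0) (Or.inl hdentop)]
    have h1 : CL = ENNReal.ofReal CL.toReal := (ENNReal.ofReal_toReal hCLtop).symm
    have h2 : ε' / 2 = ENNReal.ofReal ((ε' / 2).toReal) :=
      (ENNReal.ofReal_toReal hhalf_ne_top).symm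
    rw [h1, h2, ← ENNReal.ofReal_mul ENNReal.toReal_nonneg]
    apply ENNReal.ofReal_le_ofReal
    have hrbig : CL.toReal / (ε' / 2).toReal + 1 ≤ r := le_trans (le_max_right _ _) hrR
    have hd : CL.toReal ≤ (ε' / 2).toReal * (CL.toReal / (ε' / 2).toReal) := by
      rw [mul_div_cancel₀ _ hε2.ne']
    nlinarith [ENNReal.toReal_nonneg (a := CL)]
  have hterm2 : (ENNReal.ofReal (9600 * r) * tailI (ℙ : Measure Ω) (p 0) L)
      / ENNReal.ofReal (2 * r) ≤ ε' / 2 := by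
    have hco : ENNReal.ofReal (9600 * r) = ENNReal.ofReal 4800 * ENNReal.ofReal (2 * r) := by
      rw [← ENNReal.ofReal_mul (by norm_num)]
      congr 1
      ring
    rw [ENNReal.div_le_iff_le_mul (Or.inl hden0) (Or.inl hdentop), hco]
    have hτb : ENNReal.ofReal 4800 * tailI (ℙ : Measure Ω) (p 0) L ≤ ε' / 2 := by
      calc ENNReal.ofReal 4800 * tailI (ℙ : Measure Ω) (p 0) L
          ≤ ENNReal.ofReal 4800 * δ := mul_le_mul_right hLτ _
        _ = ε' / 2 := by
            rw [hδdef]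
            exact ENNReal.mul_div_cancel' (fun h => absurd h (by simp)) (fun h => absurd h ENNReal.ofReal_ne_top)
    calc ENNReal.ofReal 4800 * ENNReal.ofReal (2 * r) * tailI (ℙ : Measure Ω) (p 0) L
        = (ENNReal.ofReal 4800 * tailI (ℙ : Measure Ω) (p 0) L) * ENNReal.ofReal (2 * r) := by
          ring
      _ ≤ (ε' / 2) * ENNReal.ofReal (2 * r) := mul_le_mul_left hτb _
  calc evariance (fun ω => ∑' x : ℤ,
          (if |(x : ℝ) + p x ω + U ω| ≤ r then (1 : ℝ) else 0)) (ℙ : Measure Ω)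
        / ENNReal.ofReal (2 * r)
      ≤ (CL + ENNReal.ofReal (9600 * r) * tailI (ℙ : Measure Ω) (p 0) L)
        / ENNReal.ofReal (2 * r) := by
        apply ENNReal.div_le_div_right
        rw [hCLdef]
        exact hmain
    _ = CL / ENNReal.ofReal (2 * r)
        + (ENNReal.ofReal (9600 * r) * tailI (ℙ : Measure Ω) (p 0) L)
          / ENNReal.ofReal (2 * r) := ENNReal.add_div
    _ ≤ ε' / 2 + ε' / 2 := add_le_add hterm1 hterm2
    _ = ε' := ENNReal.add_halves ε'
    _ ≤ ε := min_le_left _ _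
end PLaux
end

section
/- Let (p_x)_{x∈ℤ} be a ℤ-invariant family of real random variables with E[|p_0|²] < ∞, and let U be uniformly distributed on [0,1) and independent of (p_x). Then the one-dimensional perturbed lattice is class-I hyperuniform: there exists a constant C > 0 such that Var[N_r] ≤ C for all r ≥ 1, where N_r := ∑_{x∈ℤ} 1{ |x + p_x + U| ≤ r }. -/
open MeasureTheory ProbabilityTheory Filter Set
open scoped ENNReal



private lemma aux_sq_add_le (a b : ℝ≥0∞) : (a + b) ^ 2 ≤ 4 * a ^ 2 + 4 * b ^ 2 := by
  rcases le_total a b with h | h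
  · calc (a + b) ^ 2 ≤ (b + b) ^ 2 := by gcongr
      _ = 4 * b ^ 2 := by ring
      _ ≤ 4 * a ^ 2 + 4 * b ^ 2 := le_add_self
  · calc (a + b) ^ 2 ≤ (a + a) ^ 2 := by gcongr
      _ = 4 * a ^ 2 := by ring
      _ ≤ 4 * a ^ 2 + 4 * b ^ 2 := le_self_add

private lemma aux_le_sq_add_one (a : ℝ≥0∞) : a ≤ a ^ 2 + 1 := by
  rcases le_total a 1 with h | h
  · exact h.trans le_add_self
  · calc a = a * 1 := (mul_one a).symm
      _ ≤ a * a := by gcongr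
      _ = a ^ 2 := (sq a).symm
      _ ≤ a ^ 2 + 1 := le_self_add

private lemma aux_count_natAbs (z : ℤ) (m : ℕ) :
    ∑' y : ℤ, (if (y - z).natAbs ≤ m then (1 : ℝ≥0∞) else 0) = ((2 * m + 1 : ℕ) : ℝ≥0∞) := by
  rw [tsum_eq_sum (s := Finset.Icc (z - (m : ℤ)) (z + (m : ℤ)))
      (fun y hy => if_neg (fun h => hy (Finset.mem_Icc.2 (by omega))))]
  rw [Finset.sum_congr rfl (fun y hy => if_pos (by rw [Finset.mem_Icc] at hy; omega))]
  rw [Finset.sum_const, Int.card_Icc, nsmul_eq_mul, mul_one]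
  congr 1
  omega

private lemma aux_tsum_int_le (g : ℕ → ℝ≥0∞) (z : ℤ) :
    ∑' x : ℤ, g ((x - z).natAbs) ≤ 2 * ∑' m : ℕ, g m := by
  rw [← Summable.tsum_add_tsum_compl (s := {x : ℤ | z ≤ x}) (f := fun x : ℤ => g ((x - z).natAbs))
      ENNReal.summable ENNReal.summable, two_mul]
  gcongr
  · have hinj : Function.Injective (fun x : {x : ℤ | z ≤ x} => ((x : ℤ) - z).natAbs) := by
      rintro ⟨x, hx⟩ ⟨y, hy⟩ h
      simp only [Set.mem_setOf_eq] at hx hy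
      dsimp only at h
      simp only [Subtype.mk.injEq]
      omega
    exact ENNReal.tsum_comp_le_tsum_of_injective hinj g
  · have hinj : Function.Injective (fun x : ↥{x : ℤ | z ≤ x}ᶜ => ((x : ℤ) - z).natAbs) := by
      rintro ⟨x, hx⟩ ⟨y, hy⟩ h
      simp only [Set.mem_compl_iff, Set.mem_setOf_eq, not_le] at hx hy
      dsimp only at h
      simp only [Subtype.mk.injEq]
      omega
    exact ENNReal.tsum_comp_le_tsum_of_injective hinj g


private lemma aux_near {s u c : ℝ} (hu0 : 0 ≤ u) (hu1 : u < 1) (x : ℤ)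
    (h : |(x : ℝ) + u - s| ≤ c) : ((x - ⌊s⌋).natAbs : ℝ) ≤ c + 1 := by
  have hfl : (⌊s⌋ : ℝ) ≤ s := Int.floor_le s
  have hfl2 : s < (⌊s⌋ : ℝ) + 1 := Int.lt_floor_add_one s
  have hcast : ((x - ⌊s⌋).natAbs : ℝ) = |(x : ℝ) - (⌊s⌋ : ℝ)| := by
    rw [Nat.cast_natAbs]
    push_cast
    ring_nf
  rw [hcast]
  have hdec : (x : ℝ) - (⌊s⌋ : ℝ) = ((x : ℝ) + u - s) + (s - (⌊s⌋ : ℝ) - u) := by ring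
  calc |(x : ℝ) - (⌊s⌋ : ℝ)| ≤ |(x : ℝ) + u - s| + |s - (⌊s⌋ : ℝ) - u| := by
        rw [hdec]; exact abs_add_le _ _
    _ ≤ c + 1 := by
      have : |s - (⌊s⌋ : ℝ) - u| ≤ 1 := by
        rw [abs_le]; constructor <;> linarith
      linarith

private lemma aux_cross {r u q : ℝ} (hu0 : 0 ≤ u) (hu1 : u < 1) (x : ℤ)
    (h : ¬(|(x : ℝ) + q + u| ≤ r ↔ |(x : ℝ) + u| ≤ r)) :
    ((x - ⌊r⌋).natAbs : ℝ) ≤ |q| + 1 ∨ ((x - ⌊-r⌋).natAbs : ℝ) ≤ |q| + 1 := by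
  have key : |(x : ℝ) + u - r| ≤ |q| ∨ |(x : ℝ) + u - (-r)| ≤ |q| := by
    set w : ℝ := (x : ℝ) + u with hw
    by_cases c1 : |(x : ℝ) + q + u| ≤ r
    · have c2 : ¬|w| ≤ r := fun hc => h ⟨fun _ => hc, fun _ => c1⟩
      rw [abs_le] at c1
      rw [not_le, lt_abs] at c2
      rcases c2 with hgt | hgt
      · left
        calc |w - r| = w - r := abs_of_pos (by linarith)
          _ ≤ -q := by linarith [c1.2]
          _ ≤ |q| := neg_le_abs q
      · right
        calc |w - (-r)| = -(w + r) := by rw [sub_neg_eq_add]; exact abs_of_neg (by linarith)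
          _ ≤ q := by linarith [c1.1]
          _ ≤ |q| := le_abs_self q
    · have c2 : |w| ≤ r := by
        by_contra hc
        exact h ⟨fun h1 => absurd h1 c1, fun h2 => absurd h2 hc⟩
      rw [abs_le] at c2
      rw [not_le, lt_abs] at c1
      rcases c1 with hgt | hgt
      · left
        calc |w - r| = -(w - r) := abs_of_nonpos (by linarith [c2.2])
          _ ≤ q := by linarith
          _ ≤ |q| := le_abs_self q
      · right
        calc |w - (-r)| = w + r := by rw [sub_neg_eq_add]; exact abs_of_nonneg (by linarith [c2.1])
          _ ≤ -q := by linarith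
          _ ≤ |q| := neg_le_abs q
  rcases key with hk | hk
  · exact Or.inl (aux_near hu0 hu1 x hk)
  · exact Or.inr (aux_near hu0 hu1 x hk)

private lemma aux_lint_if {α : Type*} [MeasurableSpace α] (μ : Measure α) (c : α → Prop)
    [inst : ∀ a, Decidable (c a)] (hs : MeasurableSet {a | c a}) :
    ∫⁻ a, (if c a then (1 : ℝ≥0∞) else 0) ∂μ = μ {a | c a} := by
  have h : ∀ a, (if c a then (1 : ℝ≥0∞) else 0) = Set.indicator {x | c x} (fun _ => (1 : ℝ≥0∞)) a := by
    intro a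
    by_cases hc : c a
    · simp [Set.indicator_apply, Set.mem_setOf_eq, hc]
    · simp [Set.indicator_apply, Set.mem_setOf_eq, hc]
  simp_rw [h]
  rw [lintegral_indicator hs]
  simp

private lemma aux_tsum_toReal {ι : Type*} [Countable ι] (c : ι → Prop) [∀ i, Decidable (c i)] :
    (∑' i, if c i then (1 : ℝ) else 0) = (∑' i, if c i then (1 : ℝ≥0∞) else 0).toReal := by
  rw [ENNReal.tsum_toReal_eq (fun i => by split <;> simp)]
  congr 1
  funext i
  split <;> simp


private lemma aux_gauss (t : ℝ) (ht : 1 ≤ t) :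
    ∑' m : ℕ, (m : ℝ≥0∞) * (if (m : ℝ) ≤ t then 1 else 0) ≤ ENNReal.ofReal (2 * t ^ 2) := by
  have ht0 : (0 : ℝ) ≤ t := by linarith
  set k := Nat.floor t with hk
  have hside : ∀ m ∉ Finset.range (k + 1), (m : ℝ≥0∞) * (if (m : ℝ) ≤ t then 1 else 0) = 0 := by
    intro m hm
    have hmt : ¬((m : ℝ) ≤ t) := fun h => hm (Finset.mem_range.2 (Nat.lt_succ_of_le (Nat.le_floor h)))
    simp [hmt]
  rw [tsum_eq_sum hside]
  calc ∑ m ∈ Finset.range (k + 1), (m : ℝ≥0∞) * (if (m : ℝ) ≤ t then 1 else 0)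
      ≤ ∑ _m ∈ Finset.range (k + 1), (k : ℝ≥0∞) := by
        refine Finset.sum_le_sum fun m hm => ?_
        have h1 : (m : ℝ≥0∞) ≤ (k : ℝ≥0∞) := by
          exact_mod_cast Nat.cast_le.2 (Nat.lt_succ_iff.mp (Finset.mem_range.mp hm))
        calc (m : ℝ≥0∞) * (if (m : ℝ) ≤ t then 1 else 0) ≤ (k : ℝ≥0∞) * 1 := by
              gcongr; split <;> simp
          _ = (k : ℝ≥0∞) := mul_one _
    _ = ((k + 1 : ℕ) : ℝ≥0∞) * (k : ℝ≥0∞) := by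
        rw [Finset.sum_const, Finset.card_range, nsmul_eq_mul]
    _ ≤ ENNReal.ofReal (2 * t ^ 2) := by
        have hkt : (k : ℝ) ≤ t := Nat.floor_le ht0
        have h1 : ((k + 1 : ℕ) : ℝ) * ((k : ℕ) : ℝ) ≤ 2 * t ^ 2 := by push_cast; nlinarith
        calc ((k + 1 : ℕ) : ℝ≥0∞) * (k : ℝ≥0∞)
            = ENNReal.ofReal ((k + 1 : ℕ) : ℝ) * ENNReal.ofReal ((k : ℕ) : ℝ) := by
              rw [ENNReal.ofReal_natCast, ENNReal.ofReal_natCast]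
          _ = ENNReal.ofReal (((k + 1 : ℕ) : ℝ) * ((k : ℕ) : ℝ)) := by
              rw [ENNReal.ofReal_mul (by positivity)]
          _ ≤ _ := ENNReal.ofReal_le_ofReal h1

private lemma aux_interval_count (r u : ℝ) (hr : 1 ≤ r) :
    ∃ d : ℕ, (∑' x : ℤ, (if |(x : ℝ) + u| ≤ r then (1 : ℝ≥0∞) else 0)) = (d : ℝ≥0∞) ∧
      2 * r - 1 ≤ (d : ℝ) ∧ (d : ℝ) ≤ 2 * r + 1 := by
  set a := ⌈-r - u⌉ with ha
  set b := ⌊r - u⌋ with hb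
  have h1 : (a : ℝ) < -r - u + 1 := Int.ceil_lt_add_one _
  have h2 : r - u - 1 < (b : ℝ) := Int.sub_one_lt_floor _
  have h3 : -r - u ≤ (a : ℝ) := Int.le_ceil _
  have h4 : (b : ℝ) ≤ r - u := Int.floor_le _
  have hab : a ≤ b + 1 := by
    have : (a : ℝ) ≤ (b : ℝ) + 1 := by linarith
    exact_mod_cast this
  have hnn : (0 : ℤ) ≤ b + 1 - a := by omega
  have hcast : ((b + 1 - a).toNat : ℝ) = (b : ℝ) + 1 - (a : ℝ) := by
    have h := Int.toNat_of_nonneg hnn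
    exact_mod_cast congrArg (fun z : ℤ => (z : ℝ)) h
  refine ⟨(b + 1 - a).toNat, ?_, by rw [hcast]; linarith, by rw [hcast]; linarith⟩
  have hside : ∀ y ∉ Finset.Icc a b, (if |(y : ℝ) + u| ≤ r then (1 : ℝ≥0∞) else 0) = 0 := by
    intro y hy
    rw [Finset.mem_Icc, not_and_or, not_le, not_le] at hy
    rw [if_neg]
    intro hcon
    rw [abs_le] at hcon
    rcases hy with hy | hy
    · have hy' : (y : ℝ) ≤ (a : ℝ) - 1 := by exact_mod_cast Int.le_sub_one_of_lt hy
      linarith [hcon.1]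
    · have hy' : (b : ℝ) + 1 ≤ (y : ℝ) := by exact_mod_cast Int.add_one_le_of_lt hy
      linarith [hcon.2]
  rw [tsum_eq_sum hside]
  rw [Finset.sum_congr rfl (fun y hy => ?_), Finset.sum_const, Int.card_Icc, nsmul_eq_mul,
    mul_one]
  rw [Finset.mem_Icc] at hy
  rw [if_pos]
  rw [abs_le]
  have hy1 : (a : ℝ) ≤ (y : ℝ) := by exact_mod_cast hy.1
  have hy2 : (y : ℝ) ≤ (b : ℝ) := by exact_mod_cast hy.2
  constructor <;> linarith


/-- In dimension 1, if the ℤ-invariant perturbations have a finite second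
moment, then the perturbed lattice is class-I hyperuniform: the number variance `Var[N_r]`
stays bounded as `r → ∞`. -/
theorem perturbed_lattice_dim_one_classI_of_finite_second_moment
    {Ω : Type} [MeasureSpace Ω] [IsProbabilityMeasure (ℙ : Measure Ω)]
    (p : ℤ → Ω → ℝ)
    (hpm : ∀ x, Measurable (p x))
    (hinv : ∀ z : ℤ,
      Measure.map (fun ω => fun x : ℤ => p (x + z) ω) (ℙ : Measure Ω)
        = Measure.map (fun ω => fun x : ℤ => p x ω) (ℙ : Measure Ω))
    (hmom : Integrable (fun ω => |p 0 ω| ^ 2) (ℙ : Measure Ω))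
    (U : Ω → ℝ) (hUm : Measurable U)
    (hU : Measure.map U (ℙ : Measure Ω) = volume.restrict (Set.Ico (0:ℝ) 1))
    (hUindep : IndepFun U (fun ω => fun x : ℤ => p x ω) (ℙ : Measure Ω)) :
    ∃ C : ℝ, 0 < C ∧ ∀ r : ℝ, 1 ≤ r →
      evariance (fun ω => ∑' x : ℤ,
          (if |(x : ℝ) + p x ω + U ω| ≤ r then (1 : ℝ) else 0)) (ℙ : Measure Ω)
        ≤ ENNReal.ofReal C := by
  have hm2nn : 0 ≤ ∫ ω, |p 0 ω| ^ 2 := integral_nonneg fun ω => sq_nonneg _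
  set m2 : ℝ := ∫ ω, |p 0 ω| ^ 2 with hm2
  refine ⟨768 * m2 + 900, by linarith, fun r hr => ?_⟩
  -- marginal stationarity
  have hFm : Measurable (fun ω => fun y : ℤ => p y ω) := measurable_pi_lambda _ hpm
  have hmap : ∀ x : ℤ, Measure.map (p x) ℙ = Measure.map (p 0) ℙ := by
    intro x
    have hGm : Measurable (fun ω => fun y : ℤ => p (y + x) ω) :=
      measurable_pi_lambda _ (fun y => hpm _)
    have hev : Measurable (fun g : ℤ → ℝ => g 0) := measurable_pi_apply 0
    have h2 := congrArg (Measure.map (fun g : ℤ → ℝ => g 0)) (hinv x)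
    rw [Measure.map_map hev hGm, Measure.map_map hev hFm] at h2
    have e1 : ((fun g : ℤ → ℝ => g 0) ∘ (fun ω => fun y : ℤ => p (y + x) ω)) = p x := by
      funext ω; simp
    have e2 : ((fun g : ℤ → ℝ => g 0) ∘ (fun ω => fun y : ℤ => p y ω)) = p 0 := rfl
    rw [e1, e2] at h2
    exact h2
  -- tail probabilities
  set q : ℕ → ℝ≥0∞ := fun m => ℙ {ω | (m : ℝ) ≤ |p 0 ω| + 1} with hq
  have hsetm : ∀ (m : ℕ), MeasurableSet {y : ℝ | (m : ℝ) ≤ |y| + 1} :=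
    fun m => measurableSet_le measurable_const (measurable_abs.add measurable_const)
  have hsetm' : ∀ (x : ℤ) (m : ℕ), MeasurableSet {ω | (m : ℝ) ≤ |p x ω| + 1} :=
    fun x m => (hpm x) (hsetm m)
  have hqx : ∀ (x : ℤ) (m : ℕ), ℙ {ω | (m : ℝ) ≤ |p x ω| + 1} = q m := by
    intro x m
    have h1 : {ω | (m : ℝ) ≤ |p x ω| + 1} = p x ⁻¹' {y | (m : ℝ) ≤ |y| + 1} := rfl
    have h2 : {ω | (m : ℝ) ≤ |p 0 ω| + 1} = p 0 ⁻¹' {y | (m : ℝ) ≤ |y| + 1} := rfl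
    rw [h1, ← Measure.map_apply (hpm x) (hsetm m), hmap x,
      Measure.map_apply (hpm 0) (hsetm m), ← h2, hq]
  -- second moment in ENNReal
  set M : ℝ≥0∞ := ∫⁻ ω, ENNReal.ofReal ((|p 0 ω| + 1) ^ 2) ∂ℙ with hM
  have hMle : M ≤ ENNReal.ofReal (2 * m2 + 2) := by
    have hps : Measurable fun ω => |p 0 ω| ^ 2 := (hpm 0).abs.pow_const 2
    calc M ≤ ∫⁻ ω, (2 * ENNReal.ofReal (|p 0 ω| ^ 2) + 2) ∂ℙ := by
          apply lintegral_mono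
          intro ω
          have h1 : (|p 0 ω| + 1) ^ 2 ≤ 2 * (|p 0 ω| ^ 2) + 2 := by
            nlinarith [abs_nonneg (p 0 ω), sq_nonneg (|p 0 ω| - 1)]
          calc ENNReal.ofReal ((|p 0 ω| + 1) ^ 2)
              ≤ ENNReal.ofReal (2 * (|p 0 ω| ^ 2) + 2) := ENNReal.ofReal_le_ofReal h1
            _ = 2 * ENNReal.ofReal (|p 0 ω| ^ 2) + 2 := by
                rw [ENNReal.ofReal_add (by positivity) (by norm_num),
                  ENNReal.ofReal_mul (by norm_num)]
                norm_num
      _ = 2 * (∫⁻ ω, ENNReal.ofReal (|p 0 ω| ^ 2) ∂ℙ) + 2 := by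
          rw [lintegral_add_right _ measurable_const, lintegral_const_mul 2 hps.ennreal_ofReal,
            lintegral_const]
          simp
      _ = 2 * ENNReal.ofReal m2 + 2 := by
          rw [← ofReal_integral_eq_lintegral_ofReal hmom (ae_of_all _ fun ω => sq_nonneg _)]
      _ ≤ ENNReal.ofReal (2 * m2 + 2) := by
          rw [ENNReal.ofReal_add (by linarith) (by norm_num), ENNReal.ofReal_mul (by norm_num)]
          norm_num
  have hMtop : M ≠ ⊤ := (hMle.trans_lt ENNReal.ofReal_lt_top).ne
  -- moment sum bounds
  have hmeasif : ∀ m : ℕ,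
      Measurable (fun ω => (if (m : ℝ) ≤ |p 0 ω| + 1 then (1 : ℝ≥0∞) else 0)) :=
    fun m => Measurable.ite (hsetm' 0 m) measurable_const measurable_const
  have hMq : ∑' m : ℕ, (m : ℝ≥0∞) * q m ≤ 2 * M := by
    calc ∑' m : ℕ, (m : ℝ≥0∞) * q m
        = ∑' m : ℕ, ∫⁻ ω, (m : ℝ≥0∞) * (if (m : ℝ) ≤ |p 0 ω| + 1 then (1 : ℝ≥0∞) else 0) ∂ℙ := by
          refine tsum_congr fun m => ?_
          rw [lintegral_const_mul _ (hmeasif m),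
            aux_lint_if ℙ (fun ω => (m : ℝ) ≤ |p 0 ω| + 1) (hsetm' 0 m)]
      _ = ∫⁻ ω, ∑' m : ℕ, (m : ℝ≥0∞) * (if (m : ℝ) ≤ |p 0 ω| + 1 then (1 : ℝ≥0∞) else 0) ∂ℙ :=
          (lintegral_tsum fun m => ((hmeasif m).const_mul _).aemeasurable).symm
      _ ≤ ∫⁻ ω, ENNReal.ofReal (2 * (|p 0 ω| + 1) ^ 2) ∂ℙ :=
          lintegral_mono fun ω => aux_gauss _ (by linarith [abs_nonneg (p 0 ω)])
      _ = 2 * M := by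
          simp_rw [ENNReal.ofReal_mul (by norm_num : (0:ℝ) ≤ 2)]
          rw [lintegral_const_mul _ (((hpm 0).abs.add_const 1).pow_const 2).ennreal_ofReal]
          norm_num [hM]
  have hsumq : ∑' m : ℕ, q m ≤ 1 + 2 * M := by
    calc ∑' m : ℕ, q m
        ≤ ∑' m : ℕ, ((if m = 0 then 1 else 0) + (m : ℝ≥0∞) * q m) := by
          refine ENNReal.tsum_le_tsum fun m => ?_
          cases m with
          | zero =>
              refine le_trans (prob_le_one) ?_
              simp
          | succ k =>
              simp only [Nat.succ_ne_zero, if_false, zero_add]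
              exact le_mul_of_one_le_left' (by exact_mod_cast Nat.one_le_iff_ne_zero.2 (Nat.succ_ne_zero k))
      _ = 1 + ∑' m : ℕ, (m : ℝ≥0∞) * q m := by rw [ENNReal.tsum_add, tsum_ite_eq]
      _ ≤ 1 + 2 * M := by gcongr
  have hT : ∑' m : ℕ, q m * ((2 * m + 1 : ℕ) : ℝ≥0∞) ≤ 6 * M + 1 := by
    calc ∑' m : ℕ, q m * ((2 * m + 1 : ℕ) : ℝ≥0∞)
        = ∑' m : ℕ, (2 * ((m : ℝ≥0∞) * q m) + q m) := by
          refine tsum_congr fun m => ?_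
          push_cast
          ring
      _ = 2 * (∑' m : ℕ, (m : ℝ≥0∞) * q m) + ∑' m : ℕ, q m := by
          rw [ENNReal.tsum_add, ENNReal.tsum_mul_left]
      _ ≤ 2 * (2 * M) + (1 + 2 * M) := by gcongr
      _ = 6 * M + 1 := by ring
  -- crossing indicator machinery
  classical
  set A : ℝ → ℤ → Ω → ℝ≥0∞ :=
    fun b x ω => if (((x - ⌊b⌋).natAbs : ℝ)) ≤ |p x ω| + 1 then 1 else 0 with hA
  have hAmeas : ∀ b x, Measurable (A b x) := fun b x =>
    Measurable.ite (hsetm' x ((x - ⌊b⌋).natAbs)) measurable_const measurable_const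
  set G : ℝ → Ω → ℝ≥0∞ := fun b ω => ∑' x : ℤ, A b x ω with hG
  have hGmeas : ∀ b, Measurable (G b) := fun b => Measurable.ennreal_tsum (fun x => hAmeas b x)
  have hGsq : ∀ b : ℝ, ∫⁻ ω, (G b ω) ^ 2 ∂ℙ ≤ 24 * M + 4 := by
    intro b
    have step1 : ∫⁻ ω, (G b ω) ^ 2 ∂ℙ
        = ∑' (x : ℤ) (y : ℤ), ∫⁻ ω, A b x ω * A b y ω ∂ℙ := by
      have h1 : ∀ ω, (G b ω) ^ 2 = ∑' (x : ℤ) (y : ℤ), A b x ω * A b y ω := by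
        intro ω
        rw [sq, hG]
        rw [← ENNReal.tsum_mul_right]
        exact tsum_congr fun x => (ENNReal.tsum_mul_left).symm
      simp_rw [h1]
      rw [lintegral_tsum (f := fun x ω => ∑' y : ℤ, A b x ω * A b y ω) (fun x =>
        (Measurable.ennreal_tsum fun y => ((hAmeas b x).mul (hAmeas b y))).aemeasurable)]
      exact tsum_congr fun x => lintegral_tsum fun y => ((hAmeas b x).mul (hAmeas b y)).aemeasurable
    have step2 : ∀ x y : ℤ, ∫⁻ ω, A b x ω * A b y ω ∂ℙ
        ≤ (if (y - ⌊b⌋).natAbs ≤ (x - ⌊b⌋).natAbs then q ((x - ⌊b⌋).natAbs) else 0)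
          + (if (x - ⌊b⌋).natAbs ≤ (y - ⌊b⌋).natAbs then q ((y - ⌊b⌋).natAbs) else 0) := by
      intro x y
      have hprod : ∀ ω, A b x ω * A b y ω =
          if ((((x - ⌊b⌋).natAbs : ℝ)) ≤ |p x ω| + 1 ∧ (((y - ⌊b⌋).natAbs : ℝ)) ≤ |p y ω| + 1)
          then (1 : ℝ≥0∞) else 0 := by
        intro ω
        rw [hA]
        by_cases h1 : (((x - ⌊b⌋).natAbs : ℝ)) ≤ |p x ω| + 1 <;>
          by_cases h2 : (((y - ⌊b⌋).natAbs : ℝ)) ≤ |p y ω| + 1 <;>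
          simp only [h1, h2, ↓reduceIte, and_self, and_true, and_false, true_and, false_and,
            mul_one, mul_zero]
      have hms : MeasurableSet {ω : Ω |
          (((x - ⌊b⌋).natAbs : ℝ)) ≤ |p x ω| + 1 ∧ (((y - ⌊b⌋).natAbs : ℝ)) ≤ |p y ω| + 1} := by
        rw [Set.setOf_and]
        exact (hsetm' x _).inter (hsetm' y _)
      simp_rw [hprod]
      rw [aux_lint_if ℙ _ hms]
      rcases le_total ((y - ⌊b⌋).natAbs) ((x - ⌊b⌋).natAbs) with hc | hc
      · rw [if_pos hc]
        refine le_trans ?_ le_self_add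
        calc ℙ _ ≤ ℙ {ω : Ω | (((x - ⌊b⌋).natAbs : ℝ)) ≤ |p x ω| + 1} :=
              measure_mono (fun ω hω => hω.1)
          _ = q ((x - ⌊b⌋).natAbs) := hqx x _
      · rw [if_pos hc]
        refine le_trans ?_ le_add_self
        calc ℙ _ ≤ ℙ {ω : Ω | (((y - ⌊b⌋).natAbs : ℝ)) ≤ |p y ω| + 1} :=
              measure_mono (fun ω hω => hω.2)
          _ = q ((y - ⌊b⌋).natAbs) := hqx y _
    have step3 : ∑' (x : ℤ) (y : ℤ), ∫⁻ ω, A b x ω * A b y ω ∂ℙ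
        ≤ 2 * ∑' x : ℤ, q ((x - ⌊b⌋).natAbs) * ((2 * (x - ⌊b⌋).natAbs + 1 : ℕ) : ℝ≥0∞) := by
      calc ∑' (x : ℤ) (y : ℤ), ∫⁻ ω, A b x ω * A b y ω ∂ℙ
          ≤ ∑' (x : ℤ) (y : ℤ),
            ((if (y - ⌊b⌋).natAbs ≤ (x - ⌊b⌋).natAbs then q ((x - ⌊b⌋).natAbs) else 0)
              + (if (x - ⌊b⌋).natAbs ≤ (y - ⌊b⌋).natAbs then q ((y - ⌊b⌋).natAbs) else 0)) :=
            ENNReal.tsum_le_tsum fun x => ENNReal.tsum_le_tsum fun y => step2 x y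
        _ = (∑' (x : ℤ) (y : ℤ),
              (if (y - ⌊b⌋).natAbs ≤ (x - ⌊b⌋).natAbs then q ((x - ⌊b⌋).natAbs) else 0))
            + ∑' (x : ℤ) (y : ℤ),
              (if (x - ⌊b⌋).natAbs ≤ (y - ⌊b⌋).natAbs then q ((y - ⌊b⌋).natAbs) else 0) := by
            rw [← ENNReal.tsum_add]
            exact tsum_congr fun x => ENNReal.tsum_add
        _ = 2 * ∑' x : ℤ, q ((x - ⌊b⌋).natAbs) * ((2 * (x - ⌊b⌋).natAbs + 1 : ℕ) : ℝ≥0∞) := by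
            have hfirst : ∀ x : ℤ, (∑' y : ℤ,
                (if (y - ⌊b⌋).natAbs ≤ (x - ⌊b⌋).natAbs then q ((x - ⌊b⌋).natAbs) else 0))
                = q ((x - ⌊b⌋).natAbs) * ((2 * (x - ⌊b⌋).natAbs + 1 : ℕ) : ℝ≥0∞) := by
              intro x
              have : ∀ y : ℤ,
                  (if (y - ⌊b⌋).natAbs ≤ (x - ⌊b⌋).natAbs then q ((x - ⌊b⌋).natAbs) else 0)
                  = q ((x - ⌊b⌋).natAbs)
                    * (if (y - ⌊b⌋).natAbs ≤ (x - ⌊b⌋).natAbs then 1 else 0) := by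
                intro y
                split <;> simp
              simp_rw [this]
              rw [ENNReal.tsum_mul_left, aux_count_natAbs ⌊b⌋ ((x - ⌊b⌋).natAbs)]
            rw [tsum_congr hfirst, ENNReal.tsum_comm (f := fun x y : ℤ =>
              (if (x - ⌊b⌋).natAbs ≤ (y - ⌊b⌋).natAbs then q ((y - ⌊b⌋).natAbs) else 0))]
            rw [tsum_congr hfirst, two_mul]

    have step4 : ∑' x : ℤ, q ((x - ⌊b⌋).natAbs) * ((2 * (x - ⌊b⌋).natAbs + 1 : ℕ) : ℝ≥0∞)
        ≤ 2 * ∑' m : ℕ, q m * ((2 * m + 1 : ℕ) : ℝ≥0∞) :=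
      aux_tsum_int_le (fun m => q m * ((2 * m + 1 : ℕ) : ℝ≥0∞)) ⌊b⌋
    calc ∫⁻ ω, (G b ω) ^ 2 ∂ℙ
        = ∑' (x : ℤ) (y : ℤ), ∫⁻ ω, A b x ω * A b y ω ∂ℙ := step1
      _ ≤ 2 * ∑' x : ℤ, q ((x - ⌊b⌋).natAbs) * ((2 * (x - ⌊b⌋).natAbs + 1 : ℕ) : ℝ≥0∞) := step3
      _ ≤ 2 * (2 * ∑' m : ℕ, q m * ((2 * m + 1 : ℕ) : ℝ≥0∞)) := by gcongr
      _ ≤ 2 * (2 * (6 * M + 1)) := by gcongr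
      _ = 24 * M + 4 := by ring
  -- U is a.e. in [0,1)
  have hUae : ∀ᵐ ω ∂ℙ, U ω ∈ Set.Ico (0 : ℝ) 1 := by
    have h1 : ℙ (U ⁻¹' Set.Ico (0 : ℝ) 1) = 1 := by
      rw [← Measure.map_apply hUm measurableSet_Ico, hU]
      rw [Measure.restrict_apply measurableSet_Ico, Set.inter_self, Real.volume_Ico]
      norm_num
    have h2 : ℙ ((U ⁻¹' Set.Ico (0 : ℝ) 1)ᶜ) = 0 := by
      rw [prob_compl_eq_zero_iff (hUm measurableSet_Ico)]
      exact h1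
    exact ae_iff.2 h2
  -- the combined crossing count W
  set W : Ω → ℝ≥0∞ := fun ω => G r ω + G (-r) ω with hW
  have hWmeas : Measurable W := (hGmeas r).add (hGmeas (-r))
  have hW2 : ∫⁻ ω, (W ω) ^ 2 ∂ℙ ≤ 192 * M + 32 := by
    calc ∫⁻ ω, (W ω) ^ 2 ∂ℙ ≤ ∫⁻ ω, (4 * (G r ω) ^ 2 + 4 * (G (-r) ω) ^ 2) ∂ℙ :=
          lintegral_mono fun ω => aux_sq_add_le _ _
      _ = 4 * (∫⁻ ω, (G r ω) ^ 2 ∂ℙ) + 4 * ∫⁻ ω, (G (-r) ω) ^ 2 ∂ℙ := by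
          rw [lintegral_add_left (((hGmeas r).pow_const 2).const_mul 4),
            lintegral_const_mul 4 ((hGmeas r).pow_const 2),
            lintegral_const_mul 4 ((hGmeas (-r)).pow_const 2)]
      _ ≤ 4 * (24 * M + 4) + 4 * (24 * M + 4) := by gcongr <;> exact hGsq _
      _ = 192 * M + 32 := by ring
  have hBtop : (192 * M + 32 : ℝ≥0∞) ≠ ⊤ :=
    ENNReal.add_ne_top.2 ⟨ENNReal.mul_ne_top (by norm_num) hMtop, by norm_num⟩
  have hW2top : ∫⁻ ω, (W ω) ^ 2 ∂ℙ ≠ ⊤ := ((hW2.trans_lt hBtop.lt_top)).ne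
  have hWae : ∀ᵐ ω ∂ℙ, W ω < ⊤ := by
    have h := ae_lt_top (hWmeas.pow_const 2) hW2top
    filter_upwards [h] with ω hω
    by_contra hc
    rw [not_lt, top_le_iff] at hc
    rw [hc, pow_two, ENNReal.top_mul_top] at hω
    exact lt_irrefl _ hω
  -- the counting functions
  set F : Ω → ℝ :=
    fun ω => ∑' x : ℤ, (if |(x : ℝ) + p x ω + U ω| ≤ r then (1 : ℝ) else 0) with hF
  set N : Ω → ℝ≥0∞ :=
    fun ω => ∑' x : ℤ, (if |(x : ℝ) + p x ω + U ω| ≤ r then (1 : ℝ≥0∞) else 0) with hN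
  have hNmeas : Measurable N := Measurable.ennreal_tsum fun x =>
    Measurable.ite (measurableSet_le (((measurable_const.add (hpm x)).add hUm).abs)
      measurable_const) measurable_const measurable_const
  have hFN : ∀ ω, F ω = (N ω).toReal := by
    intro ω
    simp only [hF, hN]
    exact aux_tsum_toReal _
  have hFmeas : Measurable F := by
    have hFeq : F = fun ω => (N ω).toReal := funext hFN
    rw [hFeq]
    exact hNmeas.ennreal_toReal
  set D : Ω → ℝ≥0∞ :=
    fun ω => ∑' x : ℤ, (if |(x : ℝ) + U ω| ≤ r then (1 : ℝ≥0∞) else 0) with hD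
  -- a.e. pointwise bound
  have hkey : ∀ᵐ ω ∂ℙ, ENNReal.ofReal ((F ω - 2 * r) ^ 2) ≤ 2 * (W ω) ^ 2 + 2 := by
    filter_upwards [hUae, hWae] with ω hu hw
    have hcmp1 : N ω ≤ D ω + W ω := by
      have hterm : ∀ x : ℤ, (if |(x : ℝ) + p x ω + U ω| ≤ r then (1 : ℝ≥0∞) else 0)
          ≤ (if |(x : ℝ) + U ω| ≤ r then (1 : ℝ≥0∞) else 0) + (A r x ω + A (-r) x ω) := by
        intro x
        by_cases c1 : |(x : ℝ) + p x ω + U ω| ≤ r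
        · by_cases c2 : |(x : ℝ) + U ω| ≤ r
          · rw [if_pos c1, if_pos c2]; exact le_self_add
          · rw [if_pos c1]
            have hcr := aux_cross hu.1 hu.2 x (fun hiff => c2 (hiff.mp c1))
            refine le_trans ?_ le_add_self
            rcases hcr with hcr | hcr
            · rw [hA]
              simp only [if_pos hcr]
              exact le_self_add
            · rw [hA]
              simp only [if_pos hcr]
              exact le_add_self
        · rw [if_neg c1]; exact zero_le
      calc N ω ≤ ∑' x : ℤ, ((if |(x : ℝ) + U ω| ≤ r then (1 : ℝ≥0∞) else 0)
            + (A r x ω + A (-r) x ω)) := ENNReal.tsum_le_tsum hterm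
        _ = D ω + W ω := by rw [ENNReal.tsum_add, ENNReal.tsum_add]
    have hcmp2 : D ω ≤ N ω + W ω := by
      have hterm : ∀ x : ℤ, (if |(x : ℝ) + U ω| ≤ r then (1 : ℝ≥0∞) else 0)
          ≤ (if |(x : ℝ) + p x ω + U ω| ≤ r then (1 : ℝ≥0∞) else 0) + (A r x ω + A (-r) x ω) := by
        intro x
        by_cases c2 : |(x : ℝ) + U ω| ≤ r
        · by_cases c1 : |(x : ℝ) + p x ω + U ω| ≤ r
          · rw [if_pos c1, if_pos c2]; exact le_self_add
          · rw [if_pos c2]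
            have hcr := aux_cross hu.1 hu.2 x (fun hiff => c1 (hiff.mpr c2))
            refine le_trans ?_ le_add_self
            rcases hcr with hcr | hcr
            · rw [hA]
              simp only [if_pos hcr]
              exact le_self_add
            · rw [hA]
              simp only [if_pos hcr]
              exact le_add_self
        · rw [if_neg c2]; exact zero_le
      calc D ω ≤ ∑' x : ℤ, ((if |(x : ℝ) + p x ω + U ω| ≤ r then (1 : ℝ≥0∞) else 0)
            + (A r x ω + A (-r) x ω)) := ENNReal.tsum_le_tsum hterm
        _ = N ω + W ω := by rw [ENNReal.tsum_add, ENNReal.tsum_add]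
    obtain ⟨d, hdD, hd1, hd2⟩ := aux_interval_count r (U ω) hr
    have hDd : D ω = (d : ℝ≥0∞) := hdD
    have hWtop : W ω ≠ ⊤ := hw.ne
    have hDtop : D ω ≠ ⊤ := by rw [hDd]; exact ENNReal.natCast_ne_top d
    have hNtop : N ω ≠ ⊤ :=
      (hcmp1.trans_lt (ENNReal.add_lt_top.2 ⟨hDtop.lt_top, hw⟩)).ne
    have h1 : (N ω).toReal ≤ (D ω).toReal + (W ω).toReal := by
      rw [← ENNReal.toReal_add hDtop hWtop]
      exact ENNReal.toReal_mono (ENNReal.add_ne_top.2 ⟨hDtop, hWtop⟩) hcmp1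
    have h2 : (D ω).toReal ≤ (N ω).toReal + (W ω).toReal := by
      rw [← ENNReal.toReal_add hNtop hWtop]
      exact ENNReal.toReal_mono (ENNReal.add_ne_top.2 ⟨hNtop, hWtop⟩) hcmp2
    have hdreal : (D ω).toReal = (d : ℝ) := by rw [hDd]; simp
    have hwnn : 0 ≤ (W ω).toReal := ENNReal.toReal_nonneg
    rw [hFN ω]
    have hsq : ((N ω).toReal - 2 * r) ^ 2 ≤ 2 * (W ω).toReal ^ 2 + 2 := by
      rw [hdreal] at h1 h2
      nlinarith [sq_nonneg ((W ω).toReal - 1), sq_nonneg ((N ω).toReal - 2 * r),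
        sq_nonneg ((N ω).toReal - 2 * r + (W ω).toReal + 1),
        sq_nonneg ((N ω).toReal - 2 * r - (W ω).toReal - 1)]
    calc ENNReal.ofReal (((N ω).toReal - 2 * r) ^ 2)
        ≤ ENNReal.ofReal (2 * (W ω).toReal ^ 2 + 2) := ENNReal.ofReal_le_ofReal hsq
      _ = 2 * ENNReal.ofReal ((W ω).toReal ^ 2) + 2 := by
          rw [ENNReal.ofReal_add (by positivity) (by norm_num),
            ENNReal.ofReal_mul (by norm_num)]
          norm_num
      _ = 2 * (W ω) ^ 2 + 2 := by
          rw [ENNReal.ofReal_pow hwnn, ENNReal.ofReal_toReal hWtop]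
  -- integrate the pointwise bound
  have hbound : ∫⁻ ω, ENNReal.ofReal ((F ω - 2 * r) ^ 2) ∂ℙ ≤ 2 * (192 * M + 32) + 2 := by
    calc ∫⁻ ω, ENNReal.ofReal ((F ω - 2 * r) ^ 2) ∂ℙ
        ≤ ∫⁻ ω, (2 * (W ω) ^ 2 + 2) ∂ℙ := lintegral_mono_ae hkey
      _ = 2 * (∫⁻ ω, (W ω) ^ 2 ∂ℙ) + 2 := by
          rw [lintegral_add_right _ measurable_const,
            lintegral_const_mul 2 (hWmeas.pow_const 2), lintegral_const]
          simp
      _ ≤ 2 * (192 * M + 32) + 2 := by gcongr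
  have hnorm : ∀ a : ℝ, ((‖a‖₊ : ℝ≥0∞)) ^ 2 = ENNReal.ofReal (a ^ 2) := by
    intro a
    rw [← enorm_eq_nnnorm, Real.enorm_eq_ofReal_abs, ← ENNReal.ofReal_pow (abs_nonneg a), sq_abs]
  set g : Ω → ℝ := fun ω => F ω - 2 * r with hg
  have hgmeas : Measurable g := hFmeas.sub measurable_const
  have hgsq : ∫⁻ ω, ((‖g ω‖₊ : ℝ≥0∞)) ^ 2 ∂ℙ ≤ 2 * (192 * M + 32) + 2 := by
    simp_rw [hnorm]
    exact hbound
  have hB2top : (2 * (192 * M + 32) + 2 : ℝ≥0∞) ≠ ⊤ :=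
    ENNReal.add_ne_top.2 ⟨ENNReal.mul_ne_top (by norm_num) hBtop, by norm_num⟩
  have hgint : Integrable g ℙ := by
    refine ⟨hgmeas.aestronglyMeasurable, ?_⟩
    have hle : ∫⁻ ω, (‖g ω‖₊ : ℝ≥0∞) ∂ℙ ≤ ∫⁻ ω, (((‖g ω‖₊ : ℝ≥0∞)) ^ 2 + 1) ∂ℙ :=
      lintegral_mono fun ω => aux_le_sq_add_one _
    have heq : ∫⁻ ω, (((‖g ω‖₊ : ℝ≥0∞)) ^ 2 + 1) ∂ℙ
        = (∫⁻ ω, ((‖g ω‖₊ : ℝ≥0∞)) ^ 2 ∂ℙ) + 1 := by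
      rw [lintegral_add_right _ measurable_const, lintegral_const]
      simp
    show (∫⁻ ω, (‖g ω‖₊ : ℝ≥0∞) ∂ℙ) < ⊤
    calc ∫⁻ ω, (‖g ω‖₊ : ℝ≥0∞) ∂ℙ ≤ (∫⁻ ω, ((‖g ω‖₊ : ℝ≥0∞)) ^ 2 ∂ℙ) + 1 := heq ▸ hle
      _ ≤ (2 * (192 * M + 32) + 2) + 1 := by gcongr
      _ < ⊤ := (ENNReal.add_ne_top.2 ⟨hB2top, by norm_num⟩).lt_top
  have hFint : Integrable F ℙ := by
    have hFeq2 : F = fun ω => g ω + 2 * r := by funext ω; simp [hg]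
    rw [hFeq2]
    exact hgint.add (integrable_const _)
  -- variance manipulation
  have hEg : ∫ ω, g ω ∂ℙ = (∫ ω, F ω ∂ℙ) - 2 * r := by
    rw [hg]
    rw [integral_sub hFint (integrable_const _), integral_const]
    simp
  have hvar : evariance F ℙ = evariance g ℙ := by
    rw [evariance_eq_lintegral_ofReal, evariance_eq_lintegral_ofReal]
    refine lintegral_congr fun ω => ?_
    congr 1
    rw [hEg]
    simp only [hg]
    ring
  have hfinal : evariance F ℙ ≤ 2 * (192 * M + 32) + 2 := by
    rw [hvar]
    calc evariance g ℙ ≤ ∫⁻ ω, ((‖g ω‖₊ : ℝ≥0∞)) ^ 2 ∂ℙ := by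
          rw [evariance_def' hgmeas.aestronglyMeasurable]
          exact tsub_le_self
      _ ≤ 2 * (192 * M + 32) + 2 := hgsq
  calc evariance F ℙ ≤ 2 * (192 * M + 32) + 2 := hfinal
    _ = 384 * M + 66 := by ring
    _ ≤ 384 * ENNReal.ofReal (2 * m2 + 2) + 66 := by gcongr
    _ = ENNReal.ofReal 384 * ENNReal.ofReal (2 * m2 + 2) + ENNReal.ofReal 66 := by
        rw [ENNReal.ofReal_ofNat, ENNReal.ofReal_ofNat]
    _ = ENNReal.ofReal (384 * (2 * m2 + 2) + 66) := by
        rw [← ENNReal.ofReal_mul (by norm_num), ← ENNReal.ofReal_add (by nlinarith) (by norm_num)]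
    _ ≤ ENNReal.ofReal (768 * m2 + 900) := ENNReal.ofReal_le_ofReal (by nlinarith)
end
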